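/- arXiv:2509.07350 — 9 statements merged into one kernel-verified Lean document; each statement's English description precedes it below -/
import Mathlib

section
/- Let q ∈ ℂ with |q| = 1 and let (a_n) be a sequence in the open unit disc 𝔻 with a_n → q. Then the Möbius transformations z ↦ (z − a_n)/(1 − conj(a_n)·z) converge to the constant function −q uniformly on every compact subset of ℂ ∖ {q} (in particular, for each such compact set, for all sufficiently large n the map has no pole on it). If moreover q ≠ 1, then the normalized maps z ↦ ((1 − conj(a_n))/(1 − a_n)) · (z − a_n)/(1 − conj(a_n)·z) converge to the constant function 1 uniformly on every compact subset of ℂ ∖ {q}. -/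
open Filter

private lemma tuo_comp {F : ℂ → ℂ → ℂ} {f : ℂ → ℂ} {l : Filter ℂ} {K : Set ℂ}
    (h : TendstoUniformlyOn F f l K) {a : ℕ → ℂ} (ha : Tendsto a atTop l) :
    TendstoUniformlyOn (fun n => F (a n)) f atTop K :=
  fun u hu => ha.eventually (h u hu)

private lemma key {q : ℂ} {a : ℕ → ℂ} (haq : Tendsto a atTop (nhds q))
    {C K : Set ℂ} (hC : IsCompact C) (hCq : C ∈ nhds q) (hK : IsCompact K)
    {H : ℂ → ℂ → ℂ} (hcont : ContinuousOn (Function.uncurry H) (C ×ˢ K)) :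
    TendstoUniformlyOn (fun n => H (a n)) (H q) atTop K := by
  have hUC : UniformContinuousOn (Function.uncurry H) (C ×ˢ K) :=
    (hC.prod hK).uniformContinuousOn_of_continuous hcont
  have h1 : TendstoUniformlyOn H (H q) (nhdsWithin q C) K :=
    hUC.tendstoUniformlyOn (mem_of_mem_nhds hCq)
  exact tuo_comp h1 (tendsto_nhdsWithin_iff.mpr ⟨haq, haq.eventually_mem hCq⟩)

/-- Let `q ∈ ℂ` with `|q| = 1` and let `(a n)` be a sequence in the open unit
disc with `a n → q`. Then the Möbius transformations `z ↦ (z − a n)/(1 − conj (a n)·z)`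
converge to the constant `−q` uniformly on every compact subset of `ℂ \ {q}` (in particular,
eventually there is no pole on such a compact set).  If moreover `q ≠ 1`, the normalized maps
`z ↦ ((1 − conj (a n))/(1 − a n)) · (z − a n)/(1 − conj (a n)·z)` converge uniformly on every
such compact set to the constant `1`. -/
theorem stmt0 (q : ℂ) (hq : ‖q‖ = 1) (a : ℕ → ℂ) (ha : ∀ n, ‖a n‖ < 1)
    (haq : Tendsto a atTop (nhds q)) :
    (∀ K : Set ℂ, IsCompact K → K ⊆ {q}ᶜ →
      (∀ᶠ n in atTop, ∀ z ∈ K, 1 - (starRingEnd ℂ) (a n) * z ≠ 0) ∧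
      TendstoUniformlyOn (fun n z => (z - a n) / (1 - (starRingEnd ℂ) (a n) * z))
        (fun _ => -q) atTop K) ∧
    (q ≠ 1 → ∀ K : Set ℂ, IsCompact K → K ⊆ {q}ᶜ →
      TendstoUniformlyOn
        (fun n z => ((1 - (starRingEnd ℂ) (a n)) / (1 - a n)) *
          ((z - a n) / (1 - (starRingEnd ℂ) (a n) * z)))
        (fun _ => 1) atTop K) := by

  have hconj : Continuous (starRingEnd ℂ) := Complex.continuous_conj
  have hqq : q * (starRingEnd ℂ) q = 1 := by
    have : (Complex.normSq q : ℂ) = 1 := by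
      rw [Complex.normSq_eq_norm_sq, hq]; norm_num
    rw [Complex.mul_conj, this]
  -- a tube around {q} × K where the denominator does not vanish
  have tube : ∀ K : Set ℂ, IsCompact K → K ⊆ {q}ᶜ →
      ∃ U : Set ℂ, IsOpen U ∧ q ∈ U ∧
        ∀ w ∈ U, ∀ z ∈ K, 1 - (starRingEnd ℂ) w * z ≠ 0 := by
    intro K hK hKq
    have hdenc : Continuous fun p : ℂ × ℂ => 1 - (starRingEnd ℂ) p.1 * p.2 :=
      continuous_const.sub ((hconj.comp continuous_fst).mul continuous_snd)
    have hB : IsOpen {p : ℂ × ℂ | 1 - (starRingEnd ℂ) p.1 * p.2 ≠ 0} :=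
      isOpen_compl_singleton.preimage hdenc
    have hsub : ({q} : Set ℂ) ×ˢ K ⊆ {p : ℂ × ℂ | 1 - (starRingEnd ℂ) p.1 * p.2 ≠ 0} := by
      rintro ⟨w, z⟩ ⟨hw, hz⟩
      simp only [Set.mem_singleton_iff] at hw
      show 1 - (starRingEnd ℂ) w * z ≠ 0
      rw [hw]
      intro h0
      apply hKq hz
      show z = q
      linear_combination (-q) * h0 + (-z) * hqq
    obtain ⟨U, V, hUo, _, hqU, hKV, hUV⟩ :=
      generalized_tube_lemma isCompact_singleton hK hB hsub
    exact ⟨U, hUo, hqU rfl, fun w hw z hz => hUV (Set.mk_mem_prod hw (hKV hz))⟩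
  constructor
  · intro K hK hKq
    obtain ⟨U, hUo, hqU, hU⟩ := tube K hK hKq
    obtain ⟨ε, hε, hballU⟩ := Metric.nhds_basis_closedBall.mem_iff.mp (hUo.mem_nhds hqU)
    constructor
    · filter_upwards [haq.eventually_mem (hUo.mem_nhds hqU)] with n hn z hz
      exact hU (a n) hn z hz
    · have hc : ContinuousOn
          (fun p : ℂ × ℂ => (p.2 - p.1) / (1 - (starRingEnd ℂ) p.1 * p.2))
          (Metric.closedBall q ε ×ˢ K) := by
        apply ContinuousOn.div
        · exact (continuous_snd.sub continuous_fst).continuousOn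
        · exact (continuous_const.sub
            ((hconj.comp continuous_fst).mul continuous_snd)).continuousOn
        · rintro ⟨w, z⟩ ⟨hw, hz⟩
          exact hU w (hballU hw) z hz
      have huni := key (H := fun w z => (z - w) / (1 - (starRingEnd ℂ) w * z)) haq
        (isCompact_closedBall q ε) (Metric.closedBall_mem_nhds q hε) hK hc
      refine huni.congr_right ?_
      intro z hz
      have hden := hU q hqU z hz
      show (z - q) / (1 - (starRingEnd ℂ) q * z) = -q
      rw [div_eq_iff hden]
      linear_combination (-z) * hqq
  · intro hq1 K hK hKq
    obtain ⟨U, hUo, hqU, hU⟩ := tube K hK hKq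
    have hU'o : IsOpen (U ∩ {(1 : ℂ)}ᶜ) := hUo.inter isOpen_compl_singleton
    have hqU' : q ∈ U ∩ {(1 : ℂ)}ᶜ := ⟨hqU, hq1⟩
    obtain ⟨ε, hε, hballU⟩ := Metric.nhds_basis_closedBall.mem_iff.mp (hU'o.mem_nhds hqU')
    have hc : ContinuousOn
        (fun p : ℂ × ℂ => ((1 - (starRingEnd ℂ) p.1) / (1 - p.1)) *
          ((p.2 - p.1) / (1 - (starRingEnd ℂ) p.1 * p.2)))
        (Metric.closedBall q ε ×ˢ K) := by
      apply ContinuousOn.mul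
      · apply ContinuousOn.div
        · exact (continuous_const.sub (hconj.comp continuous_fst)).continuousOn
        · exact (continuous_const.sub continuous_fst).continuousOn
        · rintro ⟨w, z⟩ ⟨hw, hz⟩
          exact sub_ne_zero_of_ne (Ne.symm (hballU hw).2)
      · apply ContinuousOn.div
        · exact (continuous_snd.sub continuous_fst).continuousOn
        · exact (continuous_const.sub
            ((hconj.comp continuous_fst).mul continuous_snd)).continuousOn
        · rintro ⟨w, z⟩ ⟨hw, hz⟩
          exact hU w (hballU hw).1 z hz
    have huni := key (H := fun w z => ((1 - (starRingEnd ℂ) w) / (1 - w)) *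
        ((z - w) / (1 - (starRingEnd ℂ) w * z))) haq
      (isCompact_closedBall q ε) (Metric.closedBall_mem_nhds q hε) hK hc
    refine huni.congr_right ?_
    intro z hz
    have hden := hU q hqU z hz
    have h1q : (1 : ℂ) - q ≠ 0 := sub_ne_zero_of_ne (Ne.symm hq1)
    show ((1 - (starRingEnd ℂ) q) / (1 - q)) * ((z - q) / (1 - (starRingEnd ℂ) q * z)) = 1
    rw [div_mul_div_comm, div_eq_one_iff_eq (mul_ne_zero h1q hden)]
    linear_combination (1 - z) * hqq
end

section
/- In the degenerating setup, assume that none of q_{d₁+1}, …, q_e equals 1. Then for every compact set K ⊆ ℂ that is disjoint from {q_{d₁+1}, …, q_e} and from the poles of B (the points 1/conj(a_k) for 1 ≤ k ≤ d₁ with a_k ≠ 0), there is N such that for all n ≥ N the function B_n has no pole on K, and B_n converges to B uniformly on K as n → ∞. -/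
open Filter

/-- The Blaschke product with exponent `m` and zero list `a : Fin e → ℂ`:
`B(z) = z^m · ∏ k, ((1 − conj (a k))/(1 − a k)) · ((z − a k)/(1 − conj (a k)·z))`. -/
noncomputable def blaschke (m : ℕ) {e : ℕ} (a : Fin e → ℂ) (z : ℂ) : ℂ :=
  z ^ m * ∏ k, ((1 - (starRingEnd ℂ) (a k)) / (1 - a k) *
    ((z - a k) / (1 - (starRingEnd ℂ) (a k) * z)))

/-- A factor of a Blaschke product with a unimodular zero `w` equals `1` away from `w`. -/
theorem blaschke_fac_one (w z : ℂ) (hw : ‖w‖ = 1) (hz : z ≠ w) (h1 : w ≠ 1) :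
    (1 - (starRingEnd ℂ) w) / (1 - w) * ((z - w) / (1 - (starRingEnd ℂ) w * z)) = 1 := by
  have hww : (starRingEnd ℂ) w * w = 1 := by
    rw [Complex.conj_mul']
    norm_cast
    simp [Complex.sq_norm, Complex.normSq_eq_norm_sq, hw]
  have hw0 : (starRingEnd ℂ) w ≠ 0 := by
    intro h; rw [h, zero_mul] at hww; exact zero_ne_one hww
  have hden2 : 1 - (starRingEnd ℂ) w * z ≠ 0 := by
    intro h
    apply hz
    have h' : (starRingEnd ℂ) w * z = (starRingEnd ℂ) w * w := by
      rw [hww]; linear_combination -h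
    exact mul_left_cancel₀ hw0 h'
  have hden1 : (1 : ℂ) - w ≠ 0 := sub_ne_zero.mpr (Ne.symm h1)
  field_simp
  linear_combination (1 - z) * hww

theorem unimodular_den_ne_zero (w z : ℂ) (hw : ‖w‖ = 1) (hz : z ≠ w) :
    1 - (starRingEnd ℂ) w * z ≠ 0 := by
  have hww : (starRingEnd ℂ) w * w = 1 := by
    rw [Complex.conj_mul']
    norm_cast
    simp [Complex.sq_norm, Complex.normSq_eq_norm_sq, hw]
  have hw0 : (starRingEnd ℂ) w ≠ 0 := by
    intro h; rw [h, zero_mul] at hww; exact zero_ne_one hww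
  intro h
  apply hz
  have h' : (starRingEnd ℂ) w * z = (starRingEnd ℂ) w * w := by
    rw [hww]; linear_combination -h
  exact mul_left_cancel₀ hw0 h'

set_option maxHeartbeats 1000000 in
/-- In the degenerating setup, if none of the boundary limit points
`q k` (for `d₁ ≤ k`) equals `1`, then for every compact `K ⊆ ℂ` disjoint from these
boundary points and from the poles of `B`, eventually `B n` has no pole on `K` and
`B n → B` uniformly on `K`. -/
theorem stmt1 (m e d₁ : ℕ) (hm : 1 ≤ m) (he : 1 ≤ e) (hd : d₁ < e)
    (q : Fin e → ℂ)
    (hqin : ∀ k : Fin e, (k : ℕ) < d₁ → ‖q k‖ < 1)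
    (hqbd : ∀ k : Fin e, d₁ ≤ (k : ℕ) → ‖q k‖ = 1)
    (A : ℕ → Fin e → ℂ)
    (hA : ∀ n k, ‖A n k‖ < 1)
    (hAconv : ∀ k, Tendsto (fun n => A n k) atTop (nhds (q k)))
    (hq1 : ∀ k : Fin e, d₁ ≤ (k : ℕ) → q k ≠ 1)
    (K : Set ℂ) (hK : IsCompact K)
    (hKq : ∀ z ∈ K, ∀ k : Fin e, d₁ ≤ (k : ℕ) → z ≠ q k)
    (hKpole : ∀ z ∈ K, ∀ k : Fin e, (k : ℕ) < d₁ → 1 - (starRingEnd ℂ) (q k) * z ≠ 0) :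
    ∃ N : ℕ, (∀ n ≥ N, ∀ z ∈ K, ∀ k : Fin e, 1 - (starRingEnd ℂ) (A n k) * z ≠ 0) ∧
      TendstoUniformlyOn (fun n => blaschke m (A n))
        (blaschke m fun k : Fin d₁ => q (Fin.castLE hd.le k)) atTop K := by
  classical
  have hq_ne_one : ∀ k : Fin e, q k ≠ 1 := by
    intro k
    by_cases hk : (k : ℕ) < d₁
    · intro h; have := hqin k hk; rw [h] at this; simp at this
    · exact hq1 k (le_of_not_gt hk)
  have hqden : ∀ z ∈ K, ∀ k : Fin e, 1 - (starRingEnd ℂ) (q k) * z ≠ 0 := by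
    intro z hz k
    by_cases hk : (k : ℕ) < d₁
    · exact hKpole z hz k hk
    · exact unimodular_den_ne_zero _ _ (hqbd k (le_of_not_gt hk))
        (hKq z hz k (le_of_not_gt hk))
  -- the good open set of parameter-point pairs
  set U : Set ((Fin e → ℂ) × ℂ) :=
    ⋂ k : Fin e, ({p : (Fin e → ℂ) × ℂ | p.1 k ≠ 1} ∩
      {p : (Fin e → ℂ) × ℂ | 1 - (starRingEnd ℂ) (p.1 k) * p.2 ≠ 0}) with hUdef
  have hmemU : ∀ p : (Fin e → ℂ) × ℂ,
      (∀ k, p.1 k ≠ 1 ∧ 1 - (starRingEnd ℂ) (p.1 k) * p.2 ≠ 0) → p ∈ U := by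
    intro p h
    rw [hUdef]
    exact Set.mem_iInter.mpr fun k => ⟨(h k).1, (h k).2⟩
  have hmemU' : ∀ p ∈ U, ∀ k : Fin e,
      p.1 k ≠ 1 ∧ 1 - (starRingEnd ℂ) (p.1 k) * p.2 ≠ 0 := by
    intro p hp k
    rw [hUdef] at hp
    exact Set.mem_iInter.mp hp k
  have hUopen : IsOpen U := by
    rw [hUdef]
    apply isOpen_iInter_of_finite
    intro k
    apply IsOpen.inter
    · exact isOpen_ne_fun (((continuous_apply k).comp continuous_fst)) continuous_const
    · apply isOpen_ne_fun _ continuous_const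
      exact continuous_const.sub
        ((Complex.continuous_conj.comp ((continuous_apply k).comp continuous_fst)).mul
          continuous_snd)
  -- continuity of the parametrized Blaschke product on U
  have hPcont : ContinuousOn (fun p : (Fin e → ℂ) × ℂ => blaschke m p.1 p.2) U := by
    simp only [blaschke]
    apply ContinuousOn.mul
    · exact (continuous_snd.pow m).continuousOn
    · apply continuousOn_finset_prod
      intro k _
      apply ContinuousOn.mul
      · apply ContinuousOn.div
        · exact (continuous_const.sub
            (Complex.continuous_conj.comp ((continuous_apply k).comp continuous_fst))).continuousOn
        · exact (continuous_const.sub ((continuous_apply k).comp continuous_fst)).continuousOn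
        · intro p hp
          exact sub_ne_zero.mpr (Ne.symm (hmemU' p hp k).1)
      · apply ContinuousOn.div
        · exact (continuous_snd.sub ((continuous_apply k).comp continuous_fst)).continuousOn
        · exact (continuous_const.sub
            ((Complex.continuous_conj.comp ((continuous_apply k).comp continuous_fst)).mul
              continuous_snd)).continuousOn
        · intro p hp
          exact (hmemU' p hp k).2
  -- tube lemma around {q} × K
  have hsub : ({q} : Set (Fin e → ℂ)) ×ˢ K ⊆ U := by
    rintro ⟨a, z⟩ ⟨ha, hz⟩
    simp only [Set.mem_singleton_iff] at ha
    subst ha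
    exact hmemU _ fun k => ⟨hq_ne_one k, hqden z hz k⟩
  obtain ⟨V, W, hVopen, _, hqV, hKW, hVWU⟩ :=
    generalized_tube_lemma isCompact_singleton hK hUopen hsub
  have hqVmem : q ∈ V := hqV rfl
  obtain ⟨r, hr, hball⟩ := Metric.mem_nhds_iff.mp (hVopen.mem_nhds hqVmem)
  set L : Set (Fin e → ℂ) := Metric.closedBall q (r / 2) with hLdef
  have hLV : L ⊆ V := (Metric.closedBall_subset_ball (by linarith)).trans hball
  have hSU : L ×ˢ K ⊆ U := by
    rintro ⟨a, z⟩ ⟨ha, hz⟩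
    exact hVWU ⟨hLV ha, hKW hz⟩
  have hScomp : IsCompact (L ×ˢ K) := (isCompact_closedBall q (r / 2)).prod hK
  have hUC := hScomp.uniformContinuousOn_of_continuous (hPcont.mono hSU)
  rw [Metric.uniformContinuousOn_iff] at hUC
  -- eventually A n ∈ L
  have hAq : Tendsto A atTop (nhds q) := tendsto_pi_nhds.mpr hAconv
  have hAL : ∀ᶠ n in atTop, A n ∈ L := by
    have h2 := Metric.tendsto_nhds.mp hAq (r / 2) (by linarith)
    filter_upwards [h2] with n hn
    exact Metric.mem_closedBall.mpr hn.le
  obtain ⟨N, hN⟩ := eventually_atTop.mp hAL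
  refine ⟨N, ?_, ?_⟩
  · intro n hn z hz k
    have hin : ((A n, z) : (Fin e → ℂ) × ℂ) ∈ L ×ˢ K := Set.mk_mem_prod (hN n hn) hz
    exact (hmemU' (A n, z) (hSU hin) k).2
  -- uniform convergence
  have heq : ∀ z ∈ K,
      blaschke m (fun k : Fin d₁ => q (Fin.castLE hd.le k)) z = blaschke m q z := by
    intro z hz
    simp only [blaschke]
    congr 1
    set F : ℕ → ℂ := fun i => if h : i < e then
      (1 - (starRingEnd ℂ) (q ⟨i, h⟩)) / (1 - q ⟨i, h⟩) *
        ((z - q ⟨i, h⟩) / (1 - (starRingEnd ℂ) (q ⟨i, h⟩) * z)) else 1 with hF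
    have hLHS : (∏ k : Fin d₁, ((1 - (starRingEnd ℂ) (q (Fin.castLE hd.le k))) /
          (1 - q (Fin.castLE hd.le k)) *
          ((z - q (Fin.castLE hd.le k)) / (1 - (starRingEnd ℂ) (q (Fin.castLE hd.le k)) * z))))
        = ∏ i ∈ Finset.range d₁, F i := by
      rw [← Fin.prod_univ_eq_prod_range]
      apply Finset.prod_congr rfl
      intro k _
      have hke : (k : ℕ) < e := lt_of_lt_of_le k.2 hd.le
      rw [hF]
      simp only [dif_pos hke]
      rfl
    have hRHS : (∏ k : Fin e, ((1 - (starRingEnd ℂ) (q k)) / (1 - q k) *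
          ((z - q k) / (1 - (starRingEnd ℂ) (q k) * z))))
        = ∏ i ∈ Finset.range e, F i := by
      rw [← Fin.prod_univ_eq_prod_range]
      apply Finset.prod_congr rfl
      intro k _
      rw [hF]
      simp only [dif_pos k.2]
    have hIco : ∏ i ∈ Finset.Ico d₁ e, F i = 1 := by
      apply Finset.prod_eq_one
      intro i hi
      obtain ⟨hi1, hi2⟩ := Finset.mem_Ico.mp hi
      rw [hF]
      simp only [dif_pos hi2]
      exact blaschke_fac_one (q ⟨i, hi2⟩) z (hqbd ⟨i, hi2⟩ hi1)
        (hKq z hz ⟨i, hi2⟩ hi1) (hq1 ⟨i, hi2⟩ hi1)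
    rw [hLHS, hRHS, ← Finset.prod_range_mul_prod_Ico F hd.le, hIco, mul_one]
  rw [Metric.tendstoUniformlyOn_iff]
  intro ε hε
  obtain ⟨δ, hδ, hδ'⟩ := hUC ε hε
  have hAδ := Metric.tendsto_nhds.mp hAq δ hδ
  filter_upwards [hAL, hAδ] with n hnL hnδ z hz
  rw [heq z hz]
  have hqS : ((q, z) : (Fin e → ℂ) × ℂ) ∈ L ×ˢ K :=
    ⟨Metric.mem_closedBall_self (by linarith), hz⟩
  have hAS : ((A n, z) : (Fin e → ℂ) × ℂ) ∈ L ×ˢ K := ⟨hnL, hz⟩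
  have hdist : dist ((q, z) : (Fin e → ℂ) × ℂ) (A n, z) < δ := by
    rw [Prod.dist_eq]
    simp only [dist_self]
    rw [max_eq_left dist_nonneg, dist_comm]
    exact hnδ
  have hfin := hδ' (q, z) hqS (A n, z) hAS hdist
  exact hfin
end

section
/- In the degenerating setup, assume that q_k = 1 for at least one index k with d₁ < k ≤ e. Then there exist ζ ∈ ℂ with |ζ| = 1 and a strictly increasing sequence of indices (n_j) such that for every compact set K ⊆ ℂ disjoint from {q_{d₁+1}, …, q_e} and from the poles of B, eventually (in j) the function B_{n_j} has no pole on K and B_{n_j} converges to ζ·B uniformly on K. -/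
open Filter

lemma unit_conj_mul (q : ℂ) (hq : ‖q‖ = 1) : (starRingEnd ℂ) q * q = 1 := by
  rw [mul_comm, Complex.mul_conj, Complex.normSq_eq_norm_sq, hq]
  norm_num

lemma bl_den_ne (q z : ℂ) (hq : ‖q‖ = 1) (hz : z ≠ q) :
    1 - (starRingEnd ℂ) q * z ≠ 0 := by
  have h1 := unit_conj_mul q hq
  have hqz : q - z ≠ 0 := sub_ne_zero.mpr hz.symm
  have hcq : (starRingEnd ℂ) q ≠ 0 := by
    intro h; rw [h, zero_mul] at h1; exact zero_ne_one h1
  have hden : 1 - (starRingEnd ℂ) q * z = (starRingEnd ℂ) q * (q - z) := by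
    rw [mul_sub, h1]
  rw [hden]
  exact mul_ne_zero hcq hqz

lemma bl_key (q z : ℂ) (hq : ‖q‖ = 1) (hz : z ≠ q) :
    (z - q) / (1 - (starRingEnd ℂ) q * z) = -q := by
  have h1 := unit_conj_mul q hq
  rw [div_eq_iff (bl_den_ne q z hq hz)]
  linear_combination (-z) * h1

lemma bl_norm_c (a : ℂ) (ha : ‖a‖ < 1) : ‖(1 - (starRingEnd ℂ) a) / (1 - a)‖ = 1 := by
  have h1 : (1 : ℂ) - a ≠ 0 := by
    intro h
    have : a = 1 := by linear_combination -h
    rw [this] at ha; norm_num at ha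
  have h2 : ‖(1 : ℂ) - (starRingEnd ℂ) a‖ = ‖(1:ℂ) - a‖ := by
    rw [show (1:ℂ) - (starRingEnd ℂ) a = (starRingEnd ℂ) (1 - a) by rw [map_sub, map_one]]
    exact RCLike.norm_conj _
  rw [norm_div, h2, div_self (norm_ne_zero_iff.mpr h1)]

lemma tuo_comp_s2 {α β ι ι' : Type*} [UniformSpace β] {F : ι → α → β} {f : α → β}
    {l : Filter ι} {s : Set α} (h : TendstoUniformlyOn F f l s) {g : ι' → ι} {p : Filter ι'}
    (hg : Tendsto g p l) : TendstoUniformlyOn (fun j => F (g j)) f p s := by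
  rw [tendstoUniformlyOn_iff_tendsto] at h ⊢
  exact h.comp (hg.prodMap tendsto_id)


/-- In the degenerating setup, if `q k = 1` for some boundary index `k`,
then there exist `ζ` of modulus `1` and a strictly increasing sequence of indices `(n j)`
such that for every compact `K ⊆ ℂ` disjoint from the boundary points `q k` (for `d₁ ≤ k`)
and from the poles of `B`, eventually (in `j`) `B (n j)` has no pole on `K` and
`B (n j) → ζ·B` uniformly on `K`. -/
theorem stmt2 (m e d₁ : ℕ) (hm : 1 ≤ m) (he : 1 ≤ e) (hd : d₁ < e)
    (q : Fin e → ℂ)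
    (hqin : ∀ k : Fin e, (k : ℕ) < d₁ → ‖q k‖ < 1)
    (hqbd : ∀ k : Fin e, d₁ ≤ (k : ℕ) → ‖q k‖ = 1)
    (A : ℕ → Fin e → ℂ)
    (hA : ∀ n k, ‖A n k‖ < 1)
    (hAconv : ∀ k, Tendsto (fun n => A n k) atTop (nhds (q k)))
    (hq1 : ∃ k : Fin e, d₁ ≤ (k : ℕ) ∧ q k = 1) :
    ∃ ζ : ℂ, ‖ζ‖ = 1 ∧ ∃ φ : ℕ → ℕ, StrictMono φ ∧
      ∀ K : Set ℂ, IsCompact K →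
        (∀ z ∈ K, ∀ k : Fin e, d₁ ≤ (k : ℕ) → z ≠ q k) →
        (∀ z ∈ K, ∀ k : Fin e, (k : ℕ) < d₁ → 1 - (starRingEnd ℂ) (q k) * z ≠ 0) →
        (∀ᶠ j in atTop, ∀ z ∈ K, ∀ k : Fin e, 1 - (starRingEnd ℂ) (A (φ j) k) * z ≠ 0) ∧
        TendstoUniformlyOn (fun j => blaschke m (A (φ j)))
          (fun z => ζ * blaschke m (fun k : Fin d₁ => q (Fin.castLE hd.le k)) z) atTop K := by
  classical
  set v : ℕ → Fin e → ℂ := fun n k => (1 - (starRingEnd ℂ) (A n k)) / (1 - A n k) with hv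
  have hvnorm : ∀ n k, ‖v n k‖ = 1 := fun n k => bl_norm_c _ (hA n k)
  have hvmem : ∀ n, v n ∈ Set.pi Set.univ fun _ : Fin e => Metric.closedBall (0:ℂ) 1 := by
    intro n
    intro k _
    rw [Metric.mem_closedBall, dist_zero_right]
    exact (hvnorm n k).le
  have hcpt : IsCompact (Set.pi Set.univ fun _ : Fin e => Metric.closedBall (0:ℂ) 1) :=
    isCompact_univ_pi fun _ => isCompact_closedBall _ _
  obtain ⟨μ, -, φ, hφ, hvconv⟩ := hcpt.tendsto_subseq hvmem
  have hvconv' : ∀ k, Tendsto (fun j => v (φ j) k) atTop (nhds (μ k)) := by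
    intro k
    exact (tendsto_pi_nhds.mp hvconv) k
  have hμnorm : ∀ k, ‖μ k‖ = 1 := by
    intro k
    have h1 : Tendsto (fun j => ‖v (φ j) k‖) atTop (nhds ‖μ k‖) := (hvconv' k).norm
    have h2 : Tendsto (fun _ : ℕ => (1:ℝ)) atTop (nhds 1) := tendsto_const_nhds
    have : (fun j => ‖v (φ j) k‖) = fun _ => (1:ℝ) := funext fun j => hvnorm _ _
    rw [this] at h1
    exact (tendsto_nhds_unique h1 h2)
  have hAq : ∀ k, Tendsto (fun j => A (φ j) k) atTop (nhds (q k)) :=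
    fun k => (hAconv k).comp hφ.tendsto_atTop
  have hμval : ∀ k : Fin e, (k : ℕ) < d₁ →
      μ k = (1 - (starRingEnd ℂ) (q k)) / (1 - q k) := by
    intro k hk
    have hne : (1 : ℂ) - q k ≠ 0 := by
      intro h
      have hq1' : q k = 1 := by linear_combination -h
      have h2 := hqin k hk
      rw [hq1'] at h2
      norm_num at h2
    have hc : ContinuousAt (fun w : ℂ => (1 - (starRingEnd ℂ) w) / (1 - w)) (q k) := by
      apply ContinuousAt.div
      · exact continuousAt_const.sub (Complex.continuous_conj.continuousAt)
      · exact continuousAt_const.sub continuousAt_id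
      · exact hne
    have h1 : Tendsto (fun j => v (φ j) k) atTop
        (nhds ((1 - (starRingEnd ℂ) (q k)) / (1 - q k))) := hc.tendsto.comp (hAq k)
    exact tendsto_nhds_unique (hvconv' k) h1
  refine ⟨∏ k ∈ Finset.univ.filter (fun k : Fin e => ¬ (k : ℕ) < d₁), (μ k * (-q k)), ?_, φ, hφ, ?_⟩
  · rw [norm_prod]
    apply Finset.prod_eq_one
    intro k hk
    rw [Finset.mem_filter] at hk
    rw [norm_mul, norm_neg, hμnorm k, hqbd k (not_lt.mp hk.2), one_mul]
  intro K hK hKq hKp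
  rcases K.eq_empty_or_nonempty with rfl | hKne
  · exact ⟨Eventually.of_forall (by simp), by simp [tendstoUniformlyOn_empty]⟩
  -- all limit denominators nonzero on K
  have hKq' : ∀ z ∈ K, ∀ k : Fin e, 1 - (starRingEnd ℂ) (q k) * z ≠ 0 := by
    intro z hz k
    by_cases hk : (k : ℕ) < d₁
    · exact hKp z hz k hk
    · exact bl_den_ne _ _ (hqbd k (not_lt.mp hk)) (hKq z hz k (not_lt.mp hk))
  -- the open set of parameter-point pairs with no pole
  set D : Set ((Fin e → ℂ) × ℂ) :=
    {p | ∀ k, 1 - (starRingEnd ℂ) (p.1 k) * p.2 ≠ 0} with hD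
  have hDopen : IsOpen D := by
    have : D = ⋂ k : Fin e,
        (fun p : (Fin e → ℂ) × ℂ => 1 - (starRingEnd ℂ) (p.1 k) * p.2) ⁻¹' {0}ᶜ := by
      ext p; simp [hD, Set.mem_iInter]
    rw [this]
    apply isOpen_iInter_of_finite
    intro k
    apply IsOpen.preimage ?_ isOpen_compl_singleton
    exact continuous_const.sub
      ((Complex.continuous_conj.comp ((continuous_apply k).comp continuous_fst)).mul
        continuous_snd)
  have hsub : ({q} : Set (Fin e → ℂ)) ×ˢ K ⊆ D := by
    rintro ⟨a, z⟩ ⟨ha, hz⟩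
    simp only [Set.mem_singleton_iff] at ha
    subst ha
    exact fun k => hKq' z hz k
  obtain ⟨δ, hδ, hth⟩ := (isCompact_singleton.prod hK).exists_thickening_subset_open hDopen hsub
  have hgood : ∀ a : Fin e → ℂ, dist a q ≤ δ/2 → ∀ z ∈ K, ∀ k : Fin e,
      1 - (starRingEnd ℂ) (a k) * z ≠ 0 := by
    intro a ha z hz k
    have hmem : (a, z) ∈ Metric.thickening δ (({q} : Set (Fin e → ℂ)) ×ˢ K) := by
      rw [Metric.mem_thickening_iff]
      refine ⟨(q, z), ⟨rfl, hz⟩, ?_⟩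
      rw [Prod.dist_eq]
      simp only [dist_self]
      rw [max_eq_left dist_nonneg]
      linarith
    exact hth hmem k
  -- the parametrized function
  set F : ((Fin e → ℂ) × (Fin e → ℂ)) → ℂ → ℂ := fun p z =>
    z ^ m * ∏ k, (p.2 k * ((z - p.1 k) / (1 - (starRingEnd ℂ) (p.1 k) * z))) with hF
  set U : Set ((Fin e → ℂ) × (Fin e → ℂ)) :=
    Metric.closedBall q (δ/2) ×ˢ Metric.closedBall μ 1 with hU
  have hUc : IsCompact U := (isCompact_closedBall _ _).prod (isCompact_closedBall _ _)
  have hFc : ContinuousOn (↿F) (U ×ˢ K) := by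
    apply ContinuousOn.mul
    · exact (continuous_snd.pow m).continuousOn
    · apply continuousOn_finset_prod
      intro k _
      apply ContinuousOn.mul
      · exact ((continuous_apply k).comp (continuous_snd.comp continuous_fst)).continuousOn
      · apply ContinuousOn.div
        · exact (continuous_snd.sub
            ((continuous_apply k).comp (continuous_fst.comp continuous_fst))).continuousOn
        · exact (continuous_const.sub
            ((Complex.continuous_conj.comp
              ((continuous_apply k).comp (continuous_fst.comp continuous_fst))).mul
              continuous_snd)).continuousOn
        · rintro ⟨⟨a, c⟩, z⟩ ⟨⟨ha, -⟩, hz⟩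
          exact hgood a (Metric.mem_closedBall.mp ha) z hz k
  have hmemU : (q, μ) ∈ U := by
    constructor
    · exact Metric.mem_closedBall_self (by positivity)
    · exact Metric.mem_closedBall_self (by norm_num)
  have hTU : TendstoUniformlyOn F (F (q, μ)) (nhdsWithin (q, μ) U) K :=
    ((hUc.prod hK).uniformContinuousOn_of_continuous hFc).tendstoUniformlyOn hmemU
  have hAqpi : Tendsto (fun j => A (φ j)) atTop (nhds q) :=
    tendsto_pi_nhds.mpr hAq
  have hAev : ∀ᶠ j in atTop, A (φ j) ∈ Metric.closedBall q (δ/2) :=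
    hAqpi (Metric.closedBall_mem_nhds q (by positivity))
  have hpj : Tendsto (fun j => (A (φ j), v (φ j))) atTop (nhdsWithin (q, μ) U) := by
    rw [tendsto_nhdsWithin_iff]
    constructor
    · exact hAqpi.prodMk_nhds hvconv
    · have hvev : ∀ᶠ j in atTop, v (φ j) ∈ Metric.closedBall μ 1 :=
        hvconv (Metric.closedBall_mem_nhds μ (by norm_num))
      filter_upwards [hAev, hvev] with j h1 h2
      exact ⟨h1, h2⟩
  have hT2 : TendstoUniformlyOn (fun j => F (A (φ j), v (φ j))) (F (q, μ)) atTop K :=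
    tuo_comp_s2 hTU hpj
  constructor
  · filter_upwards [hAev] with j hj z hz k
    exact hgood _ (Metric.mem_closedBall.mp hj) z hz k
  · have heq1 : ∀ j, ∀ z ∈ K, F (A (φ j), v (φ j)) z = blaschke m (A (φ j)) z := by
      intro j z _
      rfl
    have heq2 : ∀ z ∈ K, F (q, μ) z =
        (∏ k ∈ Finset.univ.filter (fun k : Fin e => ¬ (k : ℕ) < d₁), (μ k * (-q k))) *
          blaschke m (fun k : Fin d₁ => q (Fin.castLE hd.le k)) z := by
      intro z hz
      have hKqz : ∀ k : Fin e, ¬ (k : ℕ) < d₁ → z ≠ q k := fun k hk =>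
        hKq z hz k (not_lt.mp hk)
      simp only [hF, blaschke]
      rw [← Finset.prod_filter_mul_prod_filter_not Finset.univ (fun k : Fin e => (k:ℕ) < d₁)]
      have e2 : ∏ k ∈ Finset.univ.filter (fun k : Fin e => ¬ (k:ℕ) < d₁),
          (μ k * ((z - q k) / (1 - (starRingEnd ℂ) (q k) * z)))
          = ∏ k ∈ Finset.univ.filter (fun k : Fin e => ¬ (k:ℕ) < d₁), (μ k * (-q k)) := by
        apply Finset.prod_congr rfl
        intro k hk
        rw [Finset.mem_filter] at hk
        rw [bl_key _ _ (hqbd k (not_lt.mp hk.2)) (hKqz k hk.2)]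
      have e1 : ∏ k ∈ Finset.univ.filter (fun k : Fin e => (k:ℕ) < d₁),
          (μ k * ((z - q k) / (1 - (starRingEnd ℂ) (q k) * z)))
          = ∏ k : Fin d₁,
            ((1 - (starRingEnd ℂ) (q (Fin.castLE hd.le k))) / (1 - q (Fin.castLE hd.le k)) *
            ((z - q (Fin.castLE hd.le k)) / (1 - (starRingEnd ℂ) (q (Fin.castLE hd.le k)) * z))) := by
        have hfil : Finset.univ.filter (fun k : Fin e => (k:ℕ) < d₁)
            = Finset.univ.map (Fin.castLEEmb hd.le) := by
          ext k
          rw [Finset.mem_filter, Finset.mem_map]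
          constructor
          · rintro ⟨-, h⟩
            exact ⟨⟨(k : ℕ), h⟩, Finset.mem_univ _, by ext; rfl⟩
          · rintro ⟨a, -, rfl⟩
            exact ⟨Finset.mem_univ _, by simpa using a.isLt⟩
        rw [hfil, Finset.prod_map]
        apply Finset.prod_congr rfl
        intro k _
        have hc : (Fin.castLEEmb hd.le) k = Fin.castLE hd.le k := rfl
        rw [hc, hμval (Fin.castLE hd.le k) (by simpa using k.isLt)]
      rw [e2, e1]
      ring
    exact (hT2.congr (Eventually.of_forall fun j => fun z hz => heq1 j z hz)).congr_right
      (fun z hz => heq2 z hz)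
end

section
/- Fix integers m ≥ 1, e ≥ 1, 0 ≤ d₁ ≤ e − 1, points a_1, …, a_{d₁} ∈ 𝔻 and q_{d₁+1}, …, q_e ∈ ∂𝔻, and assume q_k = 1 for at least one index k > d₁. Let B be the Blaschke product with exponent m and zero list (a_1, …, a_{d₁}). Then for every ζ ∈ ℂ with |ζ| = 1 there exist sequences (a_{k,n})_{n≥1} in 𝔻 (1 ≤ k ≤ e) with a_{k,n} → a_k for k ≤ d₁ and a_{k,n} → q_k for k > d₁, such that the Blaschke products B_n with exponent m and zero list (a_{1,n}, …, a_{e,n}) converge to ζ·B uniformly on every compact subset of ℂ disjoint from {q_{d₁+1}, …, q_e} and from the poles of B. -/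
open Filter
open Finset

noncomputable def bfac (a z : ℂ) : ℂ :=
  (1 - (starRingEnd ℂ) a) / (1 - a) * ((z - a) / (1 - (starRingEnd ℂ) a * z))

lemma tuo_mul_const {ι : Type*} {K : Set ℂ} {l : Filter ι} {f g : ι → ℂ → ℂ} {a b : ℂ}
    (hf : TendstoUniformlyOn f (fun _ => a) l K)
    (hg : TendstoUniformlyOn g (fun _ => b) l K) :
    TendstoUniformlyOn (fun n z => f n z * g n z) (fun _ => a * b) l K := by
  rw [Metric.tendstoUniformlyOn_iff] at *
  intro ε hε
  have hb1 : (0:ℝ) < ‖b‖ + 1 := by positivity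
  have ha1 : (0:ℝ) < ‖a‖ + 1 := by positivity
  have h1 := hf (min 1 (ε / (3 * (‖b‖ + 1)))) (by positivity)
  have h2 := hg (min 1 (ε / (3 * (‖a‖ + 1)))) (by positivity)
  filter_upwards [h1, h2] with n hn1 hn2 z hz
  have e1 := hn1 z hz
  have e2 := hn2 z hz
  rw [dist_eq_norm] at e1 e2 ⊢
  have key : a * b - f n z * g n z = a * (b - g n z) + (a - f n z) * g n z := by ring
  rw [key]
  have hga : ‖g n z‖ ≤ ‖b‖ + 1 := by
    have h : g n z = b - (b - g n z) := by ring
    rw [h]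
    have := norm_sub_le b (b - g n z)
    have h2 : ‖b - g n z‖ ≤ 1 := le_of_lt (lt_of_lt_of_le e2 (min_le_left _ _))
    linarith
  have t1 : ‖a * (b - g n z)‖ ≤ ε / 3 := by
    rw [norm_mul]
    have h2 : ‖b - g n z‖ ≤ ε / (3 * (‖a‖ + 1)) := le_of_lt (lt_of_lt_of_le e2 (min_le_right _ _))
    have : ‖a‖ * ‖b - g n z‖ ≤ (‖a‖ + 1) * (ε / (3 * (‖a‖ + 1))) := by
      apply mul_le_mul (by linarith) h2 (norm_nonneg _) (by linarith)
    calc ‖a‖ * ‖b - g n z‖ ≤ (‖a‖ + 1) * (ε / (3 * (‖a‖ + 1))) := this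
      _ = ε / 3 := by field_simp
  have t2 : ‖(a - f n z) * g n z‖ ≤ ε / 3 := by
    rw [norm_mul]
    have h2 : ‖a - f n z‖ ≤ ε / (3 * (‖b‖ + 1)) := le_of_lt (lt_of_lt_of_le e1 (min_le_right _ _))
    calc ‖a - f n z‖ * ‖g n z‖ ≤ (ε / (3 * (‖b‖ + 1))) * (‖b‖ + 1) :=
        mul_le_mul h2 hga (norm_nonneg _) (by positivity)
      _ = ε / 3 := by field_simp
  calc ‖a * (b - g n z) + (a - f n z) * g n z‖
      ≤ ‖a * (b - g n z)‖ + ‖(a - f n z) * g n z‖ := norm_add_le _ _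
    _ ≤ ε / 3 + ε / 3 := add_le_add t1 t2
    _ < ε := by linarith

lemma tuo_prod {ι : Type*} {K : Set ℂ} (s : Finset ι) (f : ι → ℕ → ℂ → ℂ) (L : ι → ℂ)
    (h : ∀ k ∈ s, TendstoUniformlyOn (fun n z => f k n z) (fun _ => L k) atTop K) :
    TendstoUniformlyOn (fun n z => ∏ k ∈ s, f k n z) (fun _ => ∏ k ∈ s, L k) atTop K := by
  classical
  induction s using Finset.induction with
  | empty =>
      simpa using
        (tendsto_const_nhds : Filter.Tendsto (fun _ : ℕ => (1:ℂ)) atTop (nhds 1)).tendstoUniformlyOn_const K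
  | @insert x s hx ih =>
      simp only [Finset.prod_insert hx]
      exact tuo_mul_const (h x (Finset.mem_insert_self x s))
        (ih fun k hk => h k (Finset.mem_insert_of_mem hk))

lemma tuo_fixed_mul {K : Set ℂ} {P : ℕ → ℂ → ℂ} {ζ : ℂ} (g : ℂ → ℂ) {C : ℝ}
    (hC : ∀ z ∈ K, ‖g z‖ ≤ C)
    (hP : TendstoUniformlyOn P (fun _ => ζ) atTop K) :
    TendstoUniformlyOn (fun n z => g z * P n z) (fun z => g z * ζ) atTop K := by
  rw [Metric.tendstoUniformlyOn_iff] at *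
  intro ε hε
  have hC0 : (0:ℝ) < max C 0 + 1 := by positivity
  filter_upwards [hP (ε / (max C 0 + 1)) (by positivity)] with n hn z hz
  have e := hn z hz
  rw [dist_eq_norm] at e ⊢
  have : g z * ζ - g z * P n z = g z * (ζ - P n z) := by ring
  rw [this, norm_mul]
  have hg : ‖g z‖ ≤ max C 0 := le_trans (hC z hz) (le_max_left _ _)
  calc ‖g z‖ * ‖ζ - P n z‖ ≤ (max C 0) * (ε / (max C 0 + 1)) :=
      mul_le_mul hg (le_of_lt e) (norm_nonneg _) (le_max_right _ _)
    _ < (max C 0 + 1) * (ε / (max C 0 + 1)) := by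
        have hd : 0 < ε / (max C 0 + 1) := by positivity
        nlinarith
    _ = ε := by field_simp


lemma mul_conj_one' {q : ℂ} (hq : ‖q‖ = 1) : q * (starRingEnd ℂ) q = 1 := by
  rw [Complex.mul_conj]
  norm_cast
  rw [Complex.normSq_eq_norm_sq, hq]; norm_num

lemma normSq_one_of {u : ℂ} (hu : ‖u‖ = 1) : u.re ^ 2 + u.im ^ 2 = 1 := by
  have h := Complex.sq_norm u
  rw [hu] at h
  rw [Complex.normSq_apply] at h
  nlinarith

lemma in_disc {u : ℂ} (hu : ‖u‖ = 1) (hre : 0 ≤ u.re) {t : ℝ} (h0 : 0 < t) (h1 : t < 1) :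
    ‖(1 : ℂ) - t * u - (t:ℂ)^2‖ < 1 := by
  have h2 : Complex.normSq ((1 : ℂ) - t * u - (t:ℂ)^2) = (1 - t^2 - t*u.re)^2 + (t*u.im)^2 := by
    simp [Complex.normSq_apply, Complex.sub_re, Complex.sub_im, Complex.mul_re, Complex.mul_im,
      Complex.ofReal_re, Complex.ofReal_im, pow_two]
    ring
  have h3 := normSq_one_of hu
  have hsq : Complex.normSq ((1 : ℂ) - t * u - (t:ℂ)^2) < 1 := by
    rw [h2]
    have ht2 : t^2 < 1 := by nlinarith
    nlinarith [mul_nonneg (mul_nonneg h0.le hre) (sub_nonneg.mpr ht2.le),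
      mul_pos (mul_pos h0 h0) (sub_pos.mpr ht2)]
  have h4 := Complex.sq_norm ((1 : ℂ) - t * u - (t:ℂ)^2)
  nlinarith [norm_nonneg ((1 : ℂ) - t * u - (t:ℂ)^2)]

lemma mobius_tuo {K : Set ℂ} (hK : IsCompact K) {q : ℂ} (hq : ‖q‖ = 1)
    (hzq : ∀ z ∈ K, z ≠ q) {a : ℕ → ℂ} (ha : Tendsto a atTop (nhds q)) :
    TendstoUniformlyOn (fun n z => (z - a n) / (1 - (starRingEnd ℂ) (a n) * z))
      (fun _ => -q) atTop K := by
  rcases K.eq_empty_or_nonempty with rfl | hne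
  · simp [TendstoUniformlyOn]
  obtain ⟨R, hR⟩ := hK.isBounded.exists_norm_le
  have hR0 : 0 ≤ R := le_trans (norm_nonneg _) (hR _ hne.some_mem)
  have hcont : ContinuousOn (fun z : ℂ => ‖1 - (starRingEnd ℂ) q * z‖) K := by fun_prop
  obtain ⟨z₀, hz₀K, hz₀min⟩ := hK.exists_isMinOn hne hcont
  set δ := ‖1 - (starRingEnd ℂ) q * z₀‖ with hδdef
  have hqq : q * (starRingEnd ℂ) q = 1 := mul_conj_one' hq
  have hδ : 0 < δ := by
    rw [hδdef, norm_pos_iff]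
    intro h
    have hz : z₀ = q := by
      have h1 : (starRingEnd ℂ) q * z₀ = 1 := by
        have := sub_eq_zero.mp h; exact this.symm
      calc z₀ = (q * (starRingEnd ℂ) q) * z₀ := by rw [hqq]; ring
        _ = q * ((starRingEnd ℂ) q * z₀) := by ring
        _ = q := by rw [h1]; ring
    exact hzq z₀ hz₀K hz
  rw [Metric.tendstoUniformlyOn_iff]
  intro ε hε
  have hpos : 0 < min (δ / (2 * (R + 1))) (ε * δ / (2 * (1 + R))) := by positivity
  have hev : ∀ᶠ n in atTop, dist (a n) q < min (δ / (2 * (R + 1))) (ε * δ / (2 * (1 + R))) :=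
    (Metric.tendsto_nhds.mp ha) _ hpos
  filter_upwards [hev] with n hn z hz
  have hs : ‖a n - q‖ < min (δ / (2 * (R + 1))) (ε * δ / (2 * (1 + R))) := by
    rwa [dist_eq_norm] at hn
  have hzR : ‖z‖ ≤ R := hR z hz
  have hδz : δ ≤ ‖1 - (starRingEnd ℂ) q * z‖ := hz₀min hz
  -- lower bound on denominator
  have hconj : ‖(starRingEnd ℂ) (a n) - (starRingEnd ℂ) q‖ = ‖a n - q‖ := by
    rw [← map_sub]; exact norm_star _
  have hwlow : δ / 2 ≤ ‖1 - (starRingEnd ℂ) (a n) * z‖ := by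
    have hdiff : ‖(1 - (starRingEnd ℂ) q * z) - (1 - (starRingEnd ℂ) (a n) * z)‖ ≤ δ / 2 := by
      have e : (1 - (starRingEnd ℂ) q * z) - (1 - (starRingEnd ℂ) (a n) * z)
          = ((starRingEnd ℂ) (a n) - (starRingEnd ℂ) q) * z := by ring
      rw [e, norm_mul, hconj]
      have h1 : ‖a n - q‖ ≤ δ / (2 * (R + 1)) := le_of_lt (lt_of_lt_of_le hs (min_le_left _ _))
      calc ‖a n - q‖ * ‖z‖ ≤ (δ / (2 * (R + 1))) * (R + 1) :=
          mul_le_mul h1 (by linarith) (norm_nonneg _) (by positivity)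
        _ = δ / 2 := by field_simp
    have := norm_sub_norm_le (1 - (starRingEnd ℂ) q * z) (1 - (starRingEnd ℂ) (a n) * z)
    linarith
  have hw0 : (1 - (starRingEnd ℂ) (a n) * z) ≠ 0 := by
    intro h; rw [h, norm_zero] at hwlow; linarith
  rw [dist_eq_norm]
  have key : -q - (z - a n) / (1 - (starRingEnd ℂ) (a n) * z)
      = ((a n - q) + q * z * ((starRingEnd ℂ) (a n) - (starRingEnd ℂ) q))
        / (1 - (starRingEnd ℂ) (a n) * z) := by
    rw [eq_div_iff hw0, sub_mul, div_mul_cancel₀ _ hw0]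
    linear_combination z * hqq
  rw [key, norm_div]
  set N := (a n - q) + q * z * ((starRingEnd ℂ) (a n) - (starRingEnd ℂ) q) with hN
  have hNb : ‖N‖ ≤ ‖a n - q‖ * (1 + R) := by
    calc ‖N‖ ≤ ‖a n - q‖ + ‖q * z * ((starRingEnd ℂ) (a n) - (starRingEnd ℂ) q)‖ :=
        norm_add_le _ _
      _ = ‖a n - q‖ + ‖q‖ * ‖z‖ * ‖a n - q‖ := by rw [norm_mul, norm_mul, hconj]
      _ ≤ ‖a n - q‖ + 1 * R * ‖a n - q‖ := by
          have := mul_le_mul (mul_le_mul hq.le hzR (norm_nonneg _) (by norm_num))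
            (le_refl ‖a n - q‖) (norm_nonneg _) (by nlinarith [norm_nonneg z])
          nlinarith [norm_nonneg (a n - q), norm_nonneg z, hq.le]
      _ = ‖a n - q‖ * (1 + R) := by ring
  have hs2 : ‖a n - q‖ < ε * δ / (2 * (1 + R)) := lt_of_lt_of_le hs (min_le_right _ _)
  have step1 : ‖N‖ / ‖1 - (starRingEnd ℂ) (a n) * z‖ ≤ ‖N‖ / (δ / 2) :=
    div_le_div_of_nonneg_left (norm_nonneg N) (by positivity) hwlow
  have step2 : ‖N‖ / (δ / 2) ≤ (‖a n - q‖ * (1 + R)) / (δ / 2) :=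
    (div_le_div_iff_of_pos_right (show (0:ℝ) < δ / 2 by positivity)).mpr hNb
  have step3 : (‖a n - q‖ * (1 + R)) / (δ / 2) < ε := by
    rw [div_lt_iff₀ (by positivity)]
    have hmul := mul_lt_mul_of_pos_right hs2 (show (0:ℝ) < 1 + R by linarith)
    have heq : ε * δ / (2 * (1 + R)) * (1 + R) = ε * (δ / 2) := by
      field_simp
    linarith
  linarith

lemma conj_inv_sq {u : ℂ} (hu : ‖u‖ = 1) :
    (starRingEnd ℂ) u / u = ((starRingEnd ℂ) u)^2 := by
  have hu0 : u ≠ 0 := by intro h; rw [h, norm_zero] at hu; norm_num at hu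
  have hqq : u * (starRingEnd ℂ) u = 1 := mul_conj_one' hu
  rw [div_eq_iff hu0]
  linear_combination (-(starRingEnd ℂ) u) * hqq

lemma const_ratio_tendsto {t : ℕ → ℝ} (ht0 : ∀ n, 0 < t n) (ht1 : ∀ n, t n < 1)
    (htlim : Tendsto t atTop (nhds 0))
    {q u : ℂ} (hq : ‖q‖ = 1) (hu : ‖u‖ = 1) :
    Tendsto (fun n => (1 - (starRingEnd ℂ) (q * (1 - (t n : ℂ) * u - (t n : ℂ)^2))) /
        (1 - q * (1 - (t n : ℂ) * u - (t n : ℂ)^2))) atTop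
      (nhds (if q = 1 then ((starRingEnd ℂ) u)^2 else -(starRingEnd ℂ) q)) := by
  have htC : Tendsto (fun n => ((t n : ℝ) : ℂ)) atTop (nhds 0) := by
    have := (Complex.continuous_ofReal.tendsto 0).comp htlim
    simpa [Function.comp_def] using this
  by_cases hq1 : q = 1
  · subst hq1
    rw [if_pos rfl]
    have hu0 : u ≠ 0 := by intro h; rw [h, norm_zero] at hu; norm_num at hu
    have key : ∀ n, (1 - (starRingEnd ℂ) ((1:ℂ) * (1 - (t n : ℂ) * u - (t n : ℂ)^2))) /
        (1 - 1 * (1 - (t n : ℂ) * u - (t n : ℂ)^2))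
        = ((starRingEnd ℂ) u + (t n : ℂ)) / (u + (t n : ℂ)) := by
      intro n
      have htn0 : ((t n : ℝ) : ℂ) ≠ 0 := by
        simp only [ne_eq, Complex.ofReal_eq_zero]; exact (ht0 n).ne'
      have h1 : (1:ℂ) - 1 * (1 - (t n : ℂ) * u - (t n : ℂ)^2)
          = (t n : ℂ) * (u + (t n : ℂ)) := by ring
      have h2 : (1:ℂ) - (starRingEnd ℂ) ((1:ℂ) * (1 - (t n : ℂ) * u - (t n : ℂ)^2))
          = (t n : ℂ) * ((starRingEnd ℂ) u + (t n : ℂ)) := by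
        simp only [map_mul, map_one, map_sub, map_pow, Complex.conj_ofReal, map_one]
        ring
      rw [h1, h2, mul_div_mul_left _ _ htn0]
    simp only [key]
    have hlim : Tendsto (fun n => ((starRingEnd ℂ) u + (t n : ℂ)) / (u + (t n : ℂ))) atTop
        (nhds ((starRingEnd ℂ) u / u)) := by
      have h1 : Tendsto (fun n => (starRingEnd ℂ) u + (t n : ℂ)) atTop
          (nhds ((starRingEnd ℂ) u)) := by
        simpa using (tendsto_const_nhds (x := (starRingEnd ℂ) u) (f := atTop)).add htC
      have h2 : Tendsto (fun n => u + (t n : ℂ)) atTop (nhds u) := by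
        simpa using (tendsto_const_nhds (x := u) (f := atTop)).add htC
      exact h1.div h2 hu0
    rwa [conj_inv_sq hu] at hlim
  · rw [if_neg hq1]
    have ha : Tendsto (fun n => q * (1 - (t n : ℂ) * u - (t n : ℂ)^2)) atTop (nhds q) := by
      have h1 : Tendsto (fun n => (1 : ℂ) - (t n : ℂ) * u - (t n : ℂ)^2) atTop (nhds 1) := by
        have := ((tendsto_const_nhds (x := (1:ℂ)) (f := atTop)).sub (htC.mul (tendsto_const_nhds (x := u) (f := atTop)))).sub
          (htC.pow 2)
        simpa using this
      simpa using (tendsto_const_nhds (x := q) (f := atTop)).mul h1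
    have hden : (1 : ℂ) - q ≠ 0 := sub_ne_zero.mpr (fun h => hq1 h.symm)
    have hnum : Tendsto (fun n => (1 : ℂ) - (starRingEnd ℂ) (q * (1 - (t n : ℂ) * u - (t n : ℂ)^2)))
        atTop (nhds (1 - (starRingEnd ℂ) q)) :=
      tendsto_const_nhds.sub ((Complex.continuous_conj.tendsto q).comp ha)
    have hden' : Tendsto (fun n => (1 : ℂ) - q * (1 - (t n : ℂ) * u - (t n : ℂ)^2))
        atTop (nhds (1 - q)) := tendsto_const_nhds.sub ha
    have hlim := hnum.div hden' hden
    have hval : (1 - (starRingEnd ℂ) q) / (1 - q) = -(starRingEnd ℂ) q := by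
      have hqq : q * (starRingEnd ℂ) q = 1 := mul_conj_one' hq
      rw [div_eq_iff hden]
      linear_combination -hqq
    rwa [hval] at hlim

/-- Fix `m ≥ 1`, `e ≥ 1`, `0 ≤ d₁ ≤ e − 1`, points `a_1,…,a_{d₁} ∈ 𝔻`
(encoded as `q k` for `k < d₁`) and `q_{d₁+1},…,q_e ∈ ∂𝔻` (encoded as `q k` for `d₁ ≤ k`),
with `q k = 1` for at least one boundary index.  Let `B` be the Blaschke product with
exponent `m` and the interior zeros.  Then for every `ζ` of modulus `1` there exist
sequences in `𝔻` converging to the `q k` such that the corresponding Blaschke products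
converge to `ζ·B` uniformly on every compact set disjoint from the boundary points and
from the poles of `B`. -/
theorem stmt3 (m e d₁ : ℕ) (hm : 1 ≤ m) (he : 1 ≤ e) (hd : d₁ < e)
    (q : Fin e → ℂ)
    (hqin : ∀ k : Fin e, (k : ℕ) < d₁ → ‖q k‖ < 1)
    (hqbd : ∀ k : Fin e, d₁ ≤ (k : ℕ) → ‖q k‖ = 1)
    (hq1 : ∃ k : Fin e, d₁ ≤ (k : ℕ) ∧ q k = 1)
    (ζ : ℂ) (hζ : ‖ζ‖ = 1) :
    ∃ A : ℕ → Fin e → ℂ, (∀ n k, ‖A n k‖ < 1) ∧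
      (∀ k, Tendsto (fun n => A n k) atTop (nhds (q k))) ∧
      ∀ K : Set ℂ, IsCompact K →
        (∀ z ∈ K, ∀ k : Fin e, d₁ ≤ (k : ℕ) → z ≠ q k) →
        (∀ z ∈ K, ∀ k : Fin e, (k : ℕ) < d₁ → 1 - (starRingEnd ℂ) (q k) * z ≠ 0) →
        TendstoUniformlyOn (fun n => blaschke m (A n))
          (fun z => ζ * blaschke m (fun k : Fin d₁ => q (Fin.castLE hd.le k)) z) atTop K := by
  classical
  obtain ⟨k₀, hk₀d, hk₀q⟩ := hq1
  -- square root of -conj ζ with nonnegative real part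
  obtain ⟨v, hv⟩ := IsAlgClosed.exists_pow_nat_eq (-(starRingEnd ℂ) ζ) (two_pos)
  set u₀ : ℂ := if 0 ≤ v.re then v else -v with hu₀def
  have hu₀sq : u₀ ^ 2 = -(starRingEnd ℂ) ζ := by
    rw [hu₀def]; split
    · exact hv
    · rw [neg_sq]; exact hv
  have hu₀re : 0 ≤ u₀.re := by
    rw [hu₀def]; split
    · assumption
    · simp only [Complex.neg_re]; linarith [lt_of_not_ge (by assumption : ¬ 0 ≤ v.re)]
  have hu₀norm : ‖u₀‖ = 1 := by
    have h1 : ‖u₀‖ ^ 2 = 1 := by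
      rw [← norm_pow, hu₀sq, norm_neg]
      rw [show ‖(starRingEnd ℂ) ζ‖ = ‖ζ‖ from norm_star ζ, hζ]
    nlinarith [norm_nonneg u₀]
  -- the directions
  set u : Fin e → ℂ := fun k => if k = k₀ then u₀ else Complex.I with hudef
  have hunorm : ∀ k, ‖u k‖ = 1 := by
    intro k; rw [hudef]; dsimp only; split
    · exact hu₀norm
    · simp
  have hure : ∀ k, 0 ≤ (u k).re := by
    intro k; rw [hudef]; dsimp only; split
    · exact hu₀re
    · simp
  -- the speeds
  set t : ℕ → ℝ := fun n => ((n : ℝ) + 2)⁻¹ with htdef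
  have ht0 : ∀ n, 0 < t n := fun n => by rw [htdef]; positivity
  have ht1 : ∀ n, t n < 1 := by
    intro n; rw [htdef]; dsimp only
    rw [inv_lt_one_iff₀]; right; push_cast; linarith [Nat.cast_nonneg (α := ℝ) n]
  have htlim : Tendsto t atTop (nhds 0) := by
    rw [htdef]
    apply tendsto_inv_atTop_zero.comp
    exact tendsto_atTop_add_const_right atTop 2 tendsto_natCast_atTop_atTop
  -- the sequences
  set A : ℕ → Fin e → ℂ :=
    fun n k => if (k : ℕ) < d₁ then q k else q k * (1 - (t n : ℂ) * u k - (t n : ℂ)^2)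
    with hAdef
  have hAint : ∀ (n : ℕ) (k : Fin e), (k : ℕ) < d₁ → A n k = q k := by
    intro n k hk; rw [hAdef]; exact if_pos hk
  have hAbd : ∀ n (k : Fin e), d₁ ≤ (k : ℕ) →
      A n k = q k * (1 - (t n : ℂ) * u k - (t n : ℂ)^2) := by
    intro n k hk; rw [hAdef]; exact if_neg (not_lt.mpr hk)
  refine ⟨A, ?_, ?_, ?_⟩
  · -- inside the disc
    intro n k
    by_cases hk : (k : ℕ) < d₁
    · rw [hAint n k hk]; exact hqin k hk
    · rw [hAbd n k (not_lt.mp hk), norm_mul, hqbd k (not_lt.mp hk), one_mul]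
      exact in_disc (hunorm k) (hure k) (ht0 n) (ht1 n)
  · -- convergence of zeros
    intro k
    by_cases hk : (k : ℕ) < d₁
    · have hfe : (fun n => A n k) = fun _ => q k := by
        funext n; exact hAint n k hk
      rw [hfe]; exact tendsto_const_nhds
    · have hfe : (fun n => A n k) = fun n => q k * (1 - (t n : ℂ) * u k - (t n : ℂ)^2) := by
        funext n; exact hAbd n k (not_lt.mp hk)
      rw [hfe]
      have htC : Tendsto (fun n => ((t n : ℝ) : ℂ)) atTop (nhds 0) := by
        simpa [Function.comp_def] using (Complex.continuous_ofReal.tendsto 0).comp htlim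
      have h1 : Tendsto (fun n => (1 : ℂ) - (t n : ℂ) * u k - (t n : ℂ)^2) atTop (nhds 1) := by
        have := ((tendsto_const_nhds (x := (1:ℂ)) (f := atTop)).sub
          (htC.mul (tendsto_const_nhds (x := u k) (f := atTop)))).sub (htC.pow 2)
        simpa using this
      simpa using (tendsto_const_nhds (x := q k) (f := atTop)).mul h1
  · -- uniform convergence
    intro K hK hK1 hK2
    have hblaschke : ∀ (e' : ℕ) (a : Fin e' → ℂ) (z : ℂ),
        blaschke m a z = z ^ m * ∏ k, bfac (a k) z := fun _ _ _ => rfl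
    set g : ℂ → ℂ :=
      fun z => z ^ m * ∏ k ∈ univ.filter (fun k : Fin e => (k : ℕ) < d₁), bfac (q k) z
      with hgdef
    set P : ℕ → ℂ → ℂ :=
      fun n z => ∏ k ∈ univ.filter (fun k : Fin e => ¬ (k : ℕ) < d₁), bfac (A n k) z
      with hPdef
    have hsplit : ∀ n z, blaschke m (A n) z = g z * P n z := by
      intro n z
      rw [hblaschke, hgdef, hPdef]
      dsimp only
      rw [← Finset.prod_filter_mul_prod_filter_not univ (fun k : Fin e => (k : ℕ) < d₁)
        (fun k => bfac (A n k) z), mul_assoc]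
      congr 1
      congr 1
      apply Finset.prod_congr rfl
      intro k hk
      rw [hAint n k (Finset.mem_filter.mp hk).2]
    have hreindex : ∀ z : ℂ, (∏ j : Fin d₁, bfac (q (Fin.castLE hd.le j)) z)
        = ∏ k ∈ univ.filter (fun k : Fin e => (k : ℕ) < d₁), bfac (q k) z := by
      intro z
      refine Finset.prod_bij' (fun (j : Fin d₁) (_ : j ∈ (univ : Finset (Fin d₁))) =>
          Fin.castLE hd.le j)
        (fun (k : Fin e) (hk : k ∈ univ.filter (fun k : Fin e => (k : ℕ) < d₁)) =>
          (⟨(k : ℕ), (Finset.mem_filter.mp hk).2⟩ : Fin d₁)) ?_ ?_ ?_ ?_ ?_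
      · intro a ha; simp [Fin.coe_castLE, a.isLt]
      · intro a ha; simp
      · intro a ha; simp [Fin.ext_iff]
      · intro a ha; simp [Fin.ext_iff]
      · intro a ha; rfl
    have htarget : ∀ z : ℂ,
        ζ * blaschke m (fun j : Fin d₁ => q (Fin.castLE hd.le j)) z = g z * ζ := by
      intro z
      rw [hblaschke, hgdef]
      dsimp only
      rw [hreindex z]; ring
    -- boundedness of g
    have hgcont : ContinuousOn g K := by
      rw [hgdef]
      apply ContinuousOn.mul ((continuous_pow m).continuousOn)
      apply continuousOn_finset_prod
      intro k hk
      have hkd := (Finset.mem_filter.mp hk).2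
      unfold bfac
      apply ContinuousOn.mul continuousOn_const
      apply ContinuousOn.div
      · fun_prop
      · fun_prop
      · intro z hz; exact hK2 z hz k hkd
    obtain ⟨C, hC⟩ := hK.exists_bound_of_continuousOn hgcont
    -- limits of the boundary factors
    set L : Fin e → ℂ := fun k => if k = k₀ then ζ else 1 with hLdef
    have hfactors : ∀ k ∈ univ.filter (fun k : Fin e => ¬ (k : ℕ) < d₁),
        TendstoUniformlyOn (fun n z => bfac (A n k) z) (fun _ => L k) atTop K := by
      intro k hk
      have hkd : d₁ ≤ (k : ℕ) := not_lt.mp (Finset.mem_filter.mp hk).2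
      have hqk : ‖q k‖ = 1 := hqbd k hkd
      have hzq : ∀ z ∈ K, z ≠ q k := fun z hz => hK1 z hz k hkd
      have haT : Tendsto (fun n => A n k) atTop (nhds (q k)) := by
        have hfe : (fun n => A n k) = fun n => q k * (1 - (t n : ℂ) * u k - (t n : ℂ)^2) := by
          funext n; exact hAbd n k hkd
        rw [hfe]
        have htC : Tendsto (fun n => ((t n : ℝ) : ℂ)) atTop (nhds 0) := by
          simpa [Function.comp_def] using (Complex.continuous_ofReal.tendsto 0).comp htlim
        have h1 : Tendsto (fun n => (1 : ℂ) - (t n : ℂ) * u k - (t n : ℂ)^2) atTop (nhds 1) := by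
          have := ((tendsto_const_nhds (x := (1:ℂ)) (f := atTop)).sub
            (htC.mul (tendsto_const_nhds (x := u k) (f := atTop)))).sub (htC.pow 2)
          simpa using this
        simpa using (tendsto_const_nhds (x := q k) (f := atTop)).mul h1
      have hmob := mobius_tuo hK hqk hzq haT
      have hconst0 := const_ratio_tendsto ht0 ht1 htlim hqk (hunorm k)
      have hconstT : Tendsto (fun n => (1 - (starRingEnd ℂ) (A n k)) / (1 - A n k)) atTop
          (nhds (if q k = 1 then ((starRingEnd ℂ) (u k))^2 else -(starRingEnd ℂ) (q k))) := by
        have : (fun n => (1 - (starRingEnd ℂ) (A n k)) / (1 - A n k))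
            = fun n => (1 - (starRingEnd ℂ) (q k * (1 - (t n : ℂ) * u k - (t n : ℂ)^2))) /
              (1 - q k * (1 - (t n : ℂ) * u k - (t n : ℂ)^2)) := by
          funext n; rw [hAbd n k hkd]
        rw [this]; exact hconst0
      have hcu := hconstT.tendstoUniformlyOn_const K
      have := tuo_mul_const hcu hmob
      have hval : (if q k = 1 then ((starRingEnd ℂ) (u k))^2 else -(starRingEnd ℂ) (q k))
          * (-(q k)) = L k := by
        rw [hLdef]; dsimp only
        by_cases hkk : k = k₀
        · subst hkk
          rw [if_pos rfl, if_pos hk₀q, hk₀q, hudef]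
          dsimp only
          rw [if_pos rfl]
          have : ((starRingEnd ℂ) u₀)^2 = -ζ := by
            rw [← map_pow, hu₀sq]
            simp
          rw [this]; ring
        · rw [if_neg hkk]
          by_cases hq1' : q k = 1
          · rw [if_pos hq1', hq1', hudef]
            dsimp only
            rw [if_neg hkk]
            simp [Complex.conj_I]
          · rw [if_neg hq1']
            have hqq : q k * (starRingEnd ℂ) (q k) = 1 := mul_conj_one' hqk
            linear_combination hqq
      rw [hval] at this
      have hfun : (fun n z => bfac (A n k) z)
          = fun n z => ((1 - (starRingEnd ℂ) (A n k)) / (1 - A n k)) *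
              ((z - A n k) / (1 - (starRingEnd ℂ) (A n k) * z)) := by
        funext n z; rfl
      rw [hfun]
      exact this
    have hP := tuo_prod _ _ _ hfactors
    have hLprod : (∏ k ∈ univ.filter (fun k : Fin e => ¬ (k : ℕ) < d₁), L k) = ζ := by
      rw [hLdef]
      rw [Finset.prod_ite_eq' (univ.filter (fun k : Fin e => ¬ (k : ℕ) < d₁)) k₀ (fun _ => ζ)]
      exact if_pos (show k₀ ∈ Finset.filter (fun k : Fin e => ¬ (k : ℕ) < d₁) univ from
        Finset.mem_filter.mpr ⟨Finset.mem_univ _, not_lt.mpr hk₀d⟩)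
    rw [hLprod] at hP
    have hmain := tuo_fixed_mul g hC hP
    have e1 : (fun n => blaschke m (A n)) = fun n z => g z * P n z := by
      funext n z; exact hsplit n z
    have e2 : (fun z => ζ * blaschke m (fun j : Fin d₁ => q (Fin.castLE hd.le j)) z)
        = fun z => g z * ζ := by funext z; exact htarget z
    rw [e1, e2]
    exact hmain
end

section
/- Let 0 < r < R, A = {z ∈ ℂ : r < |z| < R}, and let f_n : A → ℂ be holomorphic functions converging locally uniformly on A to a holomorphic function f : A → ℂ, with sup_n ∫_A |f_n'(z)|² dλ(z) < ∞. Then the length functions L_{f_n} and L_f are Lebesgue integrable on [0, 2π], and ∫_0^{2π} |L_{f_n}(θ) − L_f(θ)| dθ → 0 as n → ∞. -/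
open Filter MeasureTheory
open scoped ENNReal NNReal
open Set
open scoped Real

section AuxStmt6

lemma aux_le_add_sq_mul_inv (a t : ℝ≥0∞) (h0 : t ≠ 0) (htop : t ≠ ∞) :
    a ≤ t + a ^ 2 * t⁻¹ := by
  rcases le_or_gt a t with h | h
  · exact h.trans le_self_add
  rcases eq_or_ne a ∞ with rfl | ha
  · have h2 : (∞ : ℝ≥0∞) ^ 2 * t⁻¹ = ∞ := by
      simp [ENNReal.top_pow, ENNReal.top_mul, ENNReal.inv_ne_zero.2 htop]
    simp [h2, ENNReal.top_mul (ENNReal.inv_ne_zero.2 htop)]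
  · have ha0 : a ≠ 0 := by
      intro h'; rw [h'] at h; exact ENNReal.not_lt_zero h
    calc a = a ^ 2 * a⁻¹ := by
          rw [sq, mul_assoc, ENNReal.mul_inv_cancel ha0 ha, mul_one]
      _ ≤ a ^ 2 * t⁻¹ := mul_le_mul_right (ENNReal.inv_le_inv.2 h.le) _
      _ ≤ t + a ^ 2 * t⁻¹ := le_add_self

lemma aux_quarters (x : ℝ≥0∞) : x / 2 + (x / 4 + x / 4) = x := by
  have h44 : x / 4 + x / 4 = x / 2 := by
    rw [ENNReal.div_add_div_same, ← two_mul,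
      show (4 : ℝ≥0∞) = 2 * 2 by norm_num,
      ENNReal.mul_div_mul_left _ _ two_ne_zero ENNReal.ofNat_ne_top]
  rw [h44, ENNReal.add_halves]

lemma aux_sq_add (x y : ℝ≥0∞) : (x + y) ^ 2 ≤ 4 * (x ^ 2 + y ^ 2) := by
  have h1 : x + y ≤ 2 * (x ⊔ y) := by
    rw [two_mul]; exact add_le_add le_sup_left le_sup_right
  calc (x + y) ^ 2 ≤ (2 * (x ⊔ y)) ^ 2 := by gcongr
    _ = 4 * (x ⊔ y) ^ 2 := by rw [mul_pow]; norm_num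
    _ ≤ 4 * (x ^ 2 + y ^ 2) := by
        gcongr
        rcases le_total x y with h | h
        · rw [sup_eq_right.2 h]; exact le_add_self
        · rw [sup_eq_left.2 h]; exact le_self_add

lemma aux_key (ρ θ : ℝ) : Complex.measurableEquivRealProd.symm (polarCoord.symm (ρ, θ))
    = (ρ : ℂ) * Complex.exp ((θ : ℂ) * Complex.I) := by
  rw [polarCoord_symm_apply, Complex.measurableEquivRealProd_symm_apply]
  apply Complex.ext <;>
    simp [Complex.exp_ofReal_mul_I_re, Complex.exp_ofReal_mul_I_im, Complex.mul_re,
      Complex.mul_im]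

lemma aux_norm (ρ θ : ℝ) (hρ : 0 ≤ ρ) : ‖(ρ : ℂ) * Complex.exp ((θ : ℂ) * Complex.I)‖ = ρ := by
  rw [norm_mul, Complex.norm_real, Complex.norm_exp_ofReal_mul_I,
    Real.norm_of_nonneg hρ, mul_one]

lemma aux_polar_bound {r R : ℝ} (hr : 0 < r) (G : ℂ → ℝ≥0∞) (hG : Measurable G) :
    (∫⁻ θ in Ioo (0 : ℝ) (2 * Real.pi), ∫⁻ ρ in Ioo r R,
        G ((ρ : ℂ) * Complex.exp ((θ : ℂ) * Complex.I)))
      ≤ (ENNReal.ofReal r)⁻¹ * ∫⁻ z in {z : ℂ | r < ‖z‖ ∧ ‖z‖ < R}, G z := by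
  set e : ℝ × ℝ → ℂ := fun q => Complex.measurableEquivRealProd.symm q with he
  set h : ℝ × ℝ → ℝ≥0∞ := fun q => G (e q) with hh
  have hmeas_h : Measurable h := hG.comp Complex.measurableEquivRealProd.symm.measurable
  have hps : Continuous (polarCoord.symm : ℝ × ℝ → ℝ × ℝ) := by
    have : (polarCoord.symm : ℝ × ℝ → ℝ × ℝ)
        = fun p => (p.1 * Real.cos p.2, p.1 * Real.sin p.2) := by
      funext p; exact polarCoord_symm_apply p
    rw [this]; fun_prop
  set s : Set (ℝ × ℝ) := Ioo r R ×ˢ Ioo 0 (2 * Real.pi) with hsdef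
  have hs : MeasurableSet s := measurableSet_Ioo.prod measurableSet_Ioo
  set B : ℝ × ℝ → ℝ × ℝ →L[ℝ] ℝ × ℝ := fun p =>
    LinearMap.toContinuousLinearMap (Matrix.toLin (Module.Basis.finTwoProd ℝ) (Module.Basis.finTwoProd ℝ)
      !![Real.cos p.2, -p.1 * Real.sin p.2; Real.sin p.2, p.1 * Real.cos p.2]) with hB
  have hBd : ∀ p ∈ s, HasFDerivWithinAt polarCoord.symm (B p) s p := fun p _ =>
    (hasFDerivAt_polarCoord_symm p).hasFDerivWithinAt
  have B_det : ∀ p, (B p).det = p.1 := by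
    intro p
    conv_rhs => rw [← one_mul p.1, ← Real.cos_sq_add_sin_sq p.2]
    simp only [hB, neg_mul, LinearMap.det_toContinuousLinearMap, LinearMap.det_toLin,
      Matrix.det_fin_two_of, sub_neg_eq_add]
    ring
  -- injectivity
  have hinj : InjOn (polarCoord.symm : ℝ × ℝ → ℝ × ℝ) s := by
    rintro ⟨ρ₁, θ₁⟩ hp ⟨ρ₂, θ₂⟩ hq hpq
    obtain ⟨⟨hr1, hR1⟩, hθ1, hθ1'⟩ := hp
    obtain ⟨⟨hr2, hR2⟩, hθ2, hθ2'⟩ := hq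
    have e1 : (ρ₁ : ℂ) * Complex.exp ((θ₁ : ℂ) * Complex.I)
        = (ρ₂ : ℂ) * Complex.exp ((θ₂ : ℂ) * Complex.I) := by
      rw [← aux_key, ← aux_key, hpq]
    have hρ : ρ₁ = ρ₂ := by
      have := congrArg (fun z => ‖z‖) e1
      simpa [aux_norm _ _ (hr.le.trans hr1.le), aux_norm _ _ (hr.le.trans hr2.le),
          abs_of_pos (hr.trans hr1), abs_of_pos (hr.trans hr2)] using this
    subst hρ
    have hρ0 : (ρ₁ : ℂ) ≠ 0 := by
      exact_mod_cast (hr.trans hr1).ne'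
    have e2 : Complex.exp ((θ₁ : ℂ) * Complex.I) = Complex.exp ((θ₂ : ℂ) * Complex.I) :=
      mul_left_cancel₀ hρ0 e1
    obtain ⟨n, hn⟩ := Complex.exp_eq_exp_iff_exists_int.1 e2
    have hnr : θ₁ = θ₂ + n * (2 * Real.pi) := by
      have h2 : ((θ₁ : ℝ) : ℂ) * Complex.I = ((θ₂ + n * (2 * Real.pi) : ℝ) : ℂ) * Complex.I := by
        push_cast
        rw [hn]; ring
      exact_mod_cast mul_right_cancel₀ Complex.I_ne_zero h2
    have hπ := Real.pi_pos
    have hn0 : n = 0 := by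
      rcases lt_trichotomy n 0 with h | h | h
      · have : (n : ℝ) ≤ -1 := by exact_mod_cast (show n ≤ -1 by omega)
        nlinarith
      · exact h
      · have : (1 : ℝ) ≤ n := by exact_mod_cast h
        nlinarith
    simp only [hn0, Int.cast_zero, zero_mul, add_zero] at hnr
    rw [hnr]
  -- change of variables
  have himg := lintegral_image_eq_lintegral_abs_det_fderiv_mul volume hs hBd hinj h
  simp only [B_det] at himg
  -- Tonelli
  have hT : (∫⁻ θ in Ioo (0 : ℝ) (2 * Real.pi), ∫⁻ ρ in Ioo r R,
        G ((ρ : ℂ) * Complex.exp ((θ : ℂ) * Complex.I)))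
      = ∫⁻ p in s, h (polarCoord.symm p) := by
    rw [hsdef, Measure.volume_eq_prod ℝ ℝ, ← Measure.prod_restrict,
      MeasureTheory.lintegral_prod_symm' (fun p => h (polarCoord.symm p))
        (hmeas_h.comp hps.measurable)]
    refine lintegral_congr fun θ => lintegral_congr fun ρ => ?_
    simp only [hh, he, aux_key]
  rw [hT]
  have hr0 : ENNReal.ofReal r ≠ 0 := by
    simp [ENNReal.ofReal_eq_zero, hr, not_le.2 hr]
  have hrtop : (ENNReal.ofReal r)⁻¹ ≠ ∞ := ENNReal.inv_ne_top.2 hr0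
  calc ∫⁻ p in s, h (polarCoord.symm p)
      ≤ ∫⁻ p in s, (ENNReal.ofReal r)⁻¹ * (ENNReal.ofReal |p.1| * h (polarCoord.symm p)) := by
        refine setLIntegral_mono
          (measurable_const.mul ((measurable_fst.abs.ennreal_ofReal).mul
            (hmeas_h.comp hps.measurable))) ?_
        rintro p ⟨⟨hr1, -⟩, -⟩
        calc h (polarCoord.symm p) = 1 * h (polarCoord.symm p) := (one_mul _).symm
          _ ≤ ((ENNReal.ofReal r)⁻¹ * ENNReal.ofReal |p.1|) * h (polarCoord.symm p) := by
              refine mul_le_mul_left ?_ _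
              rw [← ENNReal.inv_mul_cancel hr0 ENNReal.ofReal_ne_top]
              exact mul_le_mul_right
                (ENNReal.ofReal_le_ofReal (hr1.le.trans (le_abs_self p.1))) _
          _ = (ENNReal.ofReal r)⁻¹ * (ENNReal.ofReal |p.1| * h (polarCoord.symm p)) :=
              mul_assoc _ _ _
    _ = (ENNReal.ofReal r)⁻¹ * ∫⁻ p in s, ENNReal.ofReal |p.1| * h (polarCoord.symm p) :=
        lintegral_const_mul' _ _ hrtop
    _ = (ENNReal.ofReal r)⁻¹ * ∫⁻ x in polarCoord.symm '' s, h x := by rw [himg]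
    _ ≤ (ENNReal.ofReal r)⁻¹ * ∫⁻ q in e ⁻¹' {z : ℂ | r < ‖z‖ ∧ ‖z‖ < R}, h q := by
        gcongr
        rintro x ⟨⟨ρ, θ⟩, hp, rfl⟩
        obtain ⟨⟨hr1, hR1⟩, -⟩ := hp
        simp only [mem_preimage, mem_setOf_eq, he, aux_key, aux_norm _ _ (hr.le.trans hr1.le)]
        exact ⟨hr1, hR1⟩
    _ = (ENNReal.ofReal r)⁻¹ * ∫⁻ z in {z : ℂ | r < ‖z‖ ∧ ‖z‖ < R}, G z := by
        congr 1
        exact (Complex.volume_preserving_equiv_real_prod.symm).setLIntegral_comp_preimage_emb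
          Complex.measurableEquivRealProd.symm.measurableEmbedding G _

lemma aux_annulus_vol {a b : ℝ} (ha : 0 ≤ a) (hab : a < b) :
    volume {z : ℂ | a < ‖z‖ ∧ ‖z‖ < b} ≤ ENNReal.ofReal ((b ^ 2 - a ^ 2) * Real.pi) := by
  have hb : 0 ≤ b := ha.trans hab.le
  have hsub : {z : ℂ | a < ‖z‖ ∧ ‖z‖ < b} ⊆ Metric.ball 0 b \ Metric.closedBall 0 a := by
    rintro z ⟨h1, h2⟩
    constructor
    · simpa [Metric.mem_ball] using h2
    · simp only [Metric.mem_closedBall, dist_zero_right, not_le]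
      exact h1
  refine (measure_mono hsub).trans ?_
  rw [measure_diff (Metric.closedBall_subset_ball hab)
    measurableSet_closedBall.nullMeasurableSet measure_closedBall_lt_top.ne,
    Complex.volume_ball, Complex.volume_closedBall]
  have hpi : (NNReal.pi : ℝ≥0∞) = ENNReal.ofReal Real.pi := by
    rw [← ENNReal.ofReal_coe_nnreal, NNReal.coe_real_pi]
  rw [hpi, ← ENNReal.ofReal_pow hb, ← ENNReal.ofReal_pow ha, ← ENNReal.ofReal_mul (by positivity),
    ← ENNReal.ofReal_mul (by positivity), ← ENNReal.ofReal_sub _ (by positivity)]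
  exact ENNReal.ofReal_le_ofReal (le_of_eq (by ring))

end AuxStmt6


/-- The length function `L_g(θ) = ∫_r^R |g'(ρ e^{iθ})| dρ`, valued in `[0,∞]`. -/
noncomputable def lengthFn (r R : ℝ) (g : ℂ → ℂ) (θ : ℝ) : ℝ≥0∞ :=
  ∫⁻ ρ in Set.Ioo r R, (‖deriv g ((ρ : ℂ) * Complex.exp ((θ : ℂ) * Complex.I))‖₊ : ℝ≥0∞)

/-- Let `0 < r < R`, `A = {r < |z| < R}`, and let `f n : A → ℂ` be holomorphic
functions converging locally uniformly on `A` to a holomorphic function `f`, with uniformly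
bounded `L²`-derivatives. Then the length functions `L_{f n}` and `L_f` are Lebesgue
integrable on `[0,2π]` (i.e. have finite integral) and `∫₀^{2π} |L_{f n} − L_f| dθ → 0`. -/
theorem stmt6 (r R : ℝ) (hr : 0 < r) (hrR : r < R)
    (f : ℕ → ℂ → ℂ) (flim : ℂ → ℂ)
    (hf : ∀ n, DifferentiableOn ℂ (f n) {z : ℂ | r < ‖z‖ ∧ ‖z‖ < R})
    (hflim : DifferentiableOn ℂ flim {z : ℂ | r < ‖z‖ ∧ ‖z‖ < R})
    (hconv : TendstoLocallyUniformlyOn f flim atTop {z : ℂ | r < ‖z‖ ∧ ‖z‖ < R})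
    (hbound : (⨆ n, ∫⁻ z in {z : ℂ | r < ‖z‖ ∧ ‖z‖ < R},
        (‖deriv (f n) z‖₊ : ℝ≥0∞) ^ 2) < ⊤) :
    (∀ n, ∫⁻ θ in Set.Ioo (0 : ℝ) (2 * Real.pi), lengthFn r R (f n) θ < ⊤) ∧
    (∫⁻ θ in Set.Ioo (0 : ℝ) (2 * Real.pi), lengthFn r R flim θ < ⊤) ∧
    Tendsto (fun n => ∫⁻ θ in Set.Ioo (0 : ℝ) (2 * Real.pi),
        ((lengthFn r R (f n) θ - lengthFn r R flim θ) +
          (lengthFn r R flim θ - lengthFn r R (f n) θ))) atTop (nhds 0) := by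
  have hπ := Real.pi_pos
  have hR0 : 0 < R := hr.trans hrR
  set A : Set ℂ := {z : ℂ | r < ‖z‖ ∧ ‖z‖ < R} with hA
  have hAopen : IsOpen A := by
    have : A = (fun z : ℂ => ‖z‖) ⁻¹' Ioo r R := rfl
    rw [this]
    exact isOpen_Ioo.preimage continuous_norm
  have hAmeas := hAopen.measurableSet
  have hAvol : volume A ≠ ∞ := by
    refine ne_of_lt (lt_of_le_of_lt (measure_mono ?_)
      (measure_ball_lt_top (x := (0 : ℂ)) (r := R)))
    rintro z ⟨-, h2⟩
    simpa [Metric.mem_ball] using h2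
  have measd : ∀ n, Measurable (deriv (f n)) := fun n => measurable_deriv _
  have measdl : Measurable (deriv flim) := measurable_deriv _
  set M : ℝ≥0∞ := ⨆ n, ∫⁻ z in A, (‖deriv (f n) z‖₊ : ℝ≥0∞) ^ 2 with hM
  have hMtop : M ≠ ∞ := hbound.ne
  have hMn : ∀ n, ∫⁻ z in A, (‖deriv (f n) z‖₊ : ℝ≥0∞) ^ 2 ≤ M := fun n =>
    le_iSup (fun n => ∫⁻ z in A, (‖deriv (f n) z‖₊ : ℝ≥0∞) ^ 2) n
  have hdconv : TendstoLocallyUniformlyOn (deriv ∘ f) (deriv flim) atTop A :=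
    hconv.deriv (Eventually.of_forall hf) hAopen
  have hr0 : ENNReal.ofReal r ≠ 0 := by
    simp [ENNReal.ofReal_eq_zero, not_le.2 hr]
  have hrtop : (ENNReal.ofReal r)⁻¹ ≠ ∞ := ENNReal.inv_ne_top.2 hr0
  -- L² bound on the limit derivative, via Fatou
  have hlim2 : ∫⁻ z in A, (‖deriv flim z‖₊ : ℝ≥0∞) ^ 2 ≤ M := by
    have hpt : ∀ᵐ z ∂volume.restrict A, (‖deriv flim z‖₊ : ℝ≥0∞) ^ 2
        = liminf (fun n => (‖deriv (f n) z‖₊ : ℝ≥0∞) ^ 2) atTop := by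
      refine (ae_restrict_mem hAmeas).mono fun z hz => ?_
      have h1 : Tendsto (fun n => deriv (f n) z) atTop (nhds (deriv flim z)) :=
        hdconv.tendsto_at hz
      have hcont : Continuous fun w : ℂ => ((‖w‖₊ : ℝ≥0∞)) ^ 2 :=
        (ENNReal.continuous_pow 2).comp (ENNReal.continuous_coe.comp continuous_nnnorm)
      exact ((hcont.tendsto _).comp h1).liminf_eq.symm
    calc ∫⁻ z in A, (‖deriv flim z‖₊ : ℝ≥0∞) ^ 2
        = ∫⁻ z in A, liminf (fun n => (‖deriv (f n) z‖₊ : ℝ≥0∞) ^ 2) atTop :=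
          lintegral_congr_ae hpt
      _ ≤ liminf (fun n => ∫⁻ z in A, (‖deriv (f n) z‖₊ : ℝ≥0∞) ^ 2) atTop :=
          lintegral_liminf_le fun n => ((measd n).nnnorm.coe_nnreal_ennreal).pow_const 2
      _ ≤ limsup (fun n => ∫⁻ z in A, (‖deriv (f n) z‖₊ : ℝ≥0∞) ^ 2) atTop :=
          liminf_le_limsup
      _ ≤ M := limsup_le_of_le (h := Eventually.of_forall hMn)
  -- finiteness
  have key_fin : ∀ g : ℂ → ℂ, Measurable (deriv g) →
      (∫⁻ z in A, (‖deriv g z‖₊ : ℝ≥0∞) ^ 2) ≤ M →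
      ∫⁻ θ in Ioo (0 : ℝ) (2 * Real.pi), lengthFn r R g θ < ⊤ := by
    intro g hg hg2
    have h1 : ∫⁻ θ in Ioo (0 : ℝ) (2 * Real.pi), lengthFn r R g θ
        ≤ (ENNReal.ofReal r)⁻¹ * ∫⁻ z in A, (‖deriv g z‖₊ : ℝ≥0∞) :=
      aux_polar_bound hr _ hg.nnnorm.coe_nnreal_ennreal
    have h2 : ∫⁻ z in A, (‖deriv g z‖₊ : ℝ≥0∞) ≤ volume A + M := by
      calc ∫⁻ z in A, (‖deriv g z‖₊ : ℝ≥0∞)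
          ≤ ∫⁻ z in A, (1 + (‖deriv g z‖₊ : ℝ≥0∞) ^ 2) := by
            refine lintegral_mono fun z => ?_
            simpa using aux_le_add_sq_mul_inv ((‖deriv g z‖₊ : ℝ≥0∞)) 1 one_ne_zero
              ENNReal.one_ne_top
        _ = volume A + ∫⁻ z in A, (‖deriv g z‖₊ : ℝ≥0∞) ^ 2 := by
            rw [lintegral_add_left measurable_const]
            simp
        _ ≤ volume A + M := add_le_add_right hg2 _
    refine lt_of_le_of_lt (h1.trans (mul_le_mul_right h2 _)) ?_
    exact ENNReal.mul_lt_top hrtop.lt_top (by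
      exact (ENNReal.add_lt_top.2 ⟨hAvol.lt_top, hMtop.lt_top⟩))
  -- the difference functions
  set Hfun : ℕ → ℂ → ℝ≥0∞ := fun n z => (‖deriv (f n) z - deriv flim z‖₊ : ℝ≥0∞) with hHfun
  have measH : ∀ n, Measurable (Hfun n) := fun n => ((measd n).sub measdl).nnnorm.coe_nnreal_ennreal
  -- main analytic step : L¹ convergence of the derivatives on A
  have hD : Tendsto (fun n => ∫⁻ z in A, Hfun n z) atTop (nhds 0) := by
    rw [ENNReal.tendsto_nhds_zero]
    intro ε hε
    set ε' : ℝ≥0∞ := min ε 1 with hε'def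
    have hε'0 : ε' ≠ 0 := (lt_min hε zero_lt_one).ne' 
    have hε'top : ε' ≠ ∞ := ne_top_of_le_ne_top ENNReal.one_ne_top (min_le_right _ _)
    have hε'le : ε' ≤ ε := min_le_left _ _
    suffices h : ∀ᶠ n in atTop, ∫⁻ z in A, Hfun n z ≤ ε' from
      h.mono fun n hn => hn.trans hε'le
    set C : ℝ≥0∞ := 8 * M + 1 with hCdef
    have hC0 : C ≠ 0 := by simp [hCdef]
    have hCtop : C ≠ ∞ := by
      refine ENNReal.add_ne_top.2 ⟨?_, ENNReal.one_ne_top⟩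
      exact ENNReal.mul_ne_top (by norm_num) hMtop
    have hH2 : ∀ n, ∫⁻ z in A, (Hfun n z) ^ 2 ≤ C := by
      intro n
      have hpt : ∀ z, (Hfun n z) ^ 2
          ≤ 4 * ((‖deriv (f n) z‖₊ : ℝ≥0∞) ^ 2 + (‖deriv flim z‖₊ : ℝ≥0∞) ^ 2) := by
        intro z
        have h5 : Hfun n z ≤ (‖deriv (f n) z‖₊ : ℝ≥0∞) + (‖deriv flim z‖₊ : ℝ≥0∞) := by
          simp only [hHfun]
          exact_mod_cast nnnorm_sub_le (deriv (f n) z) (deriv flim z)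
        refine le_trans ?_ (aux_sq_add _ _)
        gcongr
      calc ∫⁻ z in A, (Hfun n z) ^ 2
          ≤ ∫⁻ z in A, 4 * ((‖deriv (f n) z‖₊ : ℝ≥0∞) ^ 2 + (‖deriv flim z‖₊ : ℝ≥0∞) ^ 2) :=
            lintegral_mono hpt
        _ = 4 * ((∫⁻ z in A, (‖deriv (f n) z‖₊ : ℝ≥0∞) ^ 2)
              + ∫⁻ z in A, (‖deriv flim z‖₊ : ℝ≥0∞) ^ 2) := by
            rw [lintegral_const_mul' _ _ (by norm_num),
              lintegral_add_left (((measd n).nnnorm.coe_nnreal_ennreal).pow_const 2)]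
        _ ≤ 4 * (M + M) := mul_le_mul_right (add_le_add (hMn n) hlim2) _
        _ ≤ C := by
            rw [hCdef, show (4 : ℝ≥0∞) * (M + M) = 8 * M by ring]
            exact le_self_add
    set t : ℝ≥0∞ := 4 * C * ε'⁻¹ with htdef
    have ht0 : t ≠ 0 :=
      mul_ne_zero (mul_ne_zero (by norm_num) hC0) (ENNReal.inv_ne_zero.2 hε'top)
    have httop : t ≠ ∞ :=
      ENNReal.mul_ne_top (ENNReal.mul_ne_top (by norm_num) hCtop) (ENNReal.inv_ne_top.2 hε'0)
    have htC : C * t⁻¹ ≤ ε' / 4 := by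
      have h1 : t⁻¹ = 4⁻¹ * C⁻¹ * ε' := by
        rw [htdef, ENNReal.mul_inv (Or.inl (mul_ne_zero (by norm_num) hC0))
          (Or.inr (ENNReal.inv_ne_zero.2 hε'top)), inv_inv,
          ENNReal.mul_inv (Or.inl (by norm_num)) (Or.inl (by norm_num))]
      have h2 : C * t⁻¹ = ε' / 4 := by
        calc C * t⁻¹ = (C * C⁻¹) * (4⁻¹ * ε') := by rw [h1]; ring
          _ = 4⁻¹ * ε' := by rw [ENNReal.mul_inv_cancel hC0 hCtop, one_mul]
          _ = ε' / 4 := by rw [ENNReal.div_eq_inv_mul]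
      exact h2.le
    set c : ℝ := Real.pi * (2 * r + 2 * R) with hcdef
    have hc0 : 0 < c := by positivity
    set η : ℝ≥0∞ := ε' / 4 * t⁻¹ with hηdef
    have hη0 : η ≠ 0 := by
      refine mul_ne_zero ?_ (ENNReal.inv_ne_zero.2 httop)
      simp [ENNReal.div_eq_zero_iff, hε'0]
    have hηtop : η ≠ ∞ :=
      ENNReal.mul_ne_top (by simpa using ENNReal.div_lt_top hε'top (by norm_num) |>.ne)
        (ENNReal.inv_ne_top.2 ht0)
    have hηr : 0 < η.toReal := ENNReal.toReal_pos hη0 hηtop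
    set δ : ℝ := min ((R - r) / 4) (η.toReal / (2 * c)) with hδdef
    have hδ0 : 0 < δ := lt_min (by linarith) (div_pos hηr (by positivity))
    have hδle : δ ≤ (R - r) / 4 := min_le_left _ _
    have hδ1 : r + δ < R - δ := by linarith
    have hδη : ENNReal.ofReal (c * δ) ≤ η := by
      have h2 : c * δ ≤ η.toReal / 2 := by
        have h3 : δ ≤ η.toReal / (2 * c) := min_le_right _ _
        calc c * δ ≤ c * (η.toReal / (2 * c)) := by
              exact mul_le_mul_of_nonneg_left h3 hc0.le
          _ = η.toReal / 2 := by field_simp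
      calc ENNReal.ofReal (c * δ) ≤ ENNReal.ofReal η.toReal :=
            ENNReal.ofReal_le_ofReal (h2.trans (by linarith))
        _ = η := ENNReal.ofReal_toReal hηtop
    set K : Set ℂ := {z : ℂ | r + δ ≤ ‖z‖ ∧ ‖z‖ ≤ R - δ} with hKdef
    have hKc : IsCompact K := by
      refine (isCompact_closedBall (0 : ℂ) (R - δ)).of_isClosed_subset ?_ ?_
      · have : K = (fun z : ℂ => ‖z‖) ⁻¹' Icc (r + δ) (R - δ) := rfl
        rw [this]
        exact isClosed_Icc.preimage continuous_norm
      · rintro z ⟨-, h2⟩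
        simpa [Metric.mem_closedBall] using h2
    have hKA : K ⊆ A := by
      rintro z ⟨h1, h2⟩
      exact ⟨by linarith, by linarith⟩
    have hSvol : volume (A \ K) ≤ ENNReal.ofReal (c * δ) := by
      have hsub : A \ K ⊆ {z : ℂ | r < ‖z‖ ∧ ‖z‖ < r + δ}
          ∪ {z : ℂ | R - δ < ‖z‖ ∧ ‖z‖ < R} := by
        rintro z ⟨⟨h1, h2⟩, h3⟩
        simp only [hKdef, mem_setOf_eq, not_and, not_le] at h3
        rcases lt_or_ge ‖z‖ (r + δ) with h | h
        · exact Or.inl ⟨h1, h⟩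
        · exact Or.inr ⟨h3 h, h2⟩
      refine (measure_mono hsub).trans ((measure_union_le _ _).trans ?_)
      have b1 := aux_annulus_vol hr.le (show r < r + δ by linarith)
      have b2 := aux_annulus_vol (show (0 : ℝ) ≤ R - δ by linarith)
        (show R - δ < R by linarith)
      refine (add_le_add b1 b2).trans ?_
      rw [← ENNReal.ofReal_add (mul_nonneg (by nlinarith) hπ.le) (mul_nonneg (by nlinarith) hπ.le)]
      exact ENNReal.ofReal_le_ofReal (le_of_eq (by rw [hcdef]; ring))
    have hUK : TendstoUniformlyOn (deriv ∘ f) (deriv flim) atTop K :=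
      (tendstoLocallyUniformlyOn_iff_tendstoUniformlyOn_of_compact hKc).1 (hdconv.mono hKA)
    set w : ℝ≥0∞ := ε' / 4 * (volume A + 1)⁻¹ with hwdef
    have hA1 : volume A + 1 ≠ 0 := by simp
    have hA2 : volume A + 1 ≠ ∞ := ENNReal.add_ne_top.2 ⟨hAvol, ENNReal.one_ne_top⟩
    have hw0 : w ≠ 0 := by
      refine mul_ne_zero ?_ (ENNReal.inv_ne_zero.2 hA2)
      simp [ENNReal.div_eq_zero_iff, hε'0]
    have hwtop : w ≠ ∞ :=
      ENNReal.mul_ne_top (by simpa using ENNReal.div_lt_top hε'top (by norm_num) |>.ne)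
        (ENNReal.inv_ne_top.2 hA1)
    have hwr : 0 < w.toReal := ENNReal.toReal_pos hw0 hwtop
    have hev := Metric.tendstoUniformlyOn_iff.1 hUK w.toReal hwr
    refine hev.mono fun n hn => ?_
    have hA_split : ∫⁻ z in A, Hfun n z
        ≤ (∫⁻ z in A ∩ K, Hfun n z) + ∫⁻ z in A \ K, Hfun n z := by
      conv_lhs => rw [← Set.inter_union_diff A K]
      exact lintegral_union_le _ _ _
    have hbound1 : ∫⁻ z in A ∩ K, Hfun n z ≤ ε' / 4 := by
      have hp : ∀ z ∈ A ∩ K, Hfun n z ≤ w := by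
        intro z hz
        have h4 := hn z hz.2
        rw [dist_comm, dist_eq_norm] at h4
        calc (‖deriv (f n) z - deriv flim z‖₊ : ℝ≥0∞)
            = ENNReal.ofReal ‖deriv (f n) z - deriv flim z‖ :=
              (ofReal_norm_eq_enorm _).symm
          _ ≤ ENNReal.ofReal w.toReal := ENNReal.ofReal_le_ofReal h4.le
          _ = w := ENNReal.ofReal_toReal hwtop
      calc ∫⁻ z in A ∩ K, Hfun n z ≤ ∫⁻ _ in A ∩ K, w := setLIntegral_mono measurable_const hp
        _ = w * volume (A ∩ K) := setLIntegral_const _ _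
        _ ≤ w * (volume A + 1) := by
            gcongr
            exact le_trans (measure_mono inter_subset_left) le_self_add
        _ = ε' / 4 * ((volume A + 1)⁻¹ * (volume A + 1)) := by rw [hwdef]; ring
        _ = ε' / 4 := by rw [ENNReal.inv_mul_cancel hA1 hA2, mul_one]
    have hbound2 : ∫⁻ z in A \ K, Hfun n z ≤ ε' / 4 + ε' / 4 := by
      calc ∫⁻ z in A \ K, Hfun n z
          ≤ ∫⁻ z in A \ K, (t + (Hfun n z) ^ 2 * t⁻¹) :=
            lintegral_mono fun z => aux_le_add_sq_mul_inv _ t ht0 httop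
        _ = t * volume (A \ K) + (∫⁻ z in A \ K, (Hfun n z) ^ 2) * t⁻¹ := by
            rw [lintegral_add_left measurable_const,
              lintegral_mul_const' _ _ (ENNReal.inv_ne_top.2 ht0), setLIntegral_const]
        _ ≤ t * ENNReal.ofReal (c * δ) + C * t⁻¹ := by
            gcongr <;>
              first
                | exact hSvol
                | exact le_trans (lintegral_mono_set diff_subset) (hH2 n)
        _ ≤ ε' / 4 + ε' / 4 := by
            refine add_le_add ?_ htC
            calc t * ENNReal.ofReal (c * δ) ≤ t * η := mul_le_mul_right hδη _
              _ = ε' / 4 * (t * t⁻¹) := by rw [hηdef]; ring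
              _ = ε' / 4 := by rw [ENNReal.mul_inv_cancel ht0 httop, mul_one]
    have hquarter : ε' / 4 ≤ ε' / 2 := by
      rw [ENNReal.div_eq_inv_mul, ENNReal.div_eq_inv_mul]
      exact mul_le_mul_left (ENNReal.inv_le_inv.2 (by norm_num)) _
    calc ∫⁻ z in A, Hfun n z ≤ (∫⁻ z in A ∩ K, Hfun n z) + ∫⁻ z in A \ K, Hfun n z := hA_split
      _ ≤ ε' / 4 + (ε' / 4 + ε' / 4) := add_le_add hbound1 hbound2
      _ ≤ ε' / 2 + (ε' / 4 + ε' / 4) := add_le_add_left hquarter _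
      _ = ε' := aux_quarters ε'
  -- final assembly
  refine ⟨fun n => key_fin (f n) (measd n) (hMn n), key_fin flim measdl hlim2, ?_⟩
  have hb : ∀ n, (∫⁻ θ in Ioo (0 : ℝ) (2 * Real.pi),
      ((lengthFn r R (f n) θ - lengthFn r R flim θ)
        + (lengthFn r R flim θ - lengthFn r R (f n) θ)))
      ≤ 2 * ((ENNReal.ofReal r)⁻¹ * ∫⁻ z in A, Hfun n z) := by
    intro n
    have hpt : ∀ θ : ℝ, (lengthFn r R (f n) θ - lengthFn r R flim θ)
        + (lengthFn r R flim θ - lengthFn r R (f n) θ)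
        ≤ 2 * ∫⁻ ρ in Ioo r R, Hfun n ((ρ : ℂ) * Complex.exp ((θ : ℂ) * Complex.I)) := by
      intro θ
      set cθ : ℂ := Complex.exp ((θ : ℂ) * Complex.I) with hcθ
      have hmc : Measurable fun ρ : ℝ => (ρ : ℂ) * cθ := by fun_prop
      have hmeas1 : Measurable fun ρ : ℝ => (‖deriv flim ((ρ : ℂ) * cθ)‖₊ : ℝ≥0∞) :=
        (measdl.comp hmc).nnnorm.coe_nnreal_ennreal
      have hmeas2 : Measurable fun ρ : ℝ => (‖deriv (f n) ((ρ : ℂ) * cθ)‖₊ : ℝ≥0∞) :=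
        ((measd n).comp hmc).nnnorm.coe_nnreal_ennreal
      have tri : ∀ (u v : ℂ → ℂ), Measurable (fun ρ : ℝ => (‖deriv v ((ρ:ℂ) * cθ)‖₊ : ℝ≥0∞)) →
          (∫⁻ ρ in Ioo r R, (‖deriv u ((ρ : ℂ) * cθ)‖₊ : ℝ≥0∞))
          ≤ (∫⁻ ρ in Ioo r R, (‖deriv v ((ρ : ℂ) * cθ)‖₊ : ℝ≥0∞))
            + ∫⁻ ρ in Ioo r R, (‖deriv u ((ρ : ℂ) * cθ) - deriv v ((ρ : ℂ) * cθ)‖₊ : ℝ≥0∞) := by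
        intro u v hv
        rw [← lintegral_add_left hv]
        refine lintegral_mono fun ρ => ?_
        have h3 : ‖deriv u ((ρ : ℂ) * cθ)‖₊
            ≤ ‖deriv v ((ρ : ℂ) * cθ)‖₊ + ‖deriv u ((ρ : ℂ) * cθ) - deriv v ((ρ : ℂ) * cθ)‖₊ := by
          simpa using nnnorm_add_le (deriv v ((ρ : ℂ) * cθ))
            (deriv u ((ρ : ℂ) * cθ) - deriv v ((ρ : ℂ) * cθ))
        exact ENNReal.coe_le_coe.2 h3
      have d1 : lengthFn r R (f n) θ - lengthFn r R flim θ
          ≤ ∫⁻ ρ in Ioo r R, Hfun n ((ρ : ℂ) * cθ) := by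
        refine tsub_le_iff_right.2 ((tri (f n) flim hmeas1).trans_eq (add_comm _ _))
      have d2 : lengthFn r R flim θ - lengthFn r R (f n) θ
          ≤ ∫⁻ ρ in Ioo r R, Hfun n ((ρ : ℂ) * cθ) := by
        have h5 := tri flim (f n) hmeas2
        simp only [show ∀ ρ : ℝ, ‖deriv flim ((ρ : ℂ) * cθ) - deriv (f n) ((ρ : ℂ) * cθ)‖₊
            = ‖deriv (f n) ((ρ : ℂ) * cθ) - deriv flim ((ρ : ℂ) * cθ)‖₊ from
          fun ρ => by rw [← nnnorm_neg, neg_sub]] at h5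
        exact tsub_le_iff_right.2 (h5.trans_eq (add_comm _ _))
      calc (lengthFn r R (f n) θ - lengthFn r R flim θ)
          + (lengthFn r R flim θ - lengthFn r R (f n) θ)
          ≤ (∫⁻ ρ in Ioo r R, Hfun n ((ρ : ℂ) * cθ))
            + ∫⁻ ρ in Ioo r R, Hfun n ((ρ : ℂ) * cθ) := add_le_add d1 d2
        _ = 2 * ∫⁻ ρ in Ioo r R, Hfun n ((ρ : ℂ) * cθ) := (two_mul _).symm
    calc ∫⁻ θ in Ioo (0 : ℝ) (2 * Real.pi),
        ((lengthFn r R (f n) θ - lengthFn r R flim θ)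
          + (lengthFn r R flim θ - lengthFn r R (f n) θ))
        ≤ ∫⁻ θ in Ioo (0 : ℝ) (2 * Real.pi),
            2 * ∫⁻ ρ in Ioo r R, Hfun n ((ρ : ℂ) * Complex.exp ((θ : ℂ) * Complex.I)) :=
          lintegral_mono hpt
      _ = 2 * ∫⁻ θ in Ioo (0 : ℝ) (2 * Real.pi),
            ∫⁻ ρ in Ioo r R, Hfun n ((ρ : ℂ) * Complex.exp ((θ : ℂ) * Complex.I)) :=
          lintegral_const_mul' _ _ ENNReal.ofNat_ne_top
      _ ≤ 2 * ((ENNReal.ofReal r)⁻¹ * ∫⁻ z in A, Hfun n z) :=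
          mul_le_mul_right (aux_polar_bound hr _ (measH n)) _
  have h0 : Tendsto (fun n => 2 * ((ENNReal.ofReal r)⁻¹ * ∫⁻ z in A, Hfun n z))
      atTop (nhds 0) := by
    have h1 := ENNReal.Tendsto.const_mul hD (Or.inr hrtop)
    have h2 := ENNReal.Tendsto.const_mul h1 (Or.inr (ENNReal.ofNat_ne_top : (2 : ℝ≥0∞) ≠ ∞))
    simpa using h2
  exact tendsto_of_tendsto_of_tendsto_of_le_of_le tendsto_const_nhds h0
    (fun n => zero_le) hb
end

section
/- Let 0 < r < R, A = {z ∈ ℂ : r < |z| < R}, and let f_n : A → ℂ be holomorphic functions converging locally uniformly on A to a holomorphic function f : A → ℂ, with sup_n ∫_A |f_n'(z)|² dλ(z) < ∞. Then there exist a subset E ⊆ [0, 2π] of full Lebesgue measure and a strictly increasing sequence of indices (n_k) such that: (a) for every θ ∈ E and every g ∈ {f} ∪ {f_{n_k} : k ≥ 1}, the limits lim_{ρ → R⁻} g(ρ·e^{iθ}) and lim_{ρ → r⁺} g(ρ·e^{iθ}) exist in ℂ; (b) for every θ ∈ E, f_{n_k} converges to f uniformly on the radial segment {ρ·e^{iθ}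 : r < ρ < R} as k → ∞. -/
open Filter MeasureTheory Set Real
open scoped ENNReal NNReal Real

noncomputable section
namespace Stmt7

def eθ (θ : ℝ) : ℂ := Complex.exp ((θ : ℂ) * Complex.I)

lemma norm_eθ (θ : ℝ) : ‖eθ θ‖ = 1 := Complex.norm_exp_ofReal_mul_I θ

lemma nnnorm_eθ (θ : ℝ) : ‖eθ θ‖₊ = 1 := by
  ext; simpa using norm_eθ θ

def Aset (r R : ℝ) : Set ℂ := {z : ℂ | r < ‖z‖ ∧ ‖z‖ < R}

lemma isOpen_Aset (r R : ℝ) : IsOpen (Aset r R) := by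
  have : Aset r R = (‖·‖) ⁻¹' (Set.Ioo r R) := by
    ext z; simp [Aset, Set.mem_Ioo]
  rw [this]
  exact (isOpen_Ioo).preimage continuous_norm

lemma norm_mul_eθ {ρ : ℝ} (hρ : 0 ≤ ρ) (θ : ℝ) : ‖(ρ : ℂ) * eθ θ‖ = ρ := by
  rw [norm_mul, norm_eθ, mul_one, Complex.norm_real, Real.norm_eq_abs, abs_of_nonneg hρ]

lemma mem_Aset {r R ρ : ℝ} (hr : 0 < r) (h1 : r < ρ) (h2 : ρ < R) (θ : ℝ) :
    (ρ : ℂ) * eθ θ ∈ Aset r R := by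
  have : ‖(ρ : ℂ) * eθ θ‖ = ρ := norm_mul_eθ (le_of_lt (hr.trans h1)) θ
  exact ⟨by rw [this]; exact h1, by rw [this]; exact h2⟩

/-- radial energy of `g` in direction `θ` -/
def G (r R : ℝ) (g : ℂ → ℂ) (θ : ℝ) : ℝ≥0∞ :=
  ∫⁻ ρ in Set.Ioo r R, (‖deriv g ((ρ : ℂ) * eθ θ)‖₊ : ℝ≥0∞) ^ 2

lemma measurable_radial (g : ℂ → ℂ) (θ : ℝ) :
    Measurable fun ρ : ℝ => (‖deriv g ((ρ : ℂ) * eθ θ)‖₊ : ℝ≥0∞) ^ 2 := by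
  have h1 : Measurable (deriv g) := measurable_deriv g
  have h2 : Continuous fun ρ : ℝ => (ρ : ℂ) * eθ θ := by continuity
  exact ((h1.comp h2.measurable).nnnorm.coe_nnreal_ennreal).pow_const 2

/-- oscillation estimate along a radius -/
lemma osc {r R : ℝ} (hr : 0 < r) {g : ℂ → ℂ} (hg : DifferentiableOn ℂ g (Aset r R))
    {θ a b : ℝ} (hG : G r R g θ ≠ ⊤) (ha : r < a) (hab : a ≤ b) (hb : b < R) :
    ‖g ((b : ℂ) * eθ θ) - g ((a : ℂ) * eθ θ)‖ ≤ Real.sqrt ((b - a) * (G r R g θ).toReal) := by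
  set e := eθ θ
  set u : ℝ → ℂ := fun ρ => e * deriv g ((ρ : ℂ) * e) with hu
  have hIoc : Set.Ioc a b ⊆ Set.Ioo r R := fun x hx => ⟨ha.trans_le (le_of_lt hx.1), lt_of_le_of_lt hx.2 hb⟩
  -- derivative at each point of [a,b]
  have hderiv : ∀ ρ ∈ Set.uIcc a b, HasDerivAt (fun ρ : ℝ => g ((ρ : ℂ) * e)) (u ρ) ρ := by
    intro ρ hρ
    rw [Set.uIcc_of_le hab] at hρ
    have hρA : (ρ : ℂ) * e ∈ Aset r R :=
      mem_Aset hr (ha.trans_le hρ.1) (lt_of_le_of_lt hρ.2 hb) θ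
    have hgd : DifferentiableAt ℂ g ((ρ : ℂ) * e) :=
      (hg ((ρ : ℂ) * e) hρA).differentiableAt ((isOpen_Aset r R).mem_nhds hρA)
    have hL : HasDerivAt (fun ρ : ℝ => (ρ : ℂ) * e) e ρ := by
      simpa using (Complex.ofRealCLM.hasDerivAt (x := ρ)).mul_const e
    have h2 : HasDerivAt (fun ρ : ℝ => g ((ρ : ℂ) * e)) (e * deriv g ((ρ : ℂ) * e)) ρ := by
      have := HasDerivAt.scomp (𝕜 := ℝ) (𝕜' := ℂ) ρ hgd.hasDerivAt hL
      simpa [smul_eq_mul, mul_comm, Function.comp_def] using this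
    exact h2
  have hmeas_u : Measurable u := by
    have h1 : Measurable (deriv g) := measurable_deriv g
    have h2 : Continuous fun ρ : ℝ => (ρ : ℂ) * e := by continuity
    exact (h1.comp h2.measurable).const_mul e
  have hnn : ∀ ρ : ℝ, (‖u ρ‖₊ : ℝ≥0∞) = ‖deriv g ((ρ : ℂ) * e)‖₊ := by
    intro ρ
    rw [hu]
    simp only [nnnorm_mul]
    push_cast
    rw [nnnorm_eθ]
    simp
  -- L² on Ioc a b bounded by G
  have hL2 : ∫⁻ ρ in Set.Ioc a b, (‖deriv g ((ρ : ℂ) * e)‖₊ : ℝ≥0∞) ^ 2 ≤ G r R g θ := by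
    exact lintegral_mono_set' (HasSubset.Subset.eventuallyLE hIoc)
  -- integrable on Ioc a b
  have hfin : HasFiniteIntegral u (volume.restrict (Set.Ioc a b)) := by
    rw [hasFiniteIntegral_def]
    have hle : ∀ ρ : ℝ, (‖u ρ‖₊ : ℝ≥0∞) ≤ 1 + (‖deriv g ((ρ : ℂ) * e)‖₊ : ℝ≥0∞) ^ 2 := by
      intro ρ
      rw [hnn ρ]
      set x : ℝ≥0∞ := (‖deriv g ((ρ : ℂ) * e)‖₊ : ℝ≥0∞)
      rcases le_total x 1 with h | h
      · exact h.trans (le_add_of_nonneg_right zero_le)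
      · calc x = x * 1 := (mul_one x).symm
          _ ≤ x * x := by gcongr
          _ ≤ 1 + x ^ 2 := by rw [← pow_two]; exact le_add_of_nonneg_left zero_le
    calc ∫⁻ ρ in Set.Ioc a b, (‖u ρ‖₊ : ℝ≥0∞)
        ≤ ∫⁻ ρ in Set.Ioc a b, (1 + (‖deriv g ((ρ : ℂ) * e)‖₊ : ℝ≥0∞) ^ 2) :=
          lintegral_mono fun ρ => hle ρ
      _ = volume (Set.Ioc a b) + ∫⁻ ρ in Set.Ioc a b, (‖deriv g ((ρ : ℂ) * e)‖₊ : ℝ≥0∞) ^ 2 := by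
          rw [lintegral_add_left measurable_const]
          simp
      _ < ⊤ := by
          apply ENNReal.add_lt_top.2
          refine ⟨by simp, lt_of_le_of_lt hL2 (lt_top_iff_ne_top.2 hG)⟩
  have hint : IntervalIntegrable u volume a b := by
    rw [intervalIntegrable_iff_integrableOn_Ioc_of_le hab]
    exact ⟨hmeas_u.aestronglyMeasurable, hfin⟩
  have hFTC : ∫ ρ in a..b, u ρ = g ((b : ℂ) * e) - g ((a : ℂ) * e) :=
    intervalIntegral.integral_eq_sub_of_hasDerivAt hderiv hint
  -- Hölder bound in ℝ≥0∞
  have hhold : (‖g ((b : ℂ) * e) - g ((a : ℂ) * e)‖₊ : ℝ≥0∞) ^ 2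
      ≤ ENNReal.ofReal (b - a) * G r R g θ := by
    have h1 : (‖g ((b : ℂ) * e) - g ((a : ℂ) * e)‖₊ : ℝ≥0∞)
        ≤ ∫⁻ ρ in Set.Ioc a b, (‖u ρ‖₊ : ℝ≥0∞) := by
      rw [← hFTC, intervalIntegral.integral_of_le hab]
      exact enorm_integral_le_lintegral_enorm _
    set ν := volume.restrict (Set.Ioc a b)
    have hconj : Real.HolderConjugate 2 2 := Real.HolderConjugate.two_two
    have h2 := ENNReal.lintegral_mul_le_Lp_mul_Lq ν hconj
      (f := fun ρ => (‖u ρ‖₊ : ℝ≥0∞)) (g := fun _ => 1)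
      (hmeas_u.nnnorm.coe_nnreal_ennreal.aemeasurable) aemeasurable_const
    simp only [Pi.mul_apply, mul_one, ENNReal.one_rpow, lintegral_one] at h2
    have hsq : ∀ x : ℝ≥0∞, x ^ (2 : ℝ) = x ^ (2 : ℕ) := fun x => by
      rw [← ENNReal.rpow_natCast]; norm_num
    have hG2 : ∫⁻ ρ, (‖u ρ‖₊ : ℝ≥0∞) ^ (2 : ℝ) ∂ν ≤ G r R g θ := by
      calc ∫⁻ ρ, (‖u ρ‖₊ : ℝ≥0∞) ^ (2 : ℝ) ∂ν
          = ∫⁻ ρ in Set.Ioc a b, (‖deriv g ((ρ : ℂ) * e)‖₊ : ℝ≥0∞) ^ 2 := by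
            apply lintegral_congr; intro ρ; rw [hsq, hnn ρ]
        _ ≤ G r R g θ := hL2
    have hν : ν Set.univ = ENNReal.ofReal (b - a) := by
      simp [ν, Real.volume_Ioc]
    calc (‖g ((b : ℂ) * e) - g ((a : ℂ) * e)‖₊ : ℝ≥0∞) ^ 2
        ≤ (∫⁻ ρ, (‖u ρ‖₊ : ℝ≥0∞) ∂ν) ^ 2 := by gcongr
      _ ≤ ((∫⁻ ρ, (‖u ρ‖₊ : ℝ≥0∞) ^ (2 : ℝ) ∂ν) ^ (1 / 2 : ℝ) * (ν Set.univ) ^ (1 / 2 : ℝ)) ^ 2 := by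
          gcongr
      _ = (∫⁻ ρ, (‖u ρ‖₊ : ℝ≥0∞) ^ (2 : ℝ) ∂ν) * ν Set.univ := by
          rw [mul_pow, ← hsq, ← hsq, ← ENNReal.rpow_mul, ← ENNReal.rpow_mul]
          norm_num
      _ ≤ G r R g θ * ENNReal.ofReal (b - a) := by rw [hν]; gcongr
      _ = ENNReal.ofReal (b - a) * G r R g θ := mul_comm _ _
  -- convert to real
  have hfin2 : ENNReal.ofReal (b - a) * G r R g θ ≠ ⊤ :=
    ENNReal.mul_ne_top ENNReal.ofReal_ne_top hG
  have hreal : ‖g ((b : ℂ) * e) - g ((a : ℂ) * e)‖ ^ 2 ≤ (b - a) * (G r R g θ).toReal := by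
    have := ENNReal.toReal_mono hfin2 hhold
    rw [ENNReal.toReal_pow, ENNReal.toReal_mul, ENNReal.toReal_ofReal (sub_nonneg.2 hab)] at this
    simpa [coe_nnnorm] using this
  have h0 : (0 : ℝ) ≤ ‖g ((b : ℂ) * e) - g ((a : ℂ) * e)‖ := norm_nonneg _
  exact (Real.le_sqrt h0 (le_trans (by positivity) hreal)).2 hreal


lemma polar_symm (p : ℝ × ℝ) : Complex.polarCoord.symm p = (p.1 : ℂ) * eθ p.2 := by
  rw [Complex.polarCoord_symm_apply, eθ, Complex.exp_mul_I, ← Complex.ofReal_cos,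
    ← Complex.ofReal_sin]

lemma measurable_F (g : ℂ → ℂ) : Measurable fun z : ℂ => (‖deriv g z‖₊ : ℝ≥0∞) ^ 2 :=
  ((measurable_deriv g).nnnorm.coe_nnreal_ennreal).pow_const 2

lemma slice_bound {r R : ℝ} (hr : 0 < r) (g : ℂ → ℂ) :
    ENNReal.ofReal r * ∫⁻ θ in Set.Ioo (-π) π, G r R g θ
      ≤ ∫⁻ z in Aset r R, (‖deriv g z‖₊ : ℝ≥0∞) ^ 2 := by
  set F : ℂ → ℝ≥0∞ := fun z => (‖deriv g z‖₊ : ℝ≥0∞) ^ 2 with hF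
  have hFmeas : Measurable F := measurable_F g
  set S : Set (ℝ × ℝ) := Set.Ioo r R ×ˢ Set.Ioo (-π) π with hSdef
  have hS : MeasurableSet S := measurableSet_Ioo.prod measurableSet_Ioo
  -- the derivative of polarCoord.symm
  set B : ℝ × ℝ → ℝ × ℝ →L[ℝ] ℝ × ℝ := fun p =>
    LinearMap.toContinuousLinearMap (Matrix.toLin (Module.Basis.finTwoProd ℝ) (Module.Basis.finTwoProd ℝ)
      !![Real.cos p.2, -p.1 * Real.sin p.2; Real.sin p.2, p.1 * Real.cos p.2]) with hB
  have hder : ∀ p ∈ S, HasFDerivWithinAt polarCoord.symm (B p) S p := fun p _ =>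
    (hasFDerivAt_polarCoord_symm p).hasFDerivWithinAt
  have B_det : ∀ p, (B p).det = p.1 := by
    intro p
    conv_rhs => rw [← one_mul p.1, ← Real.cos_sq_add_sin_sq p.2]
    simp only [hB, neg_mul, LinearMap.det_toContinuousLinearMap, LinearMap.det_toLin,
      Matrix.det_fin_two_of, sub_neg_eq_add]
    ring
  have hinj : Set.InjOn polarCoord.symm S := by
    apply polarCoord.symm.injOn.mono
    rw [OpenPartialHomeomorph.symm_source, polarCoord_target]
    intro p hp
    exact ⟨hr.trans hp.1.1, hp.2⟩
  -- change of variables in ℝ × ℝ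
  have hcv := lintegral_image_eq_lintegral_abs_det_fderiv_mul volume hS hder hinj
    (F ∘ Complex.measurableEquivRealProd.symm)
  -- transfer the image integral to ℂ
  have htrans := (Complex.volume_preserving_equiv_real_prod.symm).setLIntegral_comp_emb
    Complex.measurableEquivRealProd.symm.measurableEmbedding F (polarCoord.symm '' S)
  -- the image in ℂ is inside the annulus
  have himg : Complex.measurableEquivRealProd.symm '' (polarCoord.symm '' S) ⊆ Aset r R := by
    rintro z ⟨q, ⟨p, hp, rfl⟩, rfl⟩
    have : Complex.measurableEquivRealProd.symm (polarCoord.symm p) = Complex.polarCoord.symm p :=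
      rfl
    rw [this, polar_symm]
    exact mem_Aset hr hp.1.1 hp.1.2 _
  -- main chain
  have key : ∫⁻ p in S, ENNReal.ofReal p.1 * F ((p.1 : ℂ) * eθ p.2)
      ≤ ∫⁻ z in Aset r R, F z := by
    have e1 : ∫⁻ p in S, ENNReal.ofReal p.1 * F ((p.1 : ℂ) * eθ p.2)
        = ∫⁻ p in S, ENNReal.ofReal |(B p).det| *
            (F ∘ Complex.measurableEquivRealProd.symm) (polarCoord.symm p) := by
      apply setLIntegral_congr_fun hS
      intro p hp
      have h1 : (F ∘ Complex.measurableEquivRealProd.symm) (polarCoord.symm p)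
          = F (Complex.polarCoord.symm p) := rfl
      dsimp only
      rw [h1, polar_symm, B_det, abs_of_pos (hr.trans hp.1.1)]
    rw [e1, ← hcv]
    rw [show (F ∘ ⇑Complex.measurableEquivRealProd.symm) =
      fun a => F (Complex.measurableEquivRealProd.symm a) from rfl, htrans]
    exact lintegral_mono_set' (HasSubset.Subset.eventuallyLE himg)
  -- Tonelli
  have hcont : Continuous fun p : ℝ × ℝ => (p.1 : ℂ) * eθ p.2 := by
    unfold eθ; fun_prop
  have hmeasH : Measurable fun p : ℝ × ℝ => F ((p.1 : ℂ) * eθ p.2) :=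
    hFmeas.comp hcont.measurable
  have hmeas2 : ∀ ρ : ℝ, Measurable fun θ : ℝ => F ((ρ : ℂ) * eθ θ) := by
    intro ρ
    have : Continuous fun θ : ℝ => (ρ : ℂ) * eθ θ := by unfold eθ; fun_prop
    exact hFmeas.comp this.measurable
  set ν₁ := volume.restrict (Set.Ioo r R)
  set ν₂ := volume.restrict (Set.Ioo (-π) π)
  have hiter : ∫⁻ p in S, ENNReal.ofReal p.1 * F ((p.1 : ℂ) * eθ p.2)
      = ∫⁻ ρ, (∫⁻ θ, ENNReal.ofReal ρ * F ((ρ : ℂ) * eθ θ) ∂ν₂) ∂ν₁ := by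
    rw [hSdef, show (volume : Measure (ℝ × ℝ)).restrict (Set.Ioo r R ×ˢ Set.Ioo (-π) π)
        = ν₁.prod ν₂ by rw [Measure.volume_eq_prod, Measure.prod_restrict]]
    exact lintegral_prod _ ((ENNReal.measurable_ofReal.comp measurable_fst).mul
      hmeasH).aemeasurable
  have hstep : ∫⁻ ρ, (∫⁻ θ, ENNReal.ofReal r * F ((ρ : ℂ) * eθ θ) ∂ν₂) ∂ν₁
      ≤ ∫⁻ ρ, (∫⁻ θ, ENNReal.ofReal ρ * F ((ρ : ℂ) * eθ θ) ∂ν₂) ∂ν₁ := by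
    apply setLIntegral_mono' measurableSet_Ioo
    intro ρ hρ
    apply lintegral_mono
    intro θ
    exact mul_le_mul_left (ENNReal.ofReal_le_ofReal hρ.1.le) _
  have hconst : ∫⁻ ρ, (∫⁻ θ, ENNReal.ofReal r * F ((ρ : ℂ) * eθ θ) ∂ν₂) ∂ν₁
      = ENNReal.ofReal r * ∫⁻ θ, (∫⁻ ρ, F ((ρ : ℂ) * eθ θ) ∂ν₁) ∂ν₂ := by
    have h1 : ∀ ρ : ℝ, ∫⁻ θ, ENNReal.ofReal r * F ((ρ : ℂ) * eθ θ) ∂ν₂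
        = ENNReal.ofReal r * ∫⁻ θ, F ((ρ : ℂ) * eθ θ) ∂ν₂ := fun ρ =>
      lintegral_const_mul _ (hmeas2 ρ)
    simp_rw [h1]
    rw [lintegral_const_mul]
    · congr 1
      exact lintegral_lintegral_swap hmeasH.aemeasurable
    · exact Measurable.lintegral_prod_right hmeasH
  calc ENNReal.ofReal r * ∫⁻ θ in Set.Ioo (-π) π, G r R g θ
      = ∫⁻ ρ, (∫⁻ θ, ENNReal.ofReal r * F ((ρ : ℂ) * eθ θ) ∂ν₂) ∂ν₁ := by
        rw [hconst]; rfl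
    _ ≤ ∫⁻ ρ, (∫⁻ θ, ENNReal.ofReal ρ * F ((ρ : ℂ) * eθ θ) ∂ν₂) ∂ν₁ := hstep
    _ = ∫⁻ p in S, ENNReal.ofReal p.1 * F ((p.1 : ℂ) * eθ p.2) := hiter.symm
    _ ≤ ∫⁻ z in Aset r R, F z := key


lemma measurable_G (r R : ℝ) (g : ℂ → ℂ) : Measurable (G r R g) := by
  unfold G
  have hcont : Continuous fun p : ℝ × ℝ => (p.2 : ℂ) * eθ p.1 := by
    unfold eθ; fun_prop
  exact Measurable.lintegral_prod_right ((measurable_F g).comp hcont.measurable)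

/-- Cauchy-criterion radial limit, generic version -/
lemma radial_limit_aux {r R : ℝ} (hr : 0 < r) (hrR : r < R) {g : ℂ → ℂ}
    (hg : DifferentiableOn ℂ g (Aset r R)) {θ : ℝ} (hG : G r R g θ ≠ ⊤)
    {l : Filter ℝ} [l.NeBot] (hl : ∀ δ > (0:ℝ), ∃ s ∈ l, s ⊆ Set.Ioo r R ∧
      ∀ x ∈ s, ∀ y ∈ s, |x - y| ≤ δ) :
    ∃ c : ℂ, Tendsto (fun ρ : ℝ => g ((ρ : ℂ) * eθ θ)) l (nhds c) := by
  set h := fun ρ : ℝ => g ((ρ : ℂ) * eθ θ) with hh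
  have hC : Cauchy (Filter.map h l) := by
    rw [Metric.cauchy_iff]
    refine ⟨Filter.map_neBot, ?_⟩
    intro ε hε
    set Gr := (G r R g θ).toReal with hGr'
    have hGr : 0 ≤ Gr := ENNReal.toReal_nonneg
    set δ := ε ^ 2 / (2 * (Gr + 1)) with hδ'
    have hδpos : 0 < δ := by positivity
    obtain ⟨s, hsl, hsub, hdiam⟩ := hl δ hδpos
    refine ⟨h '' s, Filter.image_mem_map hsl, ?_⟩
    rintro x ⟨ρ, hρ, rfl⟩ y ⟨ρ', hρ', rfl⟩
    have key : ∀ p q : ℝ, p ∈ s → q ∈ s → p ≤ q → dist (h q) (h p) < ε := by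
      intro p q hp hq hpq
      rw [dist_eq_norm]
      have hb := osc hr hg hG (hsub hp).1 hpq (hsub hq).2
      refine lt_of_le_of_lt hb ?_
      rw [Real.sqrt_lt' hε]
      have h1 : q - p ≤ δ := by
        have := hdiam q hq p hp
        rw [abs_sub_le_iff] at this
        exact this.1
      have h2 : (q - p) * Gr ≤ δ * Gr := by
        apply mul_le_mul_of_nonneg_right h1 hGr
      calc (q - p) * Gr ≤ δ * Gr := h2
        _ = ε ^ 2 * (Gr / (2 * (Gr + 1))) := by rw [hδ']; ring
        _ < ε ^ 2 * 1 := by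
            apply mul_lt_mul_of_pos_left _ (by positivity)
            rw [div_lt_one (by positivity)]
            nlinarith
        _ = ε ^ 2 := mul_one _
    rcases le_total ρ ρ' with hle | hle
    · rw [dist_comm]; exact key ρ ρ' hρ hρ' hle
    · exact key ρ' ρ hρ' hρ hle
  obtain ⟨c, hc⟩ := CompleteSpace.complete hC
  exact ⟨c, hc⟩

lemma radial_limit_outer {r R : ℝ} (hr : 0 < r) (hrR : r < R) {g : ℂ → ℂ}
    (hg : DifferentiableOn ℂ g (Aset r R)) {θ : ℝ} (hG : G r R g θ ≠ ⊤) :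
    ∃ c : ℂ, Tendsto (fun ρ : ℝ => g ((ρ : ℂ) * eθ θ))
      (nhdsWithin R (Set.Iio R)) (nhds c) := by
  apply radial_limit_aux hr hrR hg hG
  intro δ hδ
  refine ⟨Set.Ioo (max r (R - δ)) R, Ioo_mem_nhdsLT (by simp [hrR, hδ]), ?_, ?_⟩
  · exact Set.Ioo_subset_Ioo (le_max_left _ _) le_rfl
  · intro x hx y hy
    have h1 : R - δ < x := lt_of_le_of_lt (le_max_right _ _) hx.1
    have h2 : R - δ < y := lt_of_le_of_lt (le_max_right _ _) hy.1
    rw [abs_sub_le_iff]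
    constructor <;> nlinarith [hx.2, hy.2]

lemma radial_limit_inner {r R : ℝ} (hr : 0 < r) (hrR : r < R) {g : ℂ → ℂ}
    (hg : DifferentiableOn ℂ g (Aset r R)) {θ : ℝ} (hG : G r R g θ ≠ ⊤) :
    ∃ c : ℂ, Tendsto (fun ρ : ℝ => g ((ρ : ℂ) * eθ θ))
      (nhdsWithin r (Set.Ioi r)) (nhds c) := by
  apply radial_limit_aux hr hrR hg hG
  intro δ hδ
  refine ⟨Set.Ioo r (min R (r + δ)), Ioo_mem_nhdsGT (by simp [hrR, hδ]), ?_, ?_⟩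
  · exact Set.Ioo_subset_Ioo le_rfl (min_le_left _ _)
  · intro x hx y hy
    have h1 : x < r + δ := lt_of_lt_of_le hx.2 (min_le_right _ _)
    have h2 : y < r + δ := lt_of_lt_of_le hy.2 (min_le_right _ _)
    rw [abs_sub_le_iff]
    constructor <;> nlinarith [hx.1, hy.1]

lemma fatou_energy {r R : ℝ} (f : ℕ → ℂ → ℂ) (flim : ℂ → ℂ)
    (hf : ∀ n, DifferentiableOn ℂ (f n) (Aset r R))
    (hconv : TendstoLocallyUniformlyOn f flim atTop (Aset r R)) :
    ∫⁻ z in Aset r R, (‖deriv flim z‖₊ : ℝ≥0∞) ^ 2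
      ≤ ⨆ n, ∫⁻ z in Aset r R, (‖deriv (f n) z‖₊ : ℝ≥0∞) ^ 2 := by
  have hderiv := hconv.deriv (Filter.Eventually.of_forall hf) (isOpen_Aset r R)
  have hc : Continuous fun w : ℂ => (‖w‖₊ : ℝ≥0∞) ^ 2 :=
    (ENNReal.continuous_pow 2).comp (ENNReal.continuous_coe.comp continuous_nnnorm)
  have hpt : ∀ z ∈ Aset r R, Filter.liminf
      (fun n => (‖deriv (f n) z‖₊ : ℝ≥0∞) ^ 2) atTop = (‖deriv flim z‖₊ : ℝ≥0∞) ^ 2 := by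
    intro z hz
    have h1 : Tendsto (fun n => deriv (f n) z) atTop (nhds (deriv flim z)) :=
      hderiv.tendsto_at hz
    exact ((hc.tendsto _).comp h1).liminf_eq
  calc ∫⁻ z in Aset r R, (‖deriv flim z‖₊ : ℝ≥0∞) ^ 2
      = ∫⁻ z in Aset r R, Filter.liminf (fun n => (‖deriv (f n) z‖₊ : ℝ≥0∞) ^ 2) atTop := by
        apply setLIntegral_congr_fun (isOpen_Aset r R).measurableSet
        exact fun z hz => (hpt z hz).symm
    _ ≤ Filter.liminf (fun n => ∫⁻ z in Aset r R, (‖deriv (f n) z‖₊ : ℝ≥0∞) ^ 2) atTop :=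
        lintegral_liminf_le fun n => measurable_F (f n)
    _ ≤ ⨆ n, ∫⁻ z in Aset r R, (‖deriv (f n) z‖₊ : ℝ≥0∞) ^ 2 := by
        rw [Filter.liminf_eq_iSup_iInf_of_nat]
        exact iSup_le fun n => le_trans (iInf₂_le n le_rfl)
          (le_iSup (fun m => ∫⁻ z in Aset r R, (‖deriv (f m) z‖₊ : ℝ≥0∞) ^ 2) n)


lemma eθ_periodic (θ : ℝ) : eθ (θ - 2 * π) = eθ θ := by
  unfold eθ
  push_cast
  rw [sub_mul, Complex.exp_sub, Complex.exp_two_pi_mul_I, div_one]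

lemma G_congr {r R : ℝ} (g : ℂ → ℂ) {θ ψ : ℝ} (h : eθ θ = eθ ψ) :
    G r R g θ = G r R g ψ := by
  unfold G; rw [h]

end Stmt7

open Stmt7 in
/-- Let `0 < r < R`, `A = {r < |z| < R}`, and let `f n : A → ℂ` be holomorphic
functions converging locally uniformly on `A` to a holomorphic `f`, with uniformly bounded
`L²`-derivatives. Then there is a full measure set `E ⊆ [0,2π]` and a strictly increasing
sequence of indices `(n k)` such that:
(a) for every `θ ∈ E` and every `g ∈ {f} ∪ {f (n k)}`, the radial limits of `g` at both
    ends of the radius in direction `θ` exist;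
(b) for every `θ ∈ E`, `f (n k) → f` uniformly on the open radial segment in direction `θ`. -/
theorem stmt7 (r R : ℝ) (hr : 0 < r) (hrR : r < R)
    (f : ℕ → ℂ → ℂ) (flim : ℂ → ℂ)
    (hf : ∀ n, DifferentiableOn ℂ (f n) {z : ℂ | r < ‖z‖ ∧ ‖z‖ < R})
    (hflim : DifferentiableOn ℂ flim {z : ℂ | r < ‖z‖ ∧ ‖z‖ < R})
    (hconv : TendstoLocallyUniformlyOn f flim atTop {z : ℂ | r < ‖z‖ ∧ ‖z‖ < R})
    (hbound : (⨆ n, ∫⁻ z in {z : ℂ | r < ‖z‖ ∧ ‖z‖ < R},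
        (‖deriv (f n) z‖₊ : ℝ≥0∞) ^ 2) < ⊤) :
    ∃ E ⊆ Set.Icc (0 : ℝ) (2 * Real.pi),
      volume (Set.Icc (0 : ℝ) (2 * Real.pi) \ E) = 0 ∧
      ∃ nk : ℕ → ℕ, StrictMono nk ∧
        (∀ θ ∈ E, ∀ g : ℂ → ℂ, (g = flim ∨ ∃ k : ℕ, g = f (nk k)) →
          (∃ c : ℂ, Tendsto (fun ρ : ℝ => g ((ρ : ℂ) * Complex.exp ((θ : ℂ) * Complex.I)))
            (nhdsWithin R (Set.Iio R)) (nhds c)) ∧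
          (∃ c : ℂ, Tendsto (fun ρ : ℝ => g ((ρ : ℂ) * Complex.exp ((θ : ℂ) * Complex.I)))
            (nhdsWithin r (Set.Ioi r)) (nhds c))) ∧
        (∀ θ ∈ E, TendstoUniformlyOn (fun k => f (nk k)) flim atTop
          {z : ℂ | ∃ ρ : ℝ, r < ρ ∧ ρ < R ∧ z = (ρ : ℂ) * Complex.exp ((θ : ℂ) * Complex.I)}) := by
  classical
  have hAeq : {z : ℂ | r < ‖z‖ ∧ ‖z‖ < R} = Aset r R := rfl
  rw [hAeq] at hf hflim hconv hbound
  set π' := Real.pi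
  have hπ : 0 < π' := Real.pi_pos
  set M : ℝ≥0∞ := ⨆ n, ∫⁻ z in Aset r R, (‖deriv (f n) z‖₊ : ℝ≥0∞) ^ 2 with hM
  -- shrinking widths
  set δ : ℕ → ℝ := fun k => min ((R - r) / 4) ((8 : ℝ)⁻¹ ^ k) with hδ
  have hδpos : ∀ k, 0 < δ k := fun k => lt_min (by linarith) (by positivity)
  have hδ1 : ∀ k, δ k ≤ (R - r) / 4 := fun k => min_le_left _ _
  have hδ2 : ∀ k, δ k ≤ (8 : ℝ)⁻¹ ^ k := fun k => min_le_right _ _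
  -- compact annuli
  set K : ℕ → Set ℂ := fun k => {z : ℂ | r + δ k ≤ ‖z‖ ∧ ‖z‖ ≤ R - δ k} with hK
  have hKsub : ∀ k, K k ⊆ Aset r R := by
    intro k z hz
    exact ⟨lt_of_lt_of_le (by linarith [hδpos k]) hz.1,
      lt_of_le_of_lt hz.2 (by linarith [hδpos k])⟩
  have hKcompact : ∀ k, IsCompact (K k) := by
    intro k
    have hclosed : IsClosed (K k) := by
      have : K k = (‖·‖) ⁻¹' (Set.Icc (r + δ k) (R - δ k)) := by
        ext z; simp [hK, Set.mem_Icc]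
      rw [this]
      exact isClosed_Icc.preimage continuous_norm
    have hbdd : Bornology.IsBounded (K k) := by
      apply Bornology.IsBounded.subset (Metric.isBounded_closedBall (x := (0:ℂ)) (r := R - δ k))
      intro z hz
      simpa [Metric.mem_closedBall, Complex.dist_eq] using hz.2
    exact Metric.isCompact_of_isClosed_isBounded hclosed hbdd
  -- uniform convergence on the compact annuli; choose the subsequence
  have hev : ∀ k : ℕ, ∃ N : ℕ, ∀ n ≥ N, ∀ z ∈ K k, dist (flim z) (f n z) < (2⁻¹ : ℝ) ^ k := by
    intro k
    have huk : TendstoUniformlyOn f flim atTop (K k) :=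
      (tendstoLocallyUniformlyOn_iff_forall_isCompact (isOpen_Aset r R)).1 hconv (K k)
        (hKsub k) (hKcompact k)
    have := (Metric.tendstoUniformlyOn_iff.1 huk) ((2⁻¹ : ℝ) ^ k) (by positivity)
    exact Filter.eventually_atTop.1 this
  set N : ℕ → ℕ := fun k => (hev k).choose with hN
  have hNspec : ∀ k, ∀ n ≥ N k, ∀ z ∈ K k, dist (flim z) (f n z) < (2⁻¹ : ℝ) ^ k :=
    fun k => (hev k).choose_spec
  set nk : ℕ → ℕ := fun k => Nat.rec (N 0) (fun k ih => max (N (k + 1)) (ih + 1)) k with hnk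
  have hnk_succ : ∀ k, nk (k + 1) = max (N (k + 1)) (nk k + 1) := fun k => rfl
  have hmono : StrictMono nk := by
    apply strictMono_nat_of_lt_succ
    intro k
    rw [hnk_succ]
    exact lt_of_lt_of_le (Nat.lt_succ_self _) (le_max_right _ _)
  have hnkN : ∀ k, N k ≤ nk k := by
    intro k
    cases k with
    | zero => exact le_rfl
    | succ m => rw [hnk_succ]; exact le_max_left _ _
  have hKdist : ∀ k, ∀ z ∈ K k, dist (flim z) (f (nk k) z) < (2⁻¹ : ℝ) ^ k :=
    fun k => hNspec k (nk k) (hnkN k)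
  -- energy integrals
  have hr0 : (ENNReal.ofReal r) ≠ 0 := (ENNReal.ofReal_pos.2 hr).ne'
  have hrtop : (ENNReal.ofReal r) ≠ ⊤ := ENNReal.ofReal_ne_top
  have hdiv : ∀ x y : ℝ≥0∞, ENNReal.ofReal r * x ≤ y → x ≤ (ENNReal.ofReal r)⁻¹ * y := by
    intro x y h
    calc x = (ENNReal.ofReal r)⁻¹ * (ENNReal.ofReal r * x) := by
          rw [← mul_assoc, ENNReal.inv_mul_cancel hr0 hrtop, one_mul]
      _ ≤ (ENNReal.ofReal r)⁻¹ * y := mul_le_mul_right h _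
  have hGn_int : ∀ n, ∫⁻ θ in Set.Ioo (-π') π', G r R (f n) θ ≤ (ENNReal.ofReal r)⁻¹ * M := by
    intro n
    apply hdiv
    exact (slice_bound hr (f n)).trans (le_iSup
      (fun n => ∫⁻ z in Aset r R, (‖deriv (f n) z‖₊ : ℝ≥0∞) ^ 2) n)
  have hGf_int : ∫⁻ θ in Set.Ioo (-π') π', G r R flim θ ≤ (ENNReal.ofReal r)⁻¹ * M := by
    apply hdiv
    exact (slice_bound hr flim).trans (fatou_energy f flim hf hconv)
  -- the control function T
  set T : ℝ → ℝ≥0∞ := fun θ =>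
    G r R flim θ + ∑' k : ℕ, (2⁻¹ : ℝ≥0∞) ^ k * G r R (f (nk k)) θ with hT
  have hTmeas : Measurable T := by
    apply (measurable_G r R flim).add
    exact Measurable.ennreal_tsum fun k => (measurable_G r R (f (nk k))).const_mul _
  have hTint : ∫⁻ θ in Set.Ioo (-π') π', T θ < ⊤ := by
    have htsum : ∫⁻ θ in Set.Ioo (-π') π', (∑' k : ℕ, (2⁻¹ : ℝ≥0∞) ^ k * G r R (f (nk k)) θ)
        = ∑' k : ℕ, (2⁻¹ : ℝ≥0∞) ^ k * ∫⁻ θ in Set.Ioo (-π') π', G r R (f (nk k)) θ := by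
      rw [lintegral_tsum fun k => ((measurable_G r R (f (nk k))).const_mul _).aemeasurable]
      congr 1
      ext k
      exact lintegral_const_mul _ (measurable_G r R (f (nk k)))
    have hgeo : ∑' k : ℕ, (2⁻¹ : ℝ≥0∞) ^ k = 2 := by
      rw [ENNReal.tsum_geometric, ENNReal.one_sub_inv_two, inv_inv]
    have hMlt : M < ⊤ := hbound
    have hfin : (ENNReal.ofReal r)⁻¹ * M ≠ ⊤ :=
      ENNReal.mul_ne_top (ENNReal.inv_ne_top.2 hr0) hMlt.ne
    calc ∫⁻ θ in Set.Ioo (-π') π', T θ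
        = (∫⁻ θ in Set.Ioo (-π') π', G r R flim θ)
          + ∫⁻ θ in Set.Ioo (-π') π', (∑' k : ℕ, (2⁻¹ : ℝ≥0∞) ^ k * G r R (f (nk k)) θ) := by
          rw [hT]
          exact lintegral_add_left (measurable_G r R flim) _
      _ ≤ (ENNReal.ofReal r)⁻¹ * M + ∑' k : ℕ, (2⁻¹ : ℝ≥0∞) ^ k * ((ENNReal.ofReal r)⁻¹ * M) := by
          rw [htsum]
          exact add_le_add hGf_int (ENNReal.tsum_le_tsum fun k =>
            mul_le_mul_right (hGn_int (nk k)) _)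
      _ = (ENNReal.ofReal r)⁻¹ * M + 2 * ((ENNReal.ofReal r)⁻¹ * M) := by
          rw [ENNReal.tsum_mul_right, hgeo]
      _ < ⊤ := by
          apply ENNReal.add_lt_top.2
          exact ⟨lt_top_iff_ne_top.2 hfin, ENNReal.mul_lt_top (by norm_num)
            (lt_top_iff_ne_top.2 hfin)⟩
  -- the bad set
  set Bad : Set ℝ := {θ : ℝ | T θ = ⊤} with hBadDef
  have hBadMeas : MeasurableSet Bad := hTmeas (measurableSet_singleton ⊤)
  have hBadNull : volume (Bad ∩ Set.Ioo (-π') π') = 0 := by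
    have h1 : ∀ᵐ θ ∂(volume.restrict (Set.Ioo (-π') π')), T θ < ⊤ :=
      ae_lt_top hTmeas hTint.ne
    have h2 : (volume.restrict (Set.Ioo (-π') π')) Bad = 0 := by
      rw [← nonpos_iff_eq_zero]
      refine le_trans (measure_mono ?_) (le_of_eq (ae_iff.1 h1))
      intro θ hθ
      simp only [Set.mem_setOf_eq, not_lt, top_le_iff]
      exact hθ
    rwa [Measure.restrict_apply hBadMeas] at h2
  -- helper: extract a representative angle with finite control
  have hψ : ∀ θ : ℝ, θ ∈ Set.Icc (0:ℝ) (2*π') →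
      ((θ < π' ∧ T θ ≠ ⊤) ∨ (π' < θ ∧ T (θ - 2*π') ≠ ⊤)) →
      ∃ ψ : ℝ, eθ θ = eθ ψ ∧ T ψ ≠ ⊤ := by
    intro θ _ hc
    rcases hc with ⟨_, hne⟩ | ⟨_, hne⟩
    · exact ⟨θ, rfl, hne⟩
    · exact ⟨θ - 2*π', (eθ_periodic θ).symm, hne⟩
  have hGkle : ∀ (k : ℕ) (ψ : ℝ), G r R (f (nk k)) ψ ≤ (2:ℝ≥0∞)^k * T ψ := by
    intro k ψ
    have h1 : (2⁻¹:ℝ≥0∞)^k * G r R (f (nk k)) ψ ≤ T ψ :=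
      le_add_left (ENNReal.le_tsum k)
    calc G r R (f (nk k)) ψ
        = (2:ℝ≥0∞)^k * ((2⁻¹:ℝ≥0∞)^k * G r R (f (nk k)) ψ) := by
          rw [← mul_assoc, ← mul_pow, ENNReal.mul_inv_cancel two_ne_zero ENNReal.ofNat_ne_top,
            one_pow, one_mul]
      _ ≤ (2:ℝ≥0∞)^k * T ψ := mul_le_mul_right h1 _
  -- the set E
  set E : Set ℝ := {θ : ℝ | θ ∈ Set.Icc (0:ℝ) (2*π') ∧
    ((θ < π' ∧ T θ ≠ ⊤) ∨ (π' < θ ∧ T (θ - 2*π') ≠ ⊤))} with hE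
  have hEsub : E ⊆ Set.Icc (0:ℝ) (2*π') := fun θ hθ => hθ.1
  have hnull : volume (Set.Icc (0:ℝ) (2*π') \ E) = 0 := by
    have hsub : Set.Icc (0:ℝ) (2*π') \ E ⊆
        ({π'} ∪ (Bad ∩ Set.Ioo (-π') π')) ∪ ((fun x => x + 2*π') '' (Bad ∩ Set.Ioo (-π') π')) := by
      intro θ hθ
      obtain ⟨hIcc, hnE⟩ := hθ
      rcases lt_trichotomy θ π' with hlt | heq | hgt
      · left; right
        refine ⟨?_, lt_of_lt_of_le (neg_lt_zero.2 hπ) hIcc.1, hlt⟩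
        by_contra hne
        exact hnE ⟨hIcc, Or.inl ⟨hlt, hne⟩⟩
      · left; left; exact heq
      · right
        refine ⟨θ - 2*π', ⟨?_, ?_, ?_⟩, by ring⟩
        · by_contra hne
          exact hnE ⟨hIcc, Or.inr ⟨hgt, hne⟩⟩
        · linarith
        · linarith [hIcc.2]
    apply measure_mono_null hsub
    apply measure_union_null
    · apply measure_union_null
      · exact Real.volume_singleton
      · exact hBadNull
    · rw [Set.image_add_right, measure_preimage_add_right]
      exact hBadNull
  refine ⟨E, hEsub, hnull, nk, hmono, ?_, ?_⟩
  · -- part (a): radial limits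
    intro θ hθ g hg
    obtain ⟨ψ, hψeq, hTψ⟩ := hψ θ hθ.1 hθ.2
    have hGfne : G r R flim θ ≠ ⊤ := by
      rw [G_congr flim hψeq]
      exact ne_top_of_le_ne_top hTψ le_self_add
    have hGkne : ∀ k, G r R (f (nk k)) θ ≠ ⊤ := by
      intro k
      rw [G_congr (f (nk k)) hψeq]
      exact ne_top_of_le_ne_top
        (ENNReal.mul_ne_top (ENNReal.pow_ne_top ENNReal.ofNat_ne_top) hTψ) (hGkle k ψ)
    rcases hg with rfl | ⟨k, rfl⟩
    · exact ⟨radial_limit_outer hr hrR hflim hGfne, radial_limit_inner hr hrR hflim hGfne⟩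
    · exact ⟨radial_limit_outer hr hrR (hf (nk k)) (hGkne k),
        radial_limit_inner hr hrR (hf (nk k)) (hGkne k)⟩
  · -- part (b): uniform convergence on the radius
    intro θ hθ
    obtain ⟨ψ, hψeq, hTψ⟩ := hψ θ hθ.1 hθ.2
    set Tr := (T ψ).toReal with hTrdef
    have hTrnn : 0 ≤ Tr := ENNReal.toReal_nonneg
    have hGfne : G r R flim θ ≠ ⊤ := by
      rw [G_congr flim hψeq]
      exact ne_top_of_le_ne_top hTψ le_self_add
    have hGfR : (G r R flim θ).toReal ≤ Tr := by
      rw [G_congr flim hψeq]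
      exact ENNReal.toReal_mono hTψ le_self_add
    have hGkne : ∀ k, G r R (f (nk k)) θ ≠ ⊤ := by
      intro k
      rw [G_congr (f (nk k)) hψeq]
      exact ne_top_of_le_ne_top
        (ENNReal.mul_ne_top (ENNReal.pow_ne_top ENNReal.ofNat_ne_top) hTψ) (hGkle k ψ)
    have hGkR : ∀ k, (G r R (f (nk k)) θ).toReal ≤ 2^k * Tr := by
      intro k
      rw [G_congr (f (nk k)) hψeq]
      have := ENNReal.toReal_mono
        (ENNReal.mul_ne_top (ENNReal.pow_ne_top ENNReal.ofNat_ne_top) hTψ) (hGkle k ψ)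
      rwa [ENNReal.toReal_mul, ENNReal.toReal_pow, ENNReal.toReal_ofNat] at this
    -- sqrt computations
    have hs0 : ∀ k : ℕ, ((2⁻¹:ℝ)^k)^2 = (4⁻¹:ℝ)^k := by
      intro k
      rw [← pow_mul, mul_comm, pow_mul]
      norm_num
    have hs1 : ∀ k : ℕ, Real.sqrt ((8⁻¹:ℝ)^k * Tr) ≤ (2⁻¹:ℝ)^k * Real.sqrt Tr := by
      intro k
      have h1 : (8⁻¹:ℝ)^k * Tr ≤ ((2⁻¹:ℝ)^k)^2 * Tr := by
        apply mul_le_mul_of_nonneg_right _ hTrnn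
        rw [hs0]
        exact pow_le_pow_left₀ (by norm_num) (by norm_num) k
      calc Real.sqrt ((8⁻¹:ℝ)^k * Tr) ≤ Real.sqrt (((2⁻¹:ℝ)^k)^2 * Tr) := Real.sqrt_le_sqrt h1
        _ = (2⁻¹:ℝ)^k * Real.sqrt Tr := by
            rw [Real.sqrt_mul (sq_nonneg _), Real.sqrt_sq (by positivity)]
    have hs2 : ∀ k : ℕ, Real.sqrt ((8⁻¹:ℝ)^k * (2^k * Tr)) ≤ (2⁻¹:ℝ)^k * Real.sqrt Tr := by
      intro k
      have heq : (8⁻¹:ℝ)^k * (2^k * Tr) = ((2⁻¹:ℝ)^k)^2 * Tr := by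
        have e1 : (8⁻¹:ℝ)^k * 2^k = (4⁻¹:ℝ)^k := by rw [← mul_pow]; norm_num
        rw [← mul_assoc, e1, hs0]
      rw [heq, Real.sqrt_mul (sq_nonneg _), Real.sqrt_sq (by positivity)]
    -- pointwise bound
    have hbk : ∀ k : ℕ, ∀ z ∈ {z : ℂ | ∃ ρ : ℝ, r < ρ ∧ ρ < R ∧
        z = (ρ:ℂ) * Complex.exp ((θ:ℂ) * Complex.I)},
        dist (flim z) (f (nk k) z) ≤ (2⁻¹:ℝ)^k * (1 + 2 * Real.sqrt Tr) := by
      rintro k z ⟨ρ, hρ1, hρ2, rfl⟩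
      have hosc2 : ∀ (g : ℂ → ℂ), DifferentiableOn ℂ g (Aset r R) → G r R g θ ≠ ⊤ →
          ∀ C : ℝ, (G r R g θ).toReal ≤ C →
          ∀ a b : ℝ, r < a → a ≤ b → b < R → b - a ≤ δ k →
          ‖g ((b:ℂ) * eθ θ) - g ((a:ℂ) * eθ θ)‖ ≤ Real.sqrt ((8⁻¹:ℝ)^k * C) := by
        intro g hg hGne C hC a b ha hab hb hba
        refine (osc hr hg hGne ha hab hb).trans (Real.sqrt_le_sqrt ?_)
        have h8 : (b - a : ℝ) ≤ (8⁻¹:ℝ)^k := hba.trans (by simpa using hδ2 k)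
        exact mul_le_mul h8 hC ENNReal.toReal_nonneg (by positivity)
      have hρ0 : (0:ℝ) ≤ ρ := le_of_lt (hr.trans hρ1)
      have hsqTn : (0:ℝ) ≤ Real.sqrt Tr := Real.sqrt_nonneg _
      have h2k0 : (0:ℝ) < (2⁻¹:ℝ)^k := by positivity
      rcases le_or_gt ρ (R - δ k) with hρR | hρR
      · rcases le_or_gt (r + δ k) ρ with hρr | hρr
        · -- middle region
          have hzK : (ρ:ℂ) * eθ θ ∈ K k := by
            constructor <;> rw [norm_mul_eθ hρ0 θ] <;> assumption
          have hd := hKdist k _ hzK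
          calc dist (flim ((ρ:ℂ) * Complex.exp ((θ:ℂ) * Complex.I)))
                (f (nk k) ((ρ:ℂ) * Complex.exp ((θ:ℂ) * Complex.I))) ≤ (2⁻¹:ℝ)^k := le_of_lt hd
            _ ≤ (2⁻¹:ℝ)^k * (1 + 2 * Real.sqrt Tr) := by nlinarith
        · -- near the inner boundary : ρ < r + δ k
          set a := r + δ k with ha'
          have har : r < a := by simp only [ha']; linarith [hδpos k]
          have haR : a < R := by simp only [ha']; linarith [hδ1 k]
          have hn : ‖(a:ℂ) * eθ θ‖ = a := norm_mul_eθ (le_of_lt (hr.trans har)) θ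
          have haK : (a:ℂ) * eθ θ ∈ K k :=
            ⟨by rw [hn, ha'], by rw [hn, ha']; linarith [hδ1 k]⟩
          have h1 := hosc2 flim hflim hGfne Tr hGfR ρ a hρ1 (le_of_lt hρr) haR (by simp only [ha']; linarith)
          have h2 := hosc2 (f (nk k)) (hf (nk k)) (hGkne k) (2^k * Tr) (hGkR k) ρ a hρ1
            (le_of_lt hρr) haR (by simp only [ha']; linarith)
          have h3 := hKdist k _ haK
          have htri := dist_triangle4 (flim ((ρ:ℂ) * eθ θ)) (flim ((a:ℂ) * eθ θ))
            (f (nk k) ((a:ℂ) * eθ θ)) (f (nk k) ((ρ:ℂ) * eθ θ))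
          have e1 : dist (flim ((ρ:ℂ) * eθ θ)) (flim ((a:ℂ) * eθ θ))
              = ‖flim ((a:ℂ) * eθ θ) - flim ((ρ:ℂ) * eθ θ)‖ := by
            rw [dist_eq_norm, norm_sub_rev]
          have e2 : dist (f (nk k) ((a:ℂ) * eθ θ)) (f (nk k) ((ρ:ℂ) * eθ θ))
              = ‖f (nk k) ((a:ℂ) * eθ θ) - f (nk k) ((ρ:ℂ) * eθ θ)‖ := dist_eq_norm _ _
          have hb1 := (hs1 k)
          have hb2 := (hs2 k)
          calc dist (flim ((ρ:ℂ) * Complex.exp ((θ:ℂ) * Complex.I)))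
                (f (nk k) ((ρ:ℂ) * Complex.exp ((θ:ℂ) * Complex.I)))
              ≤ dist (flim ((ρ:ℂ) * eθ θ)) (flim ((a:ℂ) * eθ θ))
                + dist (flim ((a:ℂ) * eθ θ)) (f (nk k) ((a:ℂ) * eθ θ))
                + dist (f (nk k) ((a:ℂ) * eθ θ)) (f (nk k) ((ρ:ℂ) * eθ θ)) := htri
            _ ≤ Real.sqrt ((8⁻¹:ℝ)^k * Tr) + (2⁻¹:ℝ)^k + Real.sqrt ((8⁻¹:ℝ)^k * (2^k * Tr)) := by
                rw [e1, e2]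
                exact add_le_add (add_le_add h1 (le_of_lt h3)) h2
            _ ≤ (2⁻¹:ℝ)^k * (1 + 2 * Real.sqrt Tr) := by nlinarith
      · -- near the outer boundary : R - δ k < ρ
        set a := R - δ k with ha'
        have har : r < a := by simp only [ha']; linarith [hδ1 k]
        have haR : a < R := by simp only [ha']; linarith [hδpos k]
        have hn : ‖(a:ℂ) * eθ θ‖ = a := norm_mul_eθ (le_of_lt (hr.trans har)) θ
        have haK : (a:ℂ) * eθ θ ∈ K k :=
          ⟨by rw [hn, ha']; linarith [hδ1 k], by rw [hn, ha']⟩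
        have h1 := hosc2 flim hflim hGfne Tr hGfR a ρ har (le_of_lt hρR) hρ2 (by simp only [ha']; linarith)
        have h2 := hosc2 (f (nk k)) (hf (nk k)) (hGkne k) (2^k * Tr) (hGkR k) a ρ har
          (le_of_lt hρR) hρ2 (by simp only [ha']; linarith)
        have h3 := hKdist k _ haK
        have htri := dist_triangle4 (flim ((ρ:ℂ) * eθ θ)) (flim ((a:ℂ) * eθ θ))
          (f (nk k) ((a:ℂ) * eθ θ)) (f (nk k) ((ρ:ℂ) * eθ θ))
        have e1 : dist (flim ((ρ:ℂ) * eθ θ)) (flim ((a:ℂ) * eθ θ))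
            = ‖flim ((ρ:ℂ) * eθ θ) - flim ((a:ℂ) * eθ θ)‖ := dist_eq_norm _ _
        have e2 : dist (f (nk k) ((a:ℂ) * eθ θ)) (f (nk k) ((ρ:ℂ) * eθ θ))
            = ‖f (nk k) ((ρ:ℂ) * eθ θ) - f (nk k) ((a:ℂ) * eθ θ)‖ := by
          rw [dist_eq_norm, norm_sub_rev]
        calc dist (flim ((ρ:ℂ) * Complex.exp ((θ:ℂ) * Complex.I)))
              (f (nk k) ((ρ:ℂ) * Complex.exp ((θ:ℂ) * Complex.I)))
            ≤ dist (flim ((ρ:ℂ) * eθ θ)) (flim ((a:ℂ) * eθ θ))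
              + dist (flim ((a:ℂ) * eθ θ)) (f (nk k) ((a:ℂ) * eθ θ))
              + dist (f (nk k) ((a:ℂ) * eθ θ)) (f (nk k) ((ρ:ℂ) * eθ θ)) := htri
          _ ≤ Real.sqrt ((8⁻¹:ℝ)^k * Tr) + (2⁻¹:ℝ)^k + Real.sqrt ((8⁻¹:ℝ)^k * (2^k * Tr)) := by
              rw [e1, e2]
              exact add_le_add (add_le_add h1 (le_of_lt h3)) h2
          _ ≤ (2⁻¹:ℝ)^k * (1 + 2 * Real.sqrt Tr) := by nlinarith [hs1 k, hs2 k]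
    -- conclude
    rw [Metric.tendstoUniformlyOn_iff]
    intro ε hε
    have hb0 : Tendsto (fun k : ℕ => (2⁻¹:ℝ)^k * (1 + 2 * Real.sqrt Tr)) atTop (nhds 0) := by
      have h1 : Tendsto (fun k : ℕ => (2⁻¹:ℝ)^k) atTop (nhds 0) :=
        tendsto_pow_atTop_nhds_zero_of_lt_one (by norm_num) (by norm_num)
      simpa using h1.mul_const (1 + 2 * Real.sqrt Tr)
    filter_upwards [hb0.eventually_lt_const hε] with k hk
    intro z hz
    exact lt_of_le_of_lt (hbk k z hz) hk

end
end

section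
/- Let m ≥ 1 be an integer and a ∈ 𝔻. Set X = (m−1)|a|² + (m+1). Then X² − 4m²|a|² ≥ 0, and the point w = 2am / (X + √(X² − 4m²|a|²)) satisfies |w| < 1, the derivative of B(z) = z^m·(z − a)/(1 − conj(a)·z) vanishes at w, and every z ∈ 𝔻 with B'(z) = 0 equals either w or 0. -/
/-- Let `m ≥ 1` and `a ∈ 𝔻`. Set `X = (m−1)|a|² + (m+1)`. Then
`X² − 4m²|a|² ≥ 0`, and `w = 2am/(X + √(X² − 4m²|a|²))` satisfies `|w| < 1`, the
derivative of `B(z) = z^m (z − a)/(1 − conj a · z)` vanishes at `w`, and every zero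
of `B'` in `𝔻` equals `w` or `0`. -/
theorem stmt8 (m : ℕ) (hm : 1 ≤ m) (a : ℂ) (ha : ‖a‖ < 1) :
    0 ≤ (((m : ℝ) - 1) * ‖a‖ ^ 2 + ((m : ℝ) + 1)) ^ 2 - 4 * (m : ℝ) ^ 2 * ‖a‖ ^ 2 ∧
    (let X : ℝ := ((m : ℝ) - 1) * ‖a‖ ^ 2 + ((m : ℝ) + 1)
     let w : ℂ := 2 * a * (m : ℂ) /
        ((X + Real.sqrt (X ^ 2 - 4 * (m : ℝ) ^ 2 * ‖a‖ ^ 2) : ℝ) : ℂ)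
     ‖w‖ < 1 ∧
     deriv (fun z : ℂ => z ^ m * ((z - a) / (1 - (starRingEnd ℂ) a * z))) w = 0 ∧
     ∀ z : ℂ, ‖z‖ < 1 →
        deriv (fun z : ℂ => z ^ m * ((z - a) / (1 - (starRingEnd ℂ) a * z))) z = 0 →
        z = w ∨ z = 0) := by
  obtain ⟨n, rfl⟩ : ∃ n, m = n + 1 := ⟨m - 1, (Nat.succ_pred_eq_of_pos hm).symm⟩
  set A : ℂ := (starRingEnd ℂ) a with hA
  set t : ℝ := ‖a‖ with htdef
  have ht0 : 0 ≤ t := norm_nonneg a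
  set X : ℝ := (((n + 1 : ℕ) : ℝ) - 1) * t ^ 2 + (((n + 1 : ℕ) : ℝ) + 1) with hXdef
  have hmR : (1 : ℝ) ≤ ((n + 1 : ℕ) : ℝ) := by exact_mod_cast hm
  -- key inequality : 2 m t < X
  have hX2m : 2 * ((n + 1 : ℕ) : ℝ) * t < X := by
    have h1 : 0 ≤ (((n + 1 : ℕ) : ℝ) - 1) * (1 - t) ^ 2 :=
      mul_nonneg (by linarith) (sq_nonneg _)
    nlinarith [h1]
  have hD : 0 ≤ X ^ 2 - 4 * ((n + 1 : ℕ) : ℝ) ^ 2 * t ^ 2 := by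
    nlinarith [hX2m, mul_nonneg (mul_nonneg (by norm_num : (0:ℝ) ≤ 2) (by positivity : (0:ℝ) ≤ ((n + 1 : ℕ) : ℝ))) ht0]
  refine ⟨hD, ?_⟩
  set s : ℝ := Real.sqrt (X ^ 2 - 4 * ((n + 1 : ℕ) : ℝ) ^ 2 * t ^ 2) with hsdef
  have hs0 : 0 ≤ s := Real.sqrt_nonneg _
  have hs2 : s ^ 2 = X ^ 2 - 4 * ((n + 1 : ℕ) : ℝ) ^ 2 * t ^ 2 := Real.sq_sqrt hD
  have hSpos : 0 < X + s := by
    have : 0 ≤ 2 * ((n + 1 : ℕ) : ℝ) * t := by positivity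
    linarith
  set S : ℝ := X + s with hSdef
  set w : ℂ := 2 * a * ((n + 1 : ℕ) : ℂ) / ((S : ℝ) : ℂ) with hwdef
  have hSne : ((S : ℝ) : ℂ) ≠ 0 := by
    exact_mod_cast (Complex.ofReal_ne_zero.mpr hSpos.ne')
  -- conjugate identity
  have hc : A * a = ((t : ℝ) : ℂ) ^ 2 := by
    rw [hA]; exact_mod_cast Complex.conj_mul' a
  -- norm of w
  have hnw : ‖w‖ = 2 * t * ((n + 1 : ℕ) : ℝ) / S := by
    rw [hwdef, norm_div, norm_mul, norm_mul, Complex.norm_natCast, Complex.norm_real,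
      Real.norm_eq_abs, abs_of_pos hSpos]
    rw [← htdef]
    norm_num
  have hw1 : ‖w‖ < 1 := by
    rw [hnw, div_lt_one hSpos]
    nlinarith [hX2m, hs0]
  -- derivative formula
  have hne1 : ∀ z : ℂ, ‖z‖ < 1 → 1 - A * z ≠ 0 := by
    intro z hz h
    have h1 : A * z = 1 := by linear_combination -h
    have h2 : ‖A * z‖ = t * ‖z‖ := by rw [norm_mul, hA, RCLike.norm_conj]
    rw [h1] at h2
    simp at h2
    nlinarith [norm_nonneg z, ha, hz, ht0]
  have hXc : ((X : ℝ) : ℂ) = ((n : ℕ) : ℂ) * ((t : ℝ) : ℂ) ^ 2 + (((n : ℕ) : ℂ) + 2) := by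
    rw [hXdef]; push_cast; ring
  have hderiv : ∀ z : ℂ, ‖z‖ < 1 →
      deriv (fun z : ℂ => z ^ (n + 1) * ((z - a) / (1 - A * z))) z
        = z ^ n * (((X : ℝ) : ℂ) * z - ((n + 1 : ℕ) : ℂ) * A * z ^ 2
            - ((n + 1 : ℕ) : ℂ) * a) / (1 - A * z) ^ 2 := by
    intro z hz
    have hz1 := hne1 z hz
    have h1 : HasDerivAt (fun z : ℂ => z ^ (n + 1) * (z - a))
        (((n + 1 : ℕ) : ℂ) * z ^ n * (z - a) + z ^ (n + 1) * 1) z :=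
      (hasDerivAt_pow (n + 1) z).mul ((hasDerivAt_id z).sub_const a)
    have h2 : HasDerivAt (fun z : ℂ => 1 - A * z) (-(A * 1)) z := by
      exact (((hasDerivAt_id z).const_mul A).const_sub 1)
    have h3 := (h1.div h2 hz1).deriv
    rw [show (fun z : ℂ => z ^ (n + 1) * ((z - a) / (1 - A * z)))
        = fun z : ℂ => z ^ (n + 1) * (z - a) / (1 - A * z) from
      funext fun z => (mul_div_assoc _ _ _).symm,
      show (fun z : ℂ => z ^ (n + 1) * (z - a) / (1 - A * z)) = (fun z : ℂ => z ^ (n + 1) * (z - a)) / (fun z : ℂ => 1 - A * z) from rfl, h3]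
    rw [div_eq_div_iff (pow_ne_zero 2 hz1) (pow_ne_zero 2 hz1)]
    rw [hXc]
    push_cast
    linear_combination ((n : ℂ) * z * z ^ n * (1 - A * z) ^ 2) * hc
  -- the quadratic factorization
  have hfac : ∀ z : ℂ, 2 * ((S : ℝ) : ℂ) * (((n + 1 : ℕ) : ℂ) * A * z ^ 2
      - ((X : ℝ) : ℂ) * z + ((n + 1 : ℕ) : ℂ) * a)
      = (((S : ℝ) : ℂ) * z - 2 * a * ((n + 1 : ℕ) : ℂ))
        * (2 * ((n + 1 : ℕ) : ℂ) * A * z - ((S : ℝ) : ℂ)) := by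
    intro z
    have hs2c : ((s : ℝ) : ℂ) ^ 2
        = ((X : ℝ) : ℂ) ^ 2 - 4 * ((n + 1 : ℕ) : ℂ) ^ 2 * ((t : ℝ) : ℂ) ^ 2 := by
      exact_mod_cast congrArg (Complex.ofReal) hs2
    have hSc : ((S : ℝ) : ℂ) = ((X : ℝ) : ℂ) + ((s : ℝ) : ℂ) := by
      rw [hSdef]; push_cast; ring
    rw [hSc]
    linear_combination z * hs2c + (4 * ((n + 1 : ℕ) : ℂ) ^ 2 * z) * hc
  -- w is a root of the quadratic
  have hqw : ((n + 1 : ℕ) : ℂ) * A * w ^ 2 - ((X : ℝ) : ℂ) * w + ((n + 1 : ℕ) : ℂ) * a = 0 := by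
    have h1 : ((S : ℝ) : ℂ) * w - 2 * a * ((n + 1 : ℕ) : ℂ) = 0 := by
      rw [hwdef]; field_simp; ring
    have h2 := hfac w
    rw [h1, zero_mul] at h2
    have h3 : (2 : ℂ) * ((S : ℝ) : ℂ) ≠ 0 := mul_ne_zero two_ne_zero hSne
    exact (mul_eq_zero.mp h2).resolve_left h3
  refine ⟨hw1, ?_, ?_⟩
  · rw [hderiv w hw1]
    have h0 : ((X : ℝ) : ℂ) * w - ((n + 1 : ℕ) : ℂ) * A * w ^ 2
        - ((n + 1 : ℕ) : ℂ) * a = 0 := by linear_combination -hqw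
    rw [h0, mul_zero, zero_div]
  · intro z hz hdz
    rw [hderiv z hz] at hdz
    have hden := pow_ne_zero 2 (hne1 z hz)
    rw [div_eq_zero_iff] at hdz
    have hdz' : z ^ n * (((X : ℝ) : ℂ) * z - ((n + 1 : ℕ) : ℂ) * A * z ^ 2
        - ((n + 1 : ℕ) : ℂ) * a) = 0 := hdz.resolve_right hden
    rcases mul_eq_zero.mp hdz' with h | h
    · right
      rcases pow_eq_zero_iff'.mp h with ⟨h', _⟩
      exact h'
    · left
      -- q(z) = 0
      have hq : ((n + 1 : ℕ) : ℂ) * A * z ^ 2 - ((X : ℝ) : ℂ) * z + ((n + 1 : ℕ) : ℂ) * a = 0 := by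
        linear_combination -h
      have h2 := hfac z
      rw [hq, mul_zero] at h2
      rcases mul_eq_zero.mp h2.symm with h3 | h3
      · -- S z = 2 a (n+1), so z = w
        show z = w
        rw [hwdef, eq_div_iff hSne]
        linear_combination h3
      · -- impossible: norm too big
        exfalso
        have h4 : 2 * ((n + 1 : ℕ) : ℂ) * A * z = ((S : ℝ) : ℂ) := by
          linear_combination h3
        have h5 : ‖2 * ((n + 1 : ℕ) : ℂ) * A * z‖ = 2 * ((n + 1 : ℕ) : ℝ) * t * ‖z‖ := by
          rw [norm_mul, norm_mul, norm_mul, hA, RCLike.norm_conj, ← htdef,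
            Complex.norm_natCast]
          norm_num
        rw [h4] at h5
        rw [Complex.norm_real, Real.norm_eq_abs, abs_of_pos hSpos, hSdef] at h5
        have h6 : 2 * ((n + 1 : ℕ) : ℝ) * t * ‖z‖ ≤ 2 * ((n + 1 : ℕ) : ℝ) * t := by
          nlinarith [norm_nonneg z, hz, ht0,
            mul_nonneg (mul_nonneg (by positivity : (0:ℝ) ≤ 2 * ((n + 1 : ℕ) : ℝ)) ht0)
              (sub_nonneg.mpr hz.le)]
        linarith [hs0, hX2m]
end

section
/- Let m ≥ 1 be an integer. Define F_m : ℂ → ℂ by F_m(a) = 2am / ((m−1)|a|² + (m+1) + √(((m−1)|a|² + (m+1))² − 4m²|a|²)). Then F_m restricts to a homeomorphism of the closed unit disc {a ∈ ℂ : |a| ≤ 1} onto itself, and F_m(a) = a for every a with |a| = 1. In particular, for m = 1 this is the map F_1(a) = a/(1 + √(1 − |a|²)). -/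
/-- The map `F_m(a) = 2am / ((m−1)|a|² + (m+1) + √(((m−1)|a|² + (m+1))² − 4m²|a|²))`. -/
noncomputable def Fm (m : ℕ) (a : ℂ) : ℂ :=
  2 * a * (m : ℂ) /
    (((((m : ℝ) - 1) * ‖a‖ ^ 2 + ((m : ℝ) + 1)) +
      Real.sqrt (((((m : ℝ) - 1) * ‖a‖ ^ 2 + ((m : ℝ) + 1)) ^ 2 -
        4 * (m : ℝ) ^ 2 * ‖a‖ ^ 2)) : ℝ) : ℂ)

namespace Stmt9Aux

noncomputable def dd (m : ℕ) (r : ℝ) : ℝ := ((m:ℝ)-1)*r^2 + ((m:ℝ)+1)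
noncomputable def ss (m : ℕ) (r : ℝ) : ℝ := Real.sqrt ((dd m r)^2 - 4*(m:ℝ)^2*r^2)
noncomputable def den (m : ℕ) (r : ℝ) : ℝ := dd m r + ss m r
noncomputable def psi (m : ℕ) (r : ℝ) : ℝ := 2*(m:ℝ)*r / den m r

variable {m : ℕ}

lemma dd_pos (hm : 1 ≤ m) (r : ℝ) : 0 < dd m r := by
  have : (1:ℝ) ≤ (m:ℝ) := by exact_mod_cast hm
  unfold dd; nlinarith [sq_nonneg r]

lemma ss_nonneg (m : ℕ) (r : ℝ) : 0 ≤ ss m r := Real.sqrt_nonneg _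

lemma den_pos (hm : 1 ≤ m) (r : ℝ) : 0 < den m r :=
  add_pos_of_pos_of_nonneg (dd_pos hm r) (ss_nonneg m r)

lemma inside_nonneg (hm : 1 ≤ m) {r : ℝ} (hr : r^2 ≤ 1) :
    0 ≤ (dd m r)^2 - 4*(m:ℝ)^2*r^2 := by
  have hM : (1:ℝ) ≤ (m:ℝ) := by exact_mod_cast hm
  have : (dd m r)^2 - 4*(m:ℝ)^2*r^2
      = (1-r^2)*(((m:ℝ)+1)^2 - ((m:ℝ)-1)^2*r^2) := by unfold dd; ring
  rw [this]
  have h1 : (0:ℝ) ≤ 1 - r^2 := by linarith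
  have h2 : (0:ℝ) ≤ ((m:ℝ)+1)^2 - ((m:ℝ)-1)^2*r^2 := by nlinarith [sq_nonneg ((m:ℝ)-1)]
  positivity

lemma ss_sq (hm : 1 ≤ m) {r : ℝ} (hr : r^2 ≤ 1) :
    (ss m r)^2 = (dd m r)^2 - 4*(m:ℝ)^2*r^2 :=
  Real.sq_sqrt (inside_nonneg hm hr)

lemma psi_nonneg (hm : 1 ≤ m) {r : ℝ} (hr : 0 ≤ r) : 0 ≤ psi m r := by
  unfold psi
  have := den_pos hm r
  positivity

lemma psi_eq_zero_iff (hm : 1 ≤ m) (r : ℝ) : psi m r = 0 ↔ r = 0 := by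
  have hd := (den_pos hm r).ne'
  have hM : (1:ℝ) ≤ (m:ℝ) := by exact_mod_cast hm
  rw [psi, div_eq_zero_iff]
  constructor
  · rintro (h | h)
    · nlinarith
    · exact absurd h hd
  · intro h; left; rw [h]; ring

lemma dd_ge (hm : 1 ≤ m) {r : ℝ} (hr0 : 0 ≤ r) (hr : r ≤ 1) : 2*(m:ℝ)*r ≤ dd m r := by
  have h := inside_nonneg hm (by nlinarith : r^2 ≤ 1)
  have hd := dd_pos hm r
  nlinarith [sq_nonneg (dd m r - 2*(m:ℝ)*r)]

lemma psi_le_one (hm : 1 ≤ m) {r : ℝ} (hr0 : 0 ≤ r) (hr : r ≤ 1) : psi m r ≤ 1 := by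
  have h := dd_ge hm hr0 hr
  have hs := ss_nonneg m r
  have hd := den_pos hm r
  rw [psi, div_le_one hd]
  unfold den; linarith

lemma psi_zero : psi m 0 = 0 := by simp [psi]

lemma dd_one : dd m 1 = 2*(m:ℝ) := by unfold dd; ring

lemma ss_one : ss m 1 = 0 := by
  unfold ss; rw [dd_one]; norm_num
  rw [show (2*(m:ℝ))^2 - 4*(m:ℝ)^2 = 0 by ring, Real.sqrt_zero]

lemma den_one : den m 1 = 2*(m:ℝ) := by rw [den, dd_one, ss_one]; ring

lemma psi_one (hm : 1 ≤ m) : psi m 1 = 1 := by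
  have hM : (1:ℝ) ≤ (m:ℝ) := by exact_mod_cast hm
  rw [psi, den_one]
  field_simp

lemma key_identity (hm : 1 ≤ m) {r : ℝ} (hr : r^2 ≤ 1) :
    (m:ℝ) * r * ((psi m r)^2 + 1) = dd m r * psi m r := by
  have hs := ss_sq hm hr
  have hd := (den_pos hm r).ne'
  rw [psi]
  field_simp
  unfold den at *
  linear_combination r * hs

lemma psi_injOn (hm : 1 ≤ m) : Set.InjOn (psi m) (Set.Icc 0 1) := by
  rintro r1 ⟨h10, h11⟩ r2 ⟨h20, h21⟩ heq
  have hM : (1:ℝ) ≤ (m:ℝ) := by exact_mod_cast hm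
  have k1 : (m:ℝ) * r1 * ((psi m r1)^2 + 1) = dd m r1 * psi m r1 :=
    key_identity hm (by nlinarith)
  have k2 : (m:ℝ) * r2 * ((psi m r1)^2 + 1) = dd m r2 * psi m r1 := by
    rw [heq]; exact key_identity hm (by nlinarith)
  rcases eq_or_lt_of_le (psi_nonneg hm h10 : 0 ≤ psi m r1) with h0 | h0
  · have e1 : r1 = 0 := (psi_eq_zero_iff hm r1).mp h0.symm
    have e2 : r2 = 0 := (psi_eq_zero_iff hm r2).mp (heq ▸ h0.symm)
    rw [e1, e2]
  · set t := psi m r1 with ht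
    have hsub : (r1 - r2) * ((m:ℝ)*(t^2+1) - ((m:ℝ)-1)*t*(r1+r2)) = 0 := by
      unfold dd at k1 k2; linear_combination k1 - k2
    have hpos : 0 < (m:ℝ)*(t^2+1) - ((m:ℝ)-1)*t*(r1+r2) := by
      nlinarith [mul_nonneg (by linarith : (0:ℝ) ≤ (m:ℝ)) (sq_nonneg (t-1)),
        mul_nonneg (mul_nonneg (by linarith : (0:ℝ) ≤ (m:ℝ)-1) h0.le)
          (by linarith : (0:ℝ) ≤ 2 - (r1+r2))]
    rcases mul_eq_zero.mp hsub with h | h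
    · linarith
    · linarith

lemma psi_continuous (hm : 1 ≤ m) : Continuous (psi m) := by
  apply Continuous.div
  · fun_prop
  · unfold den ss dd; fun_prop
  · exact fun r => (den_pos hm r).ne'

lemma Fm_eq (m : ℕ) (a : ℂ) : Fm m a = a * (((2*(m:ℝ)) / den m ‖a‖ : ℝ) : ℂ) := by
  rw [Fm, den, ss, dd, Complex.ofReal_div]
  push_cast
  ring

lemma norm_Fm (hm : 1 ≤ m) (a : ℂ) : ‖Fm m a‖ = psi m ‖a‖ := by
  have hd := den_pos hm ‖a‖
  rw [Fm_eq, norm_mul, Complex.norm_real, Real.norm_eq_abs,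
    abs_of_nonneg (by positivity : (0:ℝ) ≤ 2*(m:ℝ)/den m ‖a‖), psi]
  ring

lemma Fm_continuous (hm : 1 ≤ m) : Continuous (Fm m) := by
  have : Fm m = fun a => a * (((2*(m:ℝ)) / den m ‖a‖ : ℝ) : ℂ) := funext (Fm_eq m)
  rw [this]
  refine continuous_id.mul (Complex.continuous_ofReal.comp ?_)
  refine Continuous.div continuous_const ?_ (fun a => (den_pos hm ‖a‖).ne')
  have : Continuous (den m) := by unfold den ss dd; fun_prop
  exact this.comp continuous_norm

end Stmt9Aux

open Stmt9Aux

/-- For every integer `m ≥ 1`, the map `F_m` restricts to a homeomorphism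
of the closed unit disc onto itself, fixing the unit circle pointwise; for `m = 1`
it is the map `a ↦ a/(1 + √(1 − |a|²))`. -/
theorem stmt9 (m : ℕ) (hm : 1 ≤ m) :
    (∃ h : ({a : ℂ // ‖a‖ ≤ 1}) ≃ₜ ({a : ℂ // ‖a‖ ≤ 1}),
      ∀ x : {a : ℂ // ‖a‖ ≤ 1}, (h x : ℂ) = Fm m (x : ℂ)) ∧
    (∀ a : ℂ, ‖a‖ = 1 → Fm m a = a) ∧
    (∀ a : ℂ, ‖a‖ ≤ 1 → Fm 1 a = a / ((1 + Real.sqrt (1 - ‖a‖ ^ 2) : ℝ) : ℂ)) := by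
  have hM : (1:ℝ) ≤ (m:ℝ) := by exact_mod_cast hm
  refine ⟨?_, ?_, ?_⟩
  · -- the homeomorphism
    haveI : CompactSpace {a : ℂ // ‖a‖ ≤ 1} := by
      have h1 : IsCompact {a : ℂ | ‖a‖ ≤ 1} := by
        have : {a : ℂ | ‖a‖ ≤ 1} = Metric.closedBall 0 1 := by
          ext a; simp [Metric.mem_closedBall, dist_zero_right]
        rw [this]; exact isCompact_closedBall 0 1
      exact isCompact_iff_compactSpace.mp h1
    have hmem : ∀ x : {a : ℂ // ‖a‖ ≤ 1}, ‖Fm m x.1‖ ≤ 1 := by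
      intro x
      rw [norm_Fm hm]
      exact psi_le_one hm (norm_nonneg _) x.2
    set f : {a : ℂ // ‖a‖ ≤ 1} → {a : ℂ // ‖a‖ ≤ 1} := fun x => ⟨Fm m x.1, hmem x⟩ with hf
    have hinj : Function.Injective f := by
      intro x y hxy
      have hFm : Fm m x.1 = Fm m y.1 := congrArg Subtype.val hxy
      have hn : psi m ‖x.1‖ = psi m ‖y.1‖ := by rw [← norm_Fm hm, ← norm_Fm hm, hFm]
      have hr : ‖x.1‖ = ‖y.1‖ :=
        psi_injOn hm ⟨norm_nonneg _, x.2⟩ ⟨norm_nonneg _, y.2⟩ hn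
      have hc : (((2*(m:ℝ)) / den m ‖y.1‖ : ℝ) : ℂ) ≠ 0 := by
        have : (0:ℝ) < 2*(m:ℝ)/den m ‖y.1‖ := div_pos (by linarith) (den_pos hm _)
        exact_mod_cast this.ne'
      apply Subtype.ext
      rw [Fm_eq, Fm_eq, hr] at hFm
      exact mul_right_cancel₀ hc hFm
    have hsurj : Function.Surjective f := by
      intro y
      rcases eq_or_lt_of_le (norm_nonneg y.1) with h0 | h0
      · refine ⟨⟨0, by simp⟩, ?_⟩
        apply Subtype.ext
        have hy : y.1 = 0 := norm_eq_zero.mp h0.symm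
        show Fm m 0 = y.1
        rw [hy, Fm]
        simp
      · have hmem2 : ‖y.1‖ ∈ Set.Icc (psi m 0) (psi m 1) := by
          rw [psi_zero, psi_one hm]; exact ⟨(norm_nonneg y.1), y.2⟩
        obtain ⟨r, ⟨hr0, hr1⟩, hr⟩ := intermediate_value_Icc (by norm_num : (0:ℝ) ≤ 1)
          ((psi_continuous hm).continuousOn) hmem2
        set a : ℂ := ((r / ‖y.1‖ : ℝ) : ℂ) * y.1 with ha
        have hy0 : ‖y.1‖ ≠ 0 := h0.ne'
        have hna : ‖a‖ = r := by
          rw [ha, norm_mul, Complex.norm_real, Real.norm_eq_abs,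
            abs_of_nonneg (div_nonneg hr0 (norm_nonneg y.1))]
          rw [div_mul_eq_mul_div, mul_div_assoc, div_self hy0, mul_one]
        refine ⟨⟨a, by rw [hna]; exact hr1⟩, ?_⟩
        apply Subtype.ext
        show Fm m a = y.1
        have hden := (den_pos hm r).ne'
        have ht := h0.ne'
        have h2 : 2*(m:ℝ)*r = ‖y.1‖ * den m r := by
          rw [psi, div_eq_iff hden] at hr; linarith
        have hsc : (r / ‖y.1‖) * (2*(m:ℝ)/den m r) = 1 := by
          rw [div_mul_div_comm, div_eq_one_iff_eq (by positivity : ‖y.1‖ * den m r ≠ 0)]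
          linarith
        rw [Fm_eq, hna, ha]
        calc ((r/‖y.1‖ : ℝ):ℂ) * y.1 * ((2*(m:ℝ)/den m r : ℝ):ℂ)
            = (((r/‖y.1‖) * (2*(m:ℝ)/den m r) : ℝ):ℂ) * y.1 := by push_cast; ring
          _ = y.1 := by rw [hsc]; simp
    have hcont : Continuous f :=
      Continuous.subtype_mk ((Fm_continuous hm).comp continuous_subtype_val) _
    exact ⟨Continuous.homeoOfEquivCompactToT2
      (f := Equiv.ofBijective f ⟨hinj, hsurj⟩) hcont, fun x => rfl⟩
  · -- circle fixed
    intro a ha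
    rw [Fm_eq, ha, den_one]
    have h2 : ((2*(m:ℝ)/(2*(m:ℝ)) : ℝ) : ℂ) = 1 := by
      rw [div_self (by positivity : (2*(m:ℝ)) ≠ 0)]; norm_num
    rw [h2, mul_one]
  · -- m = 1 case
    intro a ha
    have hr2 : ‖a‖^2 ≤ 1 := by nlinarith [norm_nonneg a]
    have hd1 : dd 1 ‖a‖ = 2 := by rw [dd]; norm_num
    have hs1 : ss 1 ‖a‖ = 2 * Real.sqrt (1 - ‖a‖^2) := by
      rw [ss, hd1,
        show (2:ℝ)^2 - 4*((1:ℕ):ℝ)^2*‖a‖^2 = 2^2*(1-‖a‖^2) by push_cast; ring,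
        Real.sqrt_mul (by positivity), Real.sqrt_sq (by norm_num : (0:ℝ) ≤ 2)]
    have hden1 : den 1 ‖a‖ = 2*(1 + Real.sqrt (1 - ‖a‖^2)) := by
      rw [den, hd1, hs1]; ring
    have hpos : (0:ℝ) < 1 + Real.sqrt (1 - ‖a‖^2) :=
      lt_of_lt_of_le one_pos (le_add_of_nonneg_right (Real.sqrt_nonneg _))
    have hq : (2*((1:ℕ):ℝ)) / den 1 ‖a‖ = 1/(1 + Real.sqrt (1-‖a‖^2)) := by
      rw [hden1]
      push_cast
      rw [div_eq_div_iff (by positivity) hpos.ne']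
      ring
    rw [Fm_eq, hq, Complex.ofReal_div, Complex.ofReal_one, mul_one_div]
end

section
/- In the degenerating setup (with q_{d₁+1}, …, q_e ∈ ∂𝔻 arbitrary, repetitions allowed), let (c_n) be a sequence in 𝔻 with B_n'(c_n) = 0 for all n and c_n → c ∈ ℂ. Then either c ∈ 𝔻 and B'(c) = 0, or c ∈ {q_{d₁+1}, …, q_e}. -/
open Filter Finset Complex

noncomputable def bf (a z : ℂ) : ℂ :=
  (1 - (starRingEnd ℂ) a) / (1 - a) * ((z - a) / (1 - (starRingEnd ℂ) a * z))

noncomputable def bfd (a z : ℂ) : ℂ :=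
  (1 - (starRingEnd ℂ) a) / (1 - a) * ((1 - (starRingEnd ℂ) a * a) / (1 - (starRingEnd ℂ) a * z) ^ 2)

lemma hasDerivAt_bf {a z : ℂ} (h : 1 - (starRingEnd ℂ) a * z ≠ 0) :
    HasDerivAt (bf a) (bfd a z) z := by
  have h1 : HasDerivAt (fun z : ℂ => z - a) 1 z := (hasDerivAt_id z).sub_const a
  have h2 : HasDerivAt (fun z : ℂ => 1 - (starRingEnd ℂ) a * z) (-((starRingEnd ℂ) a)) z := by
    simpa using ((hasDerivAt_id z).const_mul ((starRingEnd ℂ) a)).const_sub 1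
  have := ((h1.div h2 h).const_mul ((1 - (starRingEnd ℂ) a) / (1 - a)))
  refine this.congr_deriv ?_
  unfold bfd
  ring

lemma norm_one_sub_conj (a : ℂ) : ‖1 - (starRingEnd ℂ) a‖ = ‖1 - a‖ := by
  rw [show (1 : ℂ) - (starRingEnd ℂ) a = (starRingEnd ℂ) (1 - a) by simp]
  exact norm_star (1 - a)

lemma norm_bf {a : ℂ} (ha : a ≠ 1) (z : ℂ) :
    ‖bf a z‖ = ‖z - a‖ / ‖1 - (starRingEnd ℂ) a * z‖ := by
  have h1 : (1 : ℂ) - a ≠ 0 := sub_ne_zero.2 (Ne.symm ha)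
  rw [bf, norm_mul, norm_div, norm_div, norm_one_sub_conj, div_self (norm_ne_zero_iff.2 h1), one_mul]

lemma normSq_key (a z : ℂ) :
    Complex.normSq (1 - (starRingEnd ℂ) a * z) - Complex.normSq (z - a)
      = (1 - Complex.normSq a) * (1 - Complex.normSq z) := by
  simp [Complex.normSq_apply, Complex.mul_re, Complex.mul_im, Complex.sub_re, Complex.sub_im,
    Complex.one_re, Complex.one_im, Complex.conj_re, Complex.conj_im]
  ring

lemma norm_sub_le_norm_one_sub {a z : ℂ} (ha : ‖a‖ < 1) (hz : ‖z‖ ≤ 1) :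
    ‖z - a‖ ≤ ‖1 - (starRingEnd ℂ) a * z‖ := by
  have h1 : Complex.normSq a < 1 := by
    rw [← Complex.sq_norm]; nlinarith [norm_nonneg a]
  have h2 : Complex.normSq z ≤ 1 := by
    rw [← Complex.sq_norm]; nlinarith [norm_nonneg z]
  have := normSq_key a z
  have h3 : Complex.normSq (z - a) ≤ Complex.normSq (1 - (starRingEnd ℂ) a * z) := by nlinarith
  calc ‖z - a‖ = Real.sqrt (Complex.normSq (z - a)) := by
        rw [Complex.norm_def]
    _ ≤ Real.sqrt (Complex.normSq (1 - (starRingEnd ℂ) a * z)) := Real.sqrt_le_sqrt h3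
    _ = _ := by rw [Complex.norm_def]

lemma norm_bf_le {a z : ℂ} (ha : ‖a‖ < 1) (hz : ‖z‖ ≤ 1) : ‖bf a z‖ ≤ 1 := by
  have hane : a ≠ 1 := by rintro rfl; simp at ha
  have hden : (1 : ℂ) - (starRingEnd ℂ) a * z ≠ 0 := by
    intro h
    have : ‖(starRingEnd ℂ) a * z‖ < 1 := by
      rw [norm_mul, show (starRingEnd ℂ) a = star a from rfl, norm_star]
      nlinarith [norm_nonneg z, norm_nonneg a]
    rw [sub_eq_zero] at h
    rw [← h] at this; simp at this
  rw [norm_bf hane]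
  rw [div_le_one (norm_pos_iff.2 hden)]
  exact norm_sub_le_norm_one_sub ha hz

lemma one_sub_conj_mul_ne {a z : ℂ} (ha : ‖a‖ < 1) (hz : ‖z‖ ≤ 1) :
    1 - (starRingEnd ℂ) a * z ≠ 0 := by
  intro h
  have : ‖(starRingEnd ℂ) a * z‖ < 1 := by
    rw [norm_mul, show (starRingEnd ℂ) a = star a from rfl, norm_star]
    nlinarith [norm_nonneg z, norm_nonneg a]
  rw [sub_eq_zero] at h
  rw [← h] at this; simp at this

lemma one_sub_conj_mul_bd {q z : ℂ} (hq : ‖q‖ = 1) :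
    1 - (starRingEnd ℂ) q * z = (starRingEnd ℂ) q * (q - z) := by
  have : (starRingEnd ℂ) q * q = Complex.normSq q := Complex.normSq_eq_conj_mul_self.symm
  rw [mul_sub, this]
  have : Complex.normSq q = 1 := by
    rw [← Complex.sq_norm, hq]; norm_num
  rw [this]; norm_num

lemma one_sub_conj_mul_bd_ne {q z : ℂ} (hq : ‖q‖ = 1) (hz : z ≠ q) :
    1 - (starRingEnd ℂ) q * z ≠ 0 := by
  rw [one_sub_conj_mul_bd hq]
  apply mul_ne_zero
  · simp only [ne_eq, map_eq_zero]; intro h; rw [h] at hq; simp at hq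
  · exact sub_ne_zero.2 (Ne.symm hz)

lemma hasDerivAt_pow_prod (m : ℕ) {e : ℕ} (a : Fin e → ℂ) (s : Finset (Fin e)) (z : ℂ)
    (h : ∀ k ∈ s, 1 - (starRingEnd ℂ) (a k) * z ≠ 0) :
    HasDerivAt (fun z => z ^ m * ∏ k ∈ s, bf (a k) z)
      ((m : ℂ) * z ^ (m - 1) * ∏ k ∈ s, bf (a k) z
        + z ^ m * ∑ k ∈ s, (∏ j ∈ s.erase k, bf (a j) z) * bfd (a k) z) z := by
  have hp : HasDerivAt (fun z => ∏ k ∈ s, bf (a k) z)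
      (∑ k ∈ s, (∏ j ∈ s.erase k, bf (a j) z) • bfd (a k) z) z :=
    HasDerivAt.fun_finsetProd (fun k hk => hasDerivAt_bf (h k hk))
  have := (hasDerivAt_pow m z).mul hp
  refine this.congr_deriv ?_
  simp only [smul_eq_mul]

lemma bfd_boundary {a z : ℂ} (ha : ‖a‖ < 1) (hz : ‖z‖ = 1) :
    bfd a z = (starRingEnd ℂ) z *
      (((1 - Complex.normSq a) / Complex.normSq (z - a) : ℝ) : ℂ) * bf a z := by
  have hz1 : z * (starRingEnd ℂ) z = 1 := by
    rw [Complex.mul_conj]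
    norm_cast
    rw [← Complex.sq_norm, hz]; norm_num
  have hza : z - a ≠ 0 := by
    intro h; rw [sub_eq_zero] at h; rw [← h, hz] at ha; exact lt_irrefl 1 ha
  have hden : 1 - (starRingEnd ℂ) a * z ≠ 0 := one_sub_conj_mul_ne ha hz.le
  have hns : ((Complex.normSq (z - a) : ℝ) : ℂ) ≠ 0 := by
    simpa using Complex.normSq_pos.2 hza |>.ne'
  have e1 : ((Complex.normSq (z - a) : ℝ) : ℂ) = (z - a) * (starRingEnd ℂ) (z - a) :=
    (Complex.mul_conj _).symm
  have e2 : ((Complex.normSq a : ℝ) : ℂ) = a * (starRingEnd ℂ) a := (Complex.mul_conj a).symm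
  have h : (1 - (starRingEnd ℂ) a * a) / (1 - (starRingEnd ℂ) a * z) ^ 2
      = (starRingEnd ℂ) z * (((1 - Complex.normSq a) / Complex.normSq (z - a) : ℝ) : ℂ)
        * ((z - a) / (1 - (starRingEnd ℂ) a * z)) := by
    have hr : (starRingEnd ℂ) z * (((1 - Complex.normSq a) / Complex.normSq (z - a) : ℝ) : ℂ)
        * ((z - a) / (1 - (starRingEnd ℂ) a * z))
        = ((starRingEnd ℂ) z * (((1 - Complex.normSq a : ℝ)) : ℂ) * (z - a)) /
          (((Complex.normSq (z - a) : ℝ) : ℂ) * (1 - (starRingEnd ℂ) a * z)) := by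
      rw [Complex.ofReal_div, mul_assoc, div_mul_div_comm, ← mul_div_assoc, ← mul_assoc]
    rw [hr, div_eq_div_iff (pow_ne_zero 2 hden) (mul_ne_zero hns hden)]
    push_cast
    rw [e1, e2, map_sub]
    linear_combination ((1 - (starRingEnd ℂ) a * a) * (z - a) *
      (1 - (starRingEnd ℂ) a * z) * (starRingEnd ℂ) a) * hz1
  unfold bf bfd
  rw [h]; ring

lemma norm_bfd {a : ℂ} (ha : a ≠ 1) (z : ℂ) :
    ‖bfd a z‖ = ‖1 - (starRingEnd ℂ) a * a‖ / ‖1 - (starRingEnd ℂ) a * z‖ ^ 2 := by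
  have h1 : (1 : ℂ) - a ≠ 0 := sub_ne_zero.2 (Ne.symm ha)
  rw [bfd, norm_mul, norm_div, norm_div, norm_one_sub_conj, div_self (norm_ne_zero_iff.2 h1),
    one_mul, norm_pow]

lemma bf_ne_zero {a z : ℂ} (ha : ‖a‖ < 1) (hz : z ≠ a)
    (hden : 1 - (starRingEnd ℂ) a * z ≠ 0) : bf a z ≠ 0 := by
  have h1 : (1 : ℂ) - a ≠ 0 := by
    intro h; rw [sub_eq_zero] at h; rw [← h] at ha; simp at ha
  have h2 : (1 : ℂ) - (starRingEnd ℂ) a ≠ 0 := by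
    intro h
    rw [sub_eq_zero] at h
    have : ‖(starRingEnd ℂ) a‖ < 1 := by
      rw [show (starRingEnd ℂ) a = star a from rfl, norm_star]; exact ha
    rw [← h] at this; simp at this
  exact mul_ne_zero (div_ne_zero h2 h1) (div_ne_zero (sub_ne_zero.2 hz) hden)

lemma tendsto_conj {a : ℕ → ℂ} {al : ℂ} (ha : Filter.Tendsto a atTop (nhds al)) :
    Filter.Tendsto (fun n => (starRingEnd ℂ) (a n)) atTop (nhds ((starRingEnd ℂ) al)) :=
  (Complex.continuous_conj.tendsto al).comp ha

lemma tendsto_bf {a z : ℕ → ℂ} {al zl : ℂ}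
    (ha : Filter.Tendsto a atTop (nhds al)) (hz : Filter.Tendsto z atTop (nhds zl))
    (h1 : (1 : ℂ) - al ≠ 0) (h2 : 1 - (starRingEnd ℂ) al * zl ≠ 0) :
    Filter.Tendsto (fun n => bf (a n) (z n)) atTop (nhds (bf al zl)) := by
  unfold bf
  exact (((tendsto_const_nhds.sub (tendsto_conj ha)).div
      (tendsto_const_nhds.sub ha) h1)).mul
    ((hz.sub ha).div (tendsto_const_nhds.sub ((tendsto_conj ha).mul hz)) h2)

lemma tendsto_bfd {a z : ℕ → ℂ} {al zl : ℂ}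
    (ha : Filter.Tendsto a atTop (nhds al)) (hz : Filter.Tendsto z atTop (nhds zl))
    (h1 : (1 : ℂ) - al ≠ 0) (h2 : 1 - (starRingEnd ℂ) al * zl ≠ 0) :
    Filter.Tendsto (fun n => bfd (a n) (z n)) atTop (nhds (bfd al zl)) := by
  unfold bfd
  exact (((tendsto_const_nhds.sub (tendsto_conj ha)).div
      (tendsto_const_nhds.sub ha) h1)).mul
    (((tendsto_const_nhds.sub ((tendsto_conj ha).mul ha))).div
      ((tendsto_const_nhds.sub ((tendsto_conj ha).mul hz)).pow 2) (pow_ne_zero 2 h2))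

/-- In the degenerating setup (boundary points `q k`, `d₁ ≤ k`, arbitrary,
repetitions allowed), let `(c n)` be a sequence in `𝔻` with `(B n)'(c n) = 0` and
`c n → c`. Then either `c ∈ 𝔻` and `B'(c) = 0`, or `c` is one of the boundary points. -/
theorem stmt10 (m e d₁ : ℕ) (hm : 1 ≤ m) (he : 1 ≤ e) (hd : d₁ < e)
    (q : Fin e → ℂ)
    (hqin : ∀ k : Fin e, (k : ℕ) < d₁ → ‖q k‖ < 1)
    (hqbd : ∀ k : Fin e, d₁ ≤ (k : ℕ) → ‖q k‖ = 1)
    (A : ℕ → Fin e → ℂ)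
    (hA : ∀ n k, ‖A n k‖ < 1)
    (hAconv : ∀ k, Tendsto (fun n => A n k) atTop (nhds (q k)))
    (c : ℕ → ℂ) (hc : ∀ n, ‖c n‖ < 1)
    (hcrit : ∀ n, deriv (blaschke m (A n)) (c n) = 0)
    (clim : ℂ) (hclim : Tendsto c atTop (nhds clim)) :
    (‖clim‖ < 1 ∧
      deriv (blaschke m fun k : Fin d₁ => q (Fin.castLE hd.le k)) clim = 0) ∨
    (∃ k : Fin e, d₁ ≤ (k : ℕ) ∧ clim = q k) := by
  classical
  by_cases hqex : ∃ k : Fin e, d₁ ≤ (k : ℕ) ∧ clim = q k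
  · exact Or.inr hqex
  push_neg at hqex
  left
  have hclim_le : ‖clim‖ ≤ 1 :=
    le_of_tendsto hclim.norm (Eventually.of_forall fun n => (hc n).le)
  set S : Finset (Fin e) := Finset.univ.filter (fun k => (k : ℕ) < d₁) with hSdef
  have hmemS : ∀ k : Fin e, k ∈ S ↔ (k : ℕ) < d₁ := by intro k; simp [hSdef]
  have hmemSc : ∀ k : Fin e, k ∈ Sᶜ ↔ d₁ ≤ (k : ℕ) := by
    intro k; simp [hSdef, Finset.mem_compl, not_lt]
  have hdlim : ∀ k : Fin e, 1 - (starRingEnd ℂ) (q k) * clim ≠ 0 := by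
    intro k
    by_cases hk : (k : ℕ) < d₁
    · exact one_sub_conj_mul_ne (hqin k hk) hclim_le
    · exact one_sub_conj_mul_bd_ne (hqbd k (le_of_not_gt hk)) (hqex k (le_of_not_gt hk))
  have hdn : ∀ n (k : Fin e), 1 - (starRingEnd ℂ) (A n k) * c n ≠ 0 :=
    fun n k => one_sub_conj_mul_ne (hA n k) (hc n).le
  have hA1 : ∀ n k, A n k ≠ 1 := by
    intro n k h; have := hA n k; rw [h] at this; simp at this
  have hq1 : ∀ k ∈ S, (1 : ℂ) - q k ≠ 0 := by
    intro k hk h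
    rw [sub_eq_zero] at h
    have := hqin k ((hmemS k).1 hk); rw [← h] at this; simp at this
  -- main data
  set P : ℕ → ℂ := fun n => ∏ k ∈ Sᶜ, bf (A n k) (c n) with hP
  set G : ℕ → ℂ := fun n => (c n) ^ m * ∏ k ∈ S, bf (A n k) (c n) with hG
  set gd : ℕ → ℂ := fun n => (m : ℂ) * (c n) ^ (m - 1) * ∏ k ∈ S, bf (A n k) (c n)
      + (c n) ^ m * ∑ k ∈ S, (∏ j ∈ S.erase k, bf (A n j) (c n)) * bfd (A n k) (c n) with hgdd
  set pd : ℕ → ℂ := fun n =>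
      ∑ k ∈ Sᶜ, (∏ j ∈ Sᶜ.erase k, bf (A n j) (c n)) * bfd (A n k) (c n) with hpdd
  set D : ℂ := (m : ℂ) * clim ^ (m - 1) * ∏ k ∈ S, bf (q k) clim
      + clim ^ m * ∑ k ∈ S, (∏ j ∈ S.erase k, bf (q j) clim) * bfd (q k) clim with hDdef
  -- the critical equation
  have heq : ∀ n, gd n * P n + G n * pd n = 0 := by
    intro n
    have h1 : HasDerivAt (fun z => z ^ m * ∏ k ∈ S, bf (A n k) z) (gd n) (c n) :=
      hasDerivAt_pow_prod m (A n) S (c n) (fun k _ => hdn n k)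
    have h2 : HasDerivAt (fun z => ∏ k ∈ Sᶜ, bf (A n k) z) (pd n) (c n) :=
      HasDerivAt.fun_finsetProd (fun k _ => hasDerivAt_bf (hdn n k))
    have h3 : HasDerivAt (blaschke m (A n)) (gd n * P n + G n * pd n) (c n) := by
      have heqf : blaschke m (A n)
          = fun z => (z ^ m * ∏ k ∈ S, bf (A n k) z) * ∏ k ∈ Sᶜ, bf (A n k) z := by
        funext z
        rw [show blaschke m (A n) z = z ^ m * ∏ k, bf (A n k) z from rfl,
          ← Finset.prod_mul_prod_compl S (fun k => bf (A n k) z), mul_assoc]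
      rw [heqf]
      exact h1.mul h2
    rw [← h3.deriv]
    exact hcrit n
  -- convergence of gd to D
  have hbfS : ∀ k ∈ S, Tendsto (fun n => bf (A n k) (c n)) atTop (nhds (bf (q k) clim)) :=
    fun k hk => tendsto_bf (hAconv k) hclim (hq1 k hk) (hdlim k)
  have hbfdS : ∀ k ∈ S, Tendsto (fun n => bfd (A n k) (c n)) atTop (nhds (bfd (q k) clim)) :=
    fun k hk => tendsto_bfd (hAconv k) hclim (hq1 k hk) (hdlim k)
  have hgdlim : Tendsto gd atTop (nhds D) := by
    rw [hgdd, hDdef]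
    exact ((tendsto_const_nhds.mul (hclim.pow (m - 1))).mul
        (tendsto_finset_prod S hbfS)).add
      ((hclim.pow m).mul (tendsto_finset_sum S (fun k hk =>
        (tendsto_finset_prod (S.erase k)
          (fun j hj => hbfS j (Finset.mem_of_mem_erase hj))).mul (hbfdS k hk))))
  -- norm of P tends to 1
  have hPnorm : Tendsto (fun n => ‖P n‖) atTop (nhds 1) := by
    have key : ∀ k ∈ Sᶜ, Tendsto (fun n => ‖bf (A n k) (c n)‖) atTop (nhds 1) := by
      intro k hk
      have hk' := (hmemSc k).1 hk
      have h1 : Tendsto (fun n => ‖c n - A n k‖) atTop (nhds ‖clim - q k‖) :=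
        (hclim.sub (hAconv k)).norm
      have h2 : Tendsto (fun n => ‖1 - (starRingEnd ℂ) (A n k) * c n‖) atTop
          (nhds ‖1 - (starRingEnd ℂ) (q k) * clim‖) :=
        (tendsto_const_nhds.sub ((tendsto_conj (hAconv k)).mul hclim)).norm
      have h3 : ‖1 - (starRingEnd ℂ) (q k) * clim‖ = ‖clim - q k‖ := by
        rw [one_sub_conj_mul_bd (hqbd k hk'), norm_mul,
          show (starRingEnd ℂ) (q k) = star (q k) from rfl, norm_star, hqbd k hk', one_mul,
          norm_sub_rev]
      have h4 : ‖clim - q k‖ ≠ 0 := norm_ne_zero_iff.2 (sub_ne_zero.2 (hqex k hk'))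
      have h5 := h1.div h2 (by rw [h3]; exact h4)
      rw [h3, div_self h4] at h5
      exact Tendsto.congr (fun n => (norm_bf (hA1 n k) (c n)).symm) h5
    have h6 := tendsto_finset_prod Sᶜ key
    rw [Finset.prod_const_one] at h6
    exact Tendsto.congr (fun n => by rw [hP, norm_prod]) h6
  -- pd tends to 0 in norm
  have hbfd0 : ∀ k ∈ Sᶜ, Tendsto (fun n => ‖bfd (A n k) (c n)‖) atTop (nhds 0) := by
    intro k hk
    have hk' := (hmemSc k).1 hk
    have h1 : Tendsto (fun n => ‖1 - (starRingEnd ℂ) (A n k) * A n k‖) atTop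
        (nhds ‖1 - (starRingEnd ℂ) (q k) * q k‖) :=
      (tendsto_const_nhds.sub ((tendsto_conj (hAconv k)).mul (hAconv k))).norm
    have h0 : ‖1 - (starRingEnd ℂ) (q k) * q k‖ = 0 := by
      rw [show (starRingEnd ℂ) (q k) * q k = (Complex.normSq (q k) : ℂ) from
        Complex.normSq_eq_conj_mul_self.symm]
      have : Complex.normSq (q k) = 1 := by
        rw [← Complex.sq_norm, hqbd k hk']; norm_num
      rw [this]; simp
    rw [h0] at h1
    have h2 : Tendsto (fun n => ‖1 - (starRingEnd ℂ) (A n k) * c n‖ ^ 2) atTop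
        (nhds (‖1 - (starRingEnd ℂ) (q k) * clim‖ ^ 2)) :=
      ((tendsto_const_nhds.sub ((tendsto_conj (hAconv k)).mul hclim)).norm).pow 2
    have h3 := h1.div h2 (pow_ne_zero 2 (norm_ne_zero_iff.2 (hdlim k)))
    rw [zero_div] at h3
    exact Tendsto.congr (fun n => (norm_bfd (hA1 n k) (c n)).symm) h3
  have hpdnorm : Tendsto (fun n => ‖pd n‖) atTop (nhds 0) := by
    have hb : ∀ n, ‖pd n‖ ≤ ∑ k ∈ Sᶜ, ‖bfd (A n k) (c n)‖ := by
      intro n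
      rw [hpdd]
      refine (norm_sum_le _ _).trans (Finset.sum_le_sum fun k hk => ?_)
      rw [norm_mul]
      refine mul_le_of_le_one_left (norm_nonneg _) ?_
      rw [norm_prod]
      exact Finset.prod_le_one (fun j _ => norm_nonneg _)
        (fun j _ => norm_bf_le (hA n j) (hc n).le)
    have hs := tendsto_finset_sum Sᶜ hbfd0
    rw [Finset.sum_const_zero] at hs
    exact squeeze_zero (fun n => norm_nonneg _) hb hs
  -- conclude D = 0
  have hGle : ∀ n, ‖G n‖ ≤ 1 := by
    intro n
    rw [hG, norm_mul, norm_pow, norm_prod]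
    exact mul_le_one₀ (pow_le_one₀ (norm_nonneg _) (hc n).le)
      (Finset.prod_nonneg fun j _ => norm_nonneg _)
      (Finset.prod_le_one (fun j _ => norm_nonneg _)
        (fun j _ => norm_bf_le (hA n j) (hc n).le))
  have hfun : (fun n => ‖gd n‖ * ‖P n‖) = fun n => ‖G n‖ * ‖pd n‖ := by
    funext n
    have h := eq_neg_of_add_eq_zero_left (heq n)
    calc ‖gd n‖ * ‖P n‖ = ‖gd n * P n‖ := (norm_mul _ _).symm
      _ = ‖G n * pd n‖ := by rw [h, norm_neg]
      _ = ‖G n‖ * ‖pd n‖ := norm_mul _ _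
  have hlhs : Tendsto (fun n => ‖gd n‖ * ‖P n‖) atTop (nhds (‖D‖ * 1)) :=
    hgdlim.norm.mul hPnorm
  have hrhs : Tendsto (fun n => ‖G n‖ * ‖pd n‖) atTop (nhds 0) :=
    squeeze_zero (fun n => by positivity)
      (fun n => mul_le_of_le_one_left (norm_nonneg _) (hGle n)) hpdnorm
  have hD0 : D = 0 := by
    have h := tendsto_nhds_unique (hfun ▸ hlhs) hrhs
    rw [mul_one] at h
    exact norm_eq_zero.1 h
  -- interior
  have hlt : ‖clim‖ < 1 := by
    by_contra hnl
    have hb : ‖clim‖ = 1 := le_antisymm hclim_le (not_lt.1 hnl)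
    have hz1 : clim * (starRingEnd ℂ) clim = 1 := by
      rw [Complex.mul_conj]
      norm_cast
      rw [← Complex.sq_norm, hb]; norm_num
    set s : Fin e → ℝ := fun k => (1 - Complex.normSq (q k)) / Complex.normSq (clim - q k)
      with hsdef
    have hrw : D = clim ^ (m - 1) * (∏ k ∈ S, bf (q k) clim)
        * ((m : ℂ) + ((∑ k ∈ S, s k : ℝ) : ℂ)) := by
      rw [hDdef]
      have hterm : ∀ k ∈ S, (∏ j ∈ S.erase k, bf (q j) clim) * bfd (q k) clim
          = (starRingEnd ℂ) clim * ((s k : ℝ) : ℂ) * ∏ j ∈ S, bf (q j) clim := by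
        intro k hk
        rw [bfd_boundary (hqin k ((hmemS k).1 hk)) hb, hsdef]
        rw [show (∏ j ∈ S.erase k, bf (q j) clim) *
            ((starRingEnd ℂ) clim *
              (((1 - Complex.normSq (q k)) / Complex.normSq (clim - q k) : ℝ) : ℂ) *
              bf (q k) clim)
          = (starRingEnd ℂ) clim *
              (((1 - Complex.normSq (q k)) / Complex.normSq (clim - q k) : ℝ) : ℂ) *
              ((∏ j ∈ S.erase k, bf (q j) clim) * bf (q k) clim) from by ring,
          Finset.prod_erase_mul S _ hk]
      rw [Finset.sum_congr rfl hterm]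
      have hsum : ∑ k ∈ S, (starRingEnd ℂ) clim * ((s k : ℝ) : ℂ) * ∏ j ∈ S, bf (q j) clim
          = (starRingEnd ℂ) clim * ((∑ k ∈ S, s k : ℝ) : ℂ) * ∏ j ∈ S, bf (q j) clim := by
        rw [← Finset.sum_mul, ← Finset.mul_sum]
        push_cast
        ring
      rw [hsum]
      have hpow : clim ^ m = clim ^ (m - 1) * clim := by
        conv_lhs => rw [show m = (m - 1) + 1 from by omega]
        rw [pow_succ]
      rw [hpow]
      linear_combination (clim ^ (m - 1) * (∏ j ∈ S, bf (q j) clim)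
        * ((∑ k ∈ S, s k : ℝ) : ℂ)) * hz1
    have hclim0 : clim ≠ 0 := by intro h; rw [h] at hb; simp at hb
    have hprodne : (∏ k ∈ S, bf (q k) clim) ≠ 0 := by
      rw [Finset.prod_ne_zero_iff]
      intro k hk
      refine bf_ne_zero (hqin k ((hmemS k).1 hk)) ?_ (hdlim k)
      intro h
      rw [h] at hb
      exact absurd hb (hqin k ((hmemS k).1 hk)).ne
    have hlastne : ((m : ℂ) + ((∑ k ∈ S, s k : ℝ) : ℂ)) ≠ 0 := by
      have hs0 : (0 : ℝ) ≤ ∑ k ∈ S, s k := by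
        refine Finset.sum_nonneg fun k hk => ?_
        rw [hsdef]
        apply div_nonneg _ (Complex.normSq_nonneg _)
        have : Complex.normSq (q k) < 1 := by
          rw [← Complex.sq_norm]
          have := hqin k ((hmemS k).1 hk)
          nlinarith [norm_nonneg (q k)]
        linarith
      intro h
      have : ((m : ℝ) + ∑ k ∈ S, s k : ℝ) = 0 := by exact_mod_cast h
      have hm' : (1 : ℝ) ≤ m := by exact_mod_cast hm
      linarith
    exact (mul_ne_zero (mul_ne_zero (pow_ne_zero _ hclim0) hprodne) hlastne) (hrw ▸ hD0)
  refine ⟨hlt, ?_⟩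
  -- compute deriv of the limiting Blaschke product
  have hSmap : S = Finset.map ⟨Fin.castLE hd.le, Fin.castLE_injective hd.le⟩ Finset.univ := by
    ext x
    rw [hmemS, Finset.mem_map]
    constructor
    · intro hx
      exact ⟨⟨(x : ℕ), hx⟩, Finset.mem_univ _, by ext; simp⟩
    · rintro ⟨y, -, rfl⟩
      exact y.2
  have h1 : HasDerivAt (blaschke m fun k : Fin d₁ => q (Fin.castLE hd.le k))
      ((m : ℂ) * clim ^ (m - 1) * ∏ k : Fin d₁, bf (q (Fin.castLE hd.le k)) clim
        + clim ^ m * ∑ k : Fin d₁, (∏ j ∈ Finset.univ.erase k, bf (q (Fin.castLE hd.le j)) clim)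
            * bfd (q (Fin.castLE hd.le k)) clim) clim :=
    hasDerivAt_pow_prod m _ Finset.univ clim (fun k _ => hdlim _)
  rw [h1.deriv, ← hD0, hDdef, hSmap, Finset.prod_map, Finset.sum_map]
  congr 1
  congr 1
  apply Finset.sum_congr rfl
  intro k _
  rw [← Finset.map_erase, Finset.prod_map]
  rfl
end
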